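/- arXiv:1802.03569 — 7 statements merged into one kernel-verified Lean document; each statement's English description precedes it below -/
import Mathlib

section
/- Let (a_n)_{n≥0} be a sequence of nonnegative real numbers with ∑_{n=0}^∞ a_n < ∞, and define f : [-1,1] → ℝ by f(ξ) = ∑_{n=0}^∞ a_n ξ^n. Then for every real inner product space H, every finite family of unit vectors x_1, …, x_N in H, and every family of real coefficients c_1, …, c_N, one has ∑_{i=1}^N ∑_{j=1}^N c_i c_j f(⟪x_i, x_j⟫) ≥ 0. (Note that |⟪x_i, x_j⟫| ≤ 1 by the Cauchy–Schwarz inequality, so f(⟪x_i, x_j⟫) is well defined.) -/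
open scoped RealInnerProductSpace

lemma key_gram {N : ℕ} {ι : Type*} [Fintype ι] (v : Fin N → ι → ℝ) (c : Fin N → ℝ) (n : ℕ) :
    0 ≤ ∑ i, ∑ j, c i * c j * (∑ k, v i k * v j k) ^ n := by
  have h : ∑ i, ∑ j, c i * c j * (∑ k, v i k * v j k) ^ n
      = ∑ f : Fin n → ι, (∑ i, c i * ∏ m, v i (f m)) ^ 2 := by
    calc ∑ i, ∑ j, c i * c j * (∑ k, v i k * v j k) ^ n
        = ∑ i, ∑ j, ∑ f : Fin n → ι,
            (c i * ∏ m, v i (f m)) * (c j * ∏ m, v j (f m)) := by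
          refine Finset.sum_congr rfl fun i _ => Finset.sum_congr rfl fun j _ => ?_
          rw [Fintype.sum_pow (fun k => v i k * v j k) n, Finset.mul_sum]
          exact Finset.sum_congr rfl fun f _ => by
            rw [Finset.prod_mul_distrib]; ring
      _ = ∑ i, ∑ f : Fin n → ι, ∑ j,
            (c i * ∏ m, v i (f m)) * (c j * ∏ m, v j (f m)) :=
          Finset.sum_congr rfl fun i _ => Finset.sum_comm
      _ = ∑ f : Fin n → ι, ∑ i, ∑ j,
            (c i * ∏ m, v i (f m)) * (c j * ∏ m, v j (f m)) := Finset.sum_comm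
      _ = ∑ f : Fin n → ι, (∑ i, c i * ∏ m, v i (f m)) ^ 2 := by
          refine Finset.sum_congr rfl fun f _ => ?_
          rw [sq, Finset.sum_mul_sum]
  rw [h]
  exact Finset.sum_nonneg fun f _ => sq_nonneg _

lemma inner_pow_pos_def {H : Type*} [NormedAddCommGroup H] [InnerProductSpace ℝ H]
    (N : ℕ) (x : Fin N → H) (c : Fin N → ℝ) (n : ℕ) :
    0 ≤ ∑ i, ∑ j, c i * c j * ⟪x i, x j⟫ ^ n := by
  let S := Submodule.span ℝ (Set.range x)
  haveI : FiniteDimensional ℝ S := FiniteDimensional.span_of_finite ℝ (Set.finite_range x)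
  let b := stdOrthonormalBasis ℝ S
  let y : Fin N → S := fun i => ⟨x i, Submodule.subset_span ⟨i, rfl⟩⟩
  have hxy : ∀ i j, ⟪x i, x j⟫ = ∑ k, ⟪y i, b k⟫ * ⟪y j, b k⟫ := by
    intro i j
    have := b.sum_inner_mul_inner (y i) (y j)
    rw [show (inner ℝ (x i) (x j) : ℝ) = inner ℝ (y i) (y j) from
      (Submodule.coe_inner S (y i) (y j)).symm, ← this]
    exact Finset.sum_congr rfl fun k _ => by rw [real_inner_comm (b k) (y j)]
  simp_rw [hxy]
  exact key_gram (fun i k => ⟪y i, b k⟫) c n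

/-- If `a : ℕ → ℝ` is nonnegative and summable, then the function
`f(ξ) = ∑' n, a n * ξ^n` composed with the inner product is a positive definite kernel
on the unit sphere of any real inner product space. -/
theorem nonneg_power_series_pos_def_on_sphere
    (a : ℕ → ℝ) (ha : ∀ n, 0 ≤ a n) (hsum : Summable a)
    {H : Type*} [NormedAddCommGroup H] [InnerProductSpace ℝ H]
    (N : ℕ) (x : Fin N → H) (hx : ∀ i, ‖x i‖ = 1) (c : Fin N → ℝ) :
    0 ≤ ∑ i, ∑ j, c i * c j * ∑' n : ℕ, a n * ⟪x i, x j⟫ ^ n := by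
  have hb : ∀ i j, |⟪x i, x j⟫| ≤ 1 := fun i j => by
    calc |⟪x i, x j⟫| ≤ ‖x i‖ * ‖x j‖ := abs_real_inner_le_norm _ _
      _ = 1 := by rw [hx i, hx j, one_mul]
  have hsm : ∀ i j, Summable fun n => a n * ⟪x i, x j⟫ ^ n := by
    intro i j
    refine Summable.of_norm_bounded hsum fun n => ?_
    rw [norm_mul, norm_pow, Real.norm_eq_abs, Real.norm_eq_abs, abs_of_nonneg (ha n)]
    calc a n * |⟪x i, x j⟫| ^ n ≤ a n * 1 :=
          mul_le_mul_of_nonneg_left (pow_le_one₀ (abs_nonneg _) (hb i j)) (ha n)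
      _ = a n := mul_one _
  have hsm2 : ∀ i j, Summable fun n => c i * c j * (a n * ⟪x i, x j⟫ ^ n) :=
    fun i j => (hsm i j).mul_left _
  have step1 : ∑ i, ∑ j, c i * c j * ∑' n : ℕ, a n * ⟪x i, x j⟫ ^ n
      = ∑' n : ℕ, ∑ i, ∑ j, c i * c j * (a n * ⟪x i, x j⟫ ^ n) := by
    calc ∑ i, ∑ j, c i * c j * ∑' n : ℕ, a n * ⟪x i, x j⟫ ^ n
        = ∑ i, ∑ j, ∑' n : ℕ, c i * c j * (a n * ⟪x i, x j⟫ ^ n) := by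
          simp_rw [← tsum_mul_left]
      _ = ∑ i, ∑' n : ℕ, ∑ j, c i * c j * (a n * ⟪x i, x j⟫ ^ n) :=
          Finset.sum_congr rfl fun i _ => (Summable.tsum_finsetSum fun j _ => hsm2 i j).symm
      _ = ∑' n : ℕ, ∑ i, ∑ j, c i * c j * (a n * ⟪x i, x j⟫ ^ n) :=
          (Summable.tsum_finsetSum fun i _ => summable_sum fun j _ => hsm2 i j).symm
  rw [step1]
  refine tsum_nonneg fun n => ?_
  have : ∑ i, ∑ j, c i * c j * (a n * ⟪x i, x j⟫ ^ n)
      = a n * ∑ i, ∑ j, c i * c j * ⟪x i, x j⟫ ^ n := by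
    simp_rw [Finset.mul_sum]
    exact Finset.sum_congr rfl fun i _ => Finset.sum_congr rfl fun j _ => by ring
  rw [this]
  exact mul_nonneg (ha n) (inner_pow_pos_def N x c n)
end

section
/- Let τ be a real number with τ ≥ π/2. Then for every real inner product space H, every finite family of unit vectors x_1, …, x_N in H, and every family of real coefficients c_1, …, c_N, one has ∑_{i=1}^N ∑_{j=1}^N c_i c_j (τ - arccos(⟪x_i, x_j⟫)) ≥ 0; that is, the kernel (x, z) ↦ τ - arccos(⟪x, z⟫) is positive definite on the unit sphere of H. -/
open scoped RealInnerProductSpace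

noncomputable section
namespace ArccosPD
open Real FormalMultilinearSeries
open scoped ENNReal NNReal

/-! ### Coefficients -/

def cC : ℕ → ℝ := fun n => Nat.centralBinom n / 4 ^ n
def aC : ℕ → ℝ := fun n => cC n / (2 * n + 1)
def bC : ℕ → ℝ := fun k => if k % 2 = 1 then aC (k / 2) else 0

lemma cC_pos (n : ℕ) : 0 < cC n := by
  have := Nat.centralBinom_pos n
  unfold cC
  positivity

lemma cC_zero : cC 0 = 1 := by simp [cC]

lemma cC_rec (n : ℕ) : (2 * n + 2) * cC (n + 1) = (2 * n + 1) * cC n := by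
  have h := Nat.succ_mul_centralBinom_succ n
  have h' : ((n : ℝ) + 1) * (Nat.centralBinom (n + 1) : ℝ)
      = 2 * (2 * n + 1) * Nat.centralBinom n := by exact_mod_cast h
  have h4 : (4:ℝ) ^ (n+1) = 4 * 4 ^ n := by ring
  unfold cC
  rw [h4]
  field_simp
  ring_nf
  ring_nf at h'
  nlinarith [h', pow_pos (show (0:ℝ) < 4 by norm_num) n]

lemma cC_one : cC 1 = 1 / 2 := by
  have h := cC_rec 0
  rw [cC_zero] at h
  norm_num at h
  linarith

lemma cC_le_one (n : ℕ) : cC n ≤ 1 := by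
  induction n with
  | zero => simp [cC_zero]
  | succ n ih =>
    have h := cC_rec n
    have hp := cC_pos n
    nlinarith

lemma cC_sq_bound (n : ℕ) : cC n ^ 2 * (2 * n + 1) ≤ 1 := by
  induction n with
  | zero => simp [cC_zero]
  | succ n ih =>
    have h := cC_rec n
    have hsq : ((2 * (n:ℝ) + 2) * cC (n + 1)) ^ 2 = ((2 * n + 1) * cC n) ^ 2 := by rw [h]
    have h2 : cC n ^ 2 * (2 * n + 1) * ((2 * n + 1) * (2 * n + 3))
        ≤ 1 * ((2 * n + 1) * (2 * n + 3)) :=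
      mul_le_mul_of_nonneg_right ih (by positivity)
    have key : ((2 * (n:ℝ) + 2)) ^ 2 * (cC (n + 1) ^ 2 * (2 * ((n:ℝ) + 1) + 1))
        ≤ ((2 * (n:ℝ) + 2)) ^ 2 * 1 := by nlinarith [hsq, h2]
    have hpos : (0:ℝ) < ((2 * (n:ℝ) + 2)) ^ 2 := by positivity
    have := le_of_mul_le_mul_left (by exact key) hpos
    push_cast
    linarith

lemma aC_nonneg (n : ℕ) : 0 ≤ aC n := by
  have := cC_pos n
  unfold aC
  positivity

lemma aC_le_one (n : ℕ) : aC n ≤ 1 := by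
  have h1 : (1:ℝ) ≤ 2 * n + 1 := by
    have : (0:ℝ) ≤ (n:ℝ) := n.cast_nonneg
    linarith
  calc aC n ≤ cC n / 1 := by
        unfold aC
        apply div_le_div_of_nonneg_left (cC_pos n).le one_pos h1
    _ = cC n := by ring
    _ ≤ 1 := cC_le_one n

lemma aC_le_aux (n : ℕ) : aC n ≤ 1 / ((n + 1) * Real.sqrt (n + 1)) := by
  have hc := cC_sq_bound n
  have hp := cC_pos n
  have h1 : (0:ℝ) < 2 * n + 1 := by positivity
  have hcb : cC n ≤ 1 / Real.sqrt (2 * n + 1) := by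
    rw [le_div_iff₀ (Real.sqrt_pos.2 h1)]
    nlinarith [Real.sq_sqrt h1.le, mul_nonneg hp.le (Real.sqrt_nonneg (2 * (n:ℝ) + 1)),
      sq_nonneg (cC n * Real.sqrt (2 * n + 1) - 1), Real.sqrt_nonneg (2 * (n:ℝ) + 1)]
  unfold aC
  rw [div_le_div_iff₀ h1 (by positivity)]
  calc cC n * ((n + 1) * Real.sqrt (n + 1))
      ≤ (1 / Real.sqrt (2 * n + 1)) * ((n + 1) * Real.sqrt (n + 1)) := by
        apply mul_le_mul_of_nonneg_right hcb (by positivity)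
    _ ≤ 1 * (2 * n + 1) := by
        rw [one_mul, div_mul_eq_mul_div, one_mul, div_le_iff₀ (Real.sqrt_pos.2 h1)]
        have h2 : Real.sqrt (n + 1) ≤ Real.sqrt (2 * n + 1) := by
          apply Real.sqrt_le_sqrt; push_cast; linarith
        apply mul_le_mul (by push_cast; linarith) h2 (Real.sqrt_nonneg _) (by positivity)

lemma summable_aC : Summable aC := by
  have hs : Summable (fun n : ℕ => 1 / ((n:ℝ)) ^ (3/2 : ℝ)) :=
    Real.summable_one_div_nat_rpow.2 (by norm_num)
  have hs1 : Summable (fun n : ℕ => 1 / ((n:ℝ) + 1) ^ (3/2 : ℝ)) := by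
    have := (summable_nat_add_iff (f := fun n : ℕ => 1 / ((n:ℝ)) ^ (3/2 : ℝ)) 1).2 hs
    simpa using this
  have heq : ∀ n : ℕ, 1 / (((n:ℝ) + 1) * Real.sqrt (n + 1)) = 1 / ((n:ℝ) + 1) ^ (3/2 : ℝ) := by
    intro n
    rw [show (3/2 : ℝ) = 1 + 1/2 by norm_num, Real.rpow_add (by positivity), Real.rpow_one,
      Real.sqrt_eq_rpow]
  apply Summable.of_nonneg_of_le aC_nonneg (fun n => (aC_le_aux n).trans (le_of_eq (heq n)))
  exact hs1

/-! ### Power series infrastructure -/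

variable {co : ℕ → ℝ}

lemma radius_ge (hco : ∀ n, |co n| ≤ 1) : 1 ≤ (ofScalars ℝ co).radius := by
  apply FormalMultilinearSeries.le_radius_of_bound _ 1
  intro n
  rw [ofScalars_norm]
  simpa using hco n

lemma mem_ball_of_lt_one {t : ℝ} (ht : |t| < 1) (hr : 1 ≤ (ofScalars ℝ co).radius) :
    t ∈ Metric.eball (0 : ℝ) (ofScalars ℝ co).radius := by
  rw [Metric.mem_eball, edist_dist]
  refine lt_of_lt_of_le ?_ hr
  rw [show (1 : ℝ≥0∞) = ENNReal.ofReal 1 by simp]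
  rw [ENNReal.ofReal_lt_ofReal_iff one_pos]
  simpa [Real.dist_eq] using ht

lemma hasSum_ofScalars (hco : ∀ n, |co n| ≤ 1) {t : ℝ} (ht : |t| < 1) :
    HasSum (fun n => co n * t ^ n) ((ofScalars ℝ co).sum t) := by
  have h := (ofScalars ℝ co).hasFPowerSeriesOnBall
    (lt_of_lt_of_le zero_lt_one (radius_ge hco))
  have h2 := h.hasSum (mem_ball_of_lt_one ht (radius_ge hco))
  rw [zero_add] at h2
  have h3 : (fun n => (ofScalars ℝ co) n fun _ => t) = fun n => co n * t ^ n := by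
    funext n; rw [ofScalars_apply_eq]; simp
  rwa [h3] at h2

lemma hasDerivAt_ofScalars (hco : ∀ n, |co n| ≤ 1) {t : ℝ} (ht : |t| < 1) :
    HasDerivAt (ofScalars ℝ co).sum (deriv (ofScalars ℝ co).sum t) t := by
  have h := (ofScalars ℝ co).hasFPowerSeriesOnBall
    (lt_of_lt_of_le zero_lt_one (radius_ge hco))
  exact ((h.analyticAt_of_mem (mem_ball_of_lt_one ht (radius_ge hco))).differentiableAt).hasDerivAt

lemma deriv_ofScalars_zero (hco : ∀ n, |co n| ≤ 1) : deriv (ofScalars ℝ co).sum 0 = co 1 := by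
  have h := (ofScalars ℝ co).hasFPowerSeriesOnBall (lt_of_lt_of_le zero_lt_one (radius_ge hco))
  rw [h.hasFPowerSeriesAt.deriv, ofScalars_apply_eq]
  simp

lemma hasSum_deriv_ofScalars (hco : ∀ n, |co n| ≤ 1) {t : ℝ} (ht : |t| < 1) (ht0 : t ≠ 0) :
    HasSum (fun n : ℕ => ((n : ℝ) + 1) * co (n + 1) * t ^ n) (deriv (ofScalars ℝ co).sum t) := by
  have h := (ofScalars ℝ co).hasFPowerSeriesOnBall
    (lt_of_lt_of_le zero_lt_one (radius_ge hco))
  have hd := h.fderiv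
  have hs := hd.hasSum (mem_ball_of_lt_one ht (radius_ge hco))
  have hs2 := hs.mapL (ContinuousLinearMap.apply ℝ ℝ t)
  have hterm : ∀ n, (ContinuousLinearMap.apply ℝ ℝ t) ((ofScalars ℝ co).derivSeries n fun _ => t)
      = ((n : ℝ) + 1) * co (n + 1) * t ^ (n + 1) := by
    intro n
    rw [ContinuousLinearMap.apply_apply, derivSeries_apply_diag, ofScalars_apply_eq]
    simp [smul_smul]
    ring
  have hval : (ContinuousLinearMap.apply ℝ ℝ t) (fderiv ℝ (ofScalars ℝ co).sum (0 + t))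
      = t * deriv (ofScalars ℝ co).sum t := by
    rw [zero_add, ContinuousLinearMap.apply_apply]
    conv_lhs => rw [show t = t • (1:ℝ) by simp]
    rw [map_smul, fderiv_apply_one_eq_deriv]
    simp
  rw [funext hterm, hval] at hs2
  have hs3 := hs2.mul_left t⁻¹
  rw [inv_mul_cancel_left₀ ht0] at hs3
  have heq : (fun i : ℕ => t⁻¹ * (((i:ℝ) + 1) * co (i + 1) * t ^ (i + 1)))
      = fun n : ℕ => ((n:ℝ) + 1) * co (n + 1) * t ^ n := by
    funext i; rw [pow_succ]; field_simp
  rwa [heq] at hs3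

/-! ### The function `S` summing `∑ cC n * v^n`, equal to `(1-v)^(-1/2)` -/

def S : ℝ → ℝ := (ofScalars ℝ cC).sum

lemma cC_abs_le (n : ℕ) : |cC n| ≤ 1 := by
  rw [abs_of_pos (cC_pos n)]; exact cC_le_one n

lemma S_hasSum {v : ℝ} (hv : |v| < 1) : HasSum (fun n => cC n * v ^ n) (S v) :=
  hasSum_ofScalars cC_abs_le hv

lemma S_zero : S 0 = 1 := by
  have h1 := S_hasSum (by norm_num : |(0:ℝ)| < 1)
  have h2 : HasSum (fun n : ℕ => cC n * (0:ℝ) ^ n) ((fun n : ℕ => cC n * (0:ℝ) ^ n) 0) :=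
    hasSum_single 0 (fun b hb => by simp [zero_pow hb])
  have h3 := h1.unique h2
  rw [h3]
  simp [cC_zero]

lemma S_ode {v : ℝ} (hv : |v| < 1) : 2 * (1 - v) * deriv S v = S v := by
  rcases eq_or_ne v 0 with rfl | hv0
  · rw [show deriv S 0 = cC 1 from deriv_ofScalars_zero cC_abs_le, cC_one, S_zero]
    norm_num
  · have hD := hasSum_deriv_ofScalars cC_abs_le hv hv0
    set D := deriv (ofScalars ℝ cC).sum v with hDdef
    have h2 : HasSum (fun n : ℕ => ((n:ℝ) + 1) * cC (n + 1) * v ^ (n + 1)) (v * D) := by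
      have h := hD.mul_left v
      have heq : (fun n : ℕ => v * (((n:ℝ) + 1) * cC (n + 1) * v ^ n))
          = fun n : ℕ => ((n:ℝ) + 1) * cC (n + 1) * v ^ (n + 1) := by
        funext n; rw [pow_succ]; ring
      rwa [heq] at h
    have h2' : HasSum (fun n : ℕ => ((fun m : ℕ => (m:ℝ) * cC m * v ^ m) (n + 1))) (v * D) := by
      have heq : (fun n : ℕ => ((n:ℝ) + 1) * cC (n + 1) * v ^ (n + 1))
          = fun n : ℕ => ((fun m : ℕ => (m:ℝ) * cC m * v ^ m) (n + 1)) := by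
        funext n; push_cast; ring
      rwa [heq] at h2
    have h3 : HasSum (fun m : ℕ => (m:ℝ) * cC m * v ^ m) (v * D) := by
      have := (hasSum_nat_add_iff (f := fun m : ℕ => (m:ℝ) * cC m * v ^ m) 1).1 h2'
      simpa using this
    have h4 : HasSum (fun n : ℕ => ((n:ℝ) + 1/2) * cC n * v ^ n) D := by
      have heq : (fun n : ℕ => ((n:ℝ) + 1) * cC (n + 1) * v ^ n)
          = fun n : ℕ => ((n:ℝ) + 1/2) * cC n * v ^ n := by
        funext n
        have hr := cC_rec n
        have hx : ((n:ℝ) + 1) * cC (n + 1) = ((n:ℝ) + 1/2) * cC n := by linarith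
        rw [hx]
      rwa [heq] at hD
    have h5 := h4.sub h3
    have h6 := (S_hasSum hv).mul_left (2⁻¹ : ℝ)
    have h7 : HasSum (fun n : ℕ => 2⁻¹ * (cC n * v ^ n)) (D - v * D) := by
      have heq : (fun n : ℕ => ((n:ℝ) + 1/2) * cC n * v ^ n - (n:ℝ) * cC n * v ^ n)
          = fun n : ℕ => 2⁻¹ * (cC n * v ^ n) := by
        funext n; ring
      rwa [heq] at h5
    have h8 := h7.unique h6
    show 2 * (1 - v) * D = S v
    linarith

def phiF : ℝ → ℝ := fun v => S v ^ 2 * (1 - v)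

lemma phiF_hasDeriv {v : ℝ} (hv : |v| < 1) : HasDerivAt phiF 0 v := by
  have hS : HasDerivAt S (deriv S v) v := hasDerivAt_ofScalars cC_abs_le hv
  have h1 := hS.pow 2
  have h2 : HasDerivAt (fun v : ℝ => 1 - v) (-1) v := (hasDerivAt_id v).const_sub 1
  have h3 : HasDerivAt phiF
      (((2:ℕ):ℝ) * S v ^ (2 - 1) * deriv S v * (1 - v) + S v ^ 2 * -1) v := h1.mul h2
  convert h3 using 1
  have hode := S_ode hv
  push_cast
  linear_combination (-(S v)) * hode

lemma phiF_eq_one {v : ℝ} (h0 : 0 ≤ v) (h1 : v < 1) : phiF v = 1 := by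
  have habs : ∀ x ∈ Set.Icc (0:ℝ) v, |x| < 1 := by
    intro x hx
    rw [abs_lt]
    constructor <;> [linarith [hx.1]; linarith [hx.2]]
  have key := constant_of_has_deriv_right_zero (f := phiF) (a := 0) (b := v)
    (fun x hx => (phiF_hasDeriv (habs x hx)).continuousAt.continuousWithinAt)
    (fun x hx => (phiF_hasDeriv (habs x ⟨hx.1, hx.2.le⟩)).hasDerivWithinAt)
  have h2 := key v ⟨h0, le_refl v⟩
  rw [h2]
  unfold phiF
  rw [S_zero]
  norm_num

lemma S_nonneg {v : ℝ} (h0 : 0 ≤ v) (h1 : v < 1) : 0 ≤ S v := by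
  have habs : |v| < 1 := by rwa [abs_of_nonneg h0]
  refine hasSum_le (fun n => ?_) hasSum_zero (S_hasSum habs)
  have := (cC_pos n).le
  positivity

lemma S_eq {v : ℝ} (h0 : 0 ≤ v) (h1 : v < 1) : S v = 1 / Real.sqrt (1 - v) := by
  have hφ : S v ^ 2 * (1 - v) = 1 := phiF_eq_one h0 h1
  have h1v : (0:ℝ) < 1 - v := by linarith
  have hnn := S_nonneg h0 h1
  have h2 : Real.sqrt (S v ^ 2 * (1 - v)) = 1 := by rw [hφ]; exact Real.sqrt_one
  rw [Real.sqrt_mul (sq_nonneg _), Real.sqrt_sq hnn] at h2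
  rw [eq_div_iff (Real.sqrt_ne_zero'.2 h1v)]
  exact h2

/-! ### The function `G` summing `∑ aC m * t^(2m+1)`, equal to `arcsin` -/

def G : ℝ → ℝ := (ofScalars ℝ bC).sum

lemma bC_abs_le (k : ℕ) : |bC k| ≤ 1 := by
  unfold bC
  split
  · rw [abs_of_nonneg (aC_nonneg _)]; exact aC_le_one _
  · simp

lemma bC_odd (m : ℕ) : bC (2 * m + 1) = aC m := by
  have h1 : (2 * m + 1) % 2 = 1 := by omega
  have h2 : (2 * m + 1) / 2 = m := by omega
  simp [bC, h1, h2]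

lemma bC_even (k : ℕ) (h : k % 2 = 0) : bC k = 0 := by simp [bC, h]

lemma G_hasSum {t : ℝ} (ht : |t| < 1) : HasSum (fun m : ℕ => aC m * t ^ (2 * m + 1)) (G t) := by
  have h := hasSum_ofScalars bC_abs_le ht
  have hinj : Function.Injective (fun m : ℕ => 2 * m + 1) := by
    intro a b hab
    have h : 2 * a + 1 = 2 * b + 1 := hab
    omega
  have h0 : ∀ k ∉ Set.range (fun m : ℕ => 2 * m + 1), bC k * t ^ k = 0 := by
    intro k hk
    have hk2 : k % 2 = 0 := by
      by_contra hodd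
      have h1 : k % 2 = 1 := by omega
      exact hk ⟨k / 2, show 2 * (k / 2) + 1 = k by omega⟩
    rw [bC_even k hk2, zero_mul]
  have h1 := (Function.Injective.hasSum_iff hinj h0).2 h
  have heq : ((fun k => bC k * t ^ k) ∘ (fun m : ℕ => 2 * m + 1))
      = fun m : ℕ => aC m * t ^ (2 * m + 1) := by
    funext m; simp only [Function.comp_apply, bC_odd]
  rwa [heq] at h1

lemma G_zero : G 0 = 0 := by
  have h1 := G_hasSum (by norm_num : |(0:ℝ)| < 1)
  have h2 : HasSum (fun m : ℕ => aC m * (0:ℝ) ^ (2 * m + 1)) 0 := by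
    have : (fun m : ℕ => aC m * (0:ℝ) ^ (2 * m + 1)) = fun _ => 0 := by
      funext m; simp
    rw [this]; exact hasSum_zero
  exact h1.unique h2

lemma G_hasDerivAt {t : ℝ} (ht : |t| < 1) : HasDerivAt G (1 / Real.sqrt (1 - t ^ 2)) t := by
  have hG := hasDerivAt_ofScalars bC_abs_le ht
  suffices h : deriv (ofScalars ℝ bC).sum t = 1 / Real.sqrt (1 - t ^ 2) by
    rw [h] at hG; exact hG
  have ht2 : t ^ 2 < 1 := by
    have := abs_nonneg t
    nlinarith [sq_abs t]
  rcases eq_or_ne t 0 with rfl | ht0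
  · rw [deriv_ofScalars_zero bC_abs_le]
    have hb1 : bC 1 = aC 0 := by simpa using bC_odd 0
    rw [hb1]
    unfold aC
    rw [cC_zero]
    norm_num
  · have hD := hasSum_deriv_ofScalars bC_abs_le ht ht0
    have hinj : Function.Injective (fun m : ℕ => 2 * m) := by
      intro a b hab
      have h : 2 * a = 2 * b := hab
      omega
    have h0 : ∀ k ∉ Set.range (fun m : ℕ => 2 * m), ((k:ℝ) + 1) * bC (k + 1) * t ^ k = 0 := by
      intro k hk
      have hk1 : k % 2 = 1 := by
        by_contra heven
        have h1 : k % 2 = 0 := by omega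
        exact hk ⟨k / 2, show 2 * (k / 2) = k by omega⟩
      rw [bC_even (k + 1) (by omega)]
      ring
    have h1 := (Function.Injective.hasSum_iff hinj h0).2 hD
    have heq : ((fun k : ℕ => ((k:ℝ) + 1) * bC (k + 1) * t ^ k) ∘ (fun m : ℕ => 2 * m))
        = fun m : ℕ => cC m * (t ^ 2) ^ m := by
      funext m
      simp only [Function.comp_apply]
      rw [bC_odd]
      rw [← pow_mul]
      unfold aC
      have h2m : (2 * (m:ℝ) + 1) ≠ 0 := by positivity
      push_cast
      field_simp
    rw [heq] at h1
    have habs2 : |t ^ 2| < 1 := by rwa [abs_of_nonneg (sq_nonneg t)]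
    have h2 := S_hasSum habs2
    have h3 := h1.unique h2
    rw [h3, S_eq (sq_nonneg t) ht2]

lemma G_eq_arcsin {t : ℝ} (ht : |t| < 1) : G t = Real.arcsin t := by
  have hdiff : ∀ x : ℝ, |x| < 1 → HasDerivAt (fun y => G y - Real.arcsin y) 0 x := by
    intro x hx
    have hx' := abs_lt.1 hx
    have h1 := G_hasDerivAt hx
    have h2 := Real.hasDerivAt_arcsin (by linarith : x ≠ -1) (by linarith : x ≠ 1)
    have h3 := h1.sub h2
    rw [sub_self] at h3
    exact h3
  have ht' := abs_lt.1 ht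
  rcases le_or_gt 0 t with h0 | h0
  · have habs : ∀ x ∈ Set.Icc (0:ℝ) t, |x| < 1 := by
      intro x hx; rw [abs_lt]; constructor <;> [linarith [hx.1]; linarith [hx.2]]
    have key := constant_of_has_deriv_right_zero (f := fun y => G y - Real.arcsin y)
      (a := 0) (b := t)
      (fun x hx => (hdiff x (habs x hx)).continuousAt.continuousWithinAt)
      (fun x hx => (hdiff x (habs x ⟨hx.1, hx.2.le⟩)).hasDerivWithinAt)
    have h3 : G t - Real.arcsin t = G 0 - Real.arcsin 0 := key t ⟨h0, le_refl t⟩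
    rw [G_zero, Real.arcsin_zero] at h3
    linarith
  · have habs : ∀ x ∈ Set.Icc t (0:ℝ), |x| < 1 := by
      intro x hx; rw [abs_lt]; constructor <;> [linarith [hx.1]; linarith [hx.2]]
    have key := constant_of_has_deriv_right_zero (f := fun y => G y - Real.arcsin y)
      (a := t) (b := 0)
      (fun x hx => (hdiff x (habs x hx)).continuousAt.continuousWithinAt)
      (fun x hx => (hdiff x (habs x ⟨hx.1, hx.2.le⟩)).hasDerivWithinAt)
    have h3 : G 0 - Real.arcsin 0 = G t - Real.arcsin t := key 0 ⟨h0.le, le_refl (0:ℝ)⟩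
    rw [G_zero, Real.arcsin_zero] at h3
    linarith

/-! ### Endpoints -/

lemma hasSum_aC : HasSum aC (π / 2) := by
  have hA := summable_aC.hasSum
  set A := ∑' n, aC n with hAdef
  suffices hAeq : A = π / 2 by rwa [hAeq] at hA
  have hmem : Set.Ioo (0:ℝ) 1 ∈ nhdsWithin (1:ℝ) (Set.Iio 1) :=
    Ioo_mem_nhdsLT_of_mem ⟨zero_lt_one, le_refl (1:ℝ)⟩
  have hle : A ≤ π / 2 := by
    apply Real.tsum_le_of_sum_range_le aC_nonneg
    intro M
    have hc : Continuous (fun t : ℝ => ∑ i ∈ Finset.range M, aC i * t ^ (2 * i + 1)) := by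
      continuity
    have htends : Filter.Tendsto (fun t : ℝ => ∑ i ∈ Finset.range M, aC i * t ^ (2 * i + 1))
        (nhdsWithin (1:ℝ) (Set.Iio 1)) (nhds (∑ i ∈ Finset.range M, aC i)) := by
      have h1 : Filter.Tendsto (fun t : ℝ => ∑ i ∈ Finset.range M, aC i * t ^ (2 * i + 1))
          (nhds (1:ℝ)) (nhds (∑ i ∈ Finset.range M, aC i * (1:ℝ) ^ (2 * i + 1))) :=
        (hc.continuousAt (x := (1:ℝ))).tendsto
      have h2 := h1.mono_left (nhdsWithin_le_nhds (s := Set.Iio (1:ℝ)))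
      simpa using h2
    refine le_of_tendsto htends ?_
    filter_upwards [hmem] with t htm
    obtain ⟨ht0, ht1⟩ := htm
    have habs : |t| < 1 := abs_lt.2 ⟨by linarith, ht1⟩
    calc ∑ i ∈ Finset.range M, aC i * t ^ (2 * i + 1)
        ≤ G t := sum_le_hasSum (Finset.range M)
          (fun i _ => by have := aC_nonneg i; positivity) (G_hasSum habs)
      _ = Real.arcsin t := G_eq_arcsin habs
      _ ≤ π / 2 := Real.arcsin_le_pi_div_two t
  have hge : π / 2 ≤ A := by
    have htends : Filter.Tendsto Real.arcsin (nhdsWithin (1:ℝ) (Set.Iio 1)) (nhds (π / 2)) := by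
      have h1 : Filter.Tendsto Real.arcsin (nhds (1:ℝ)) (nhds (Real.arcsin 1)) :=
        (Real.continuous_arcsin.continuousAt (x := (1:ℝ))).tendsto
      have h2 := h1.mono_left (nhdsWithin_le_nhds (s := Set.Iio (1:ℝ)))
      rwa [Real.arcsin_one] at h2
    refine le_of_tendsto htends ?_
    filter_upwards [hmem] with t htm
    obtain ⟨ht0, ht1⟩ := htm
    have habs : |t| < 1 := abs_lt.2 ⟨by linarith, ht1⟩
    rw [← G_eq_arcsin habs]
    refine hasSum_le (fun m => ?_) (G_hasSum habs) hA
    have hp : t ^ (2 * m + 1) ≤ 1 := pow_le_one₀ ht0.le ht1.le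
    have := aC_nonneg m
    nlinarith
  linarith

lemma hasSum_arcsin {t : ℝ} (ht : |t| ≤ 1) :
    HasSum (fun m : ℕ => aC m * t ^ (2 * m + 1)) (Real.arcsin t) := by
  rcases lt_or_eq_of_le ht with hlt | heq
  · rw [← G_eq_arcsin hlt]
    exact G_hasSum hlt
  · rcases (abs_eq (by norm_num : (0:ℝ) ≤ 1)).1 heq with h1 | h1
    · rw [h1, Real.arcsin_one]
      have heq2 : (fun m : ℕ => aC m * (1:ℝ) ^ (2 * m + 1)) = aC := by
        funext m; simp
      rw [heq2]
      exact hasSum_aC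
    · rw [h1, Real.arcsin_neg_one]
      have heq2 : (fun m : ℕ => aC m * (-1:ℝ) ^ (2 * m + 1)) = fun m => -aC m := by
        funext m
        rw [Odd.neg_one_pow ⟨m, by ring⟩]
        ring
      rw [heq2]
      exact hasSum_aC.neg

/-! ### Positive definiteness algebra -/

lemma gram_quad_nonneg {E : Type*} [NormedAddCommGroup E] [InnerProductSpace ℝ E]
    {N : ℕ} (w : Fin N → E) (c : Fin N → ℝ) :
    0 ≤ ∑ i, ∑ j, c i * c j * ⟪w i, w j⟫ := by
  have h : ∑ i, ∑ j, c i * c j * ⟪w i, w j⟫ = ⟪∑ i, c i • w i, ∑ j, c j • w j⟫ := by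
    rw [sum_inner]
    refine Finset.sum_congr rfl fun i _ => ?_
    rw [inner_sum]
    refine Finset.sum_congr rfl fun j _ => ?_
    rw [real_inner_smul_left, real_inner_smul_right]
    ring
  rw [h]
  exact real_inner_self_nonneg

lemma feature_quad_nonneg {N : ℕ} {K : Type*} [Fintype K] (f : Fin N → K → ℝ) (m : ℕ)
    (c : Fin N → ℝ) :
    0 ≤ ∑ i, ∑ j, c i * c j * (∑ k, f i k * f j k) ^ m := by
  classical
  set w : Fin N → EuclideanSpace ℝ (Fin m → K) := fun i => WithLp.toLp 2 (fun p : Fin m → K => ∏ l, f i (p l)) with hw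
  have key : ∀ i j, (∑ k, f i k * f j k) ^ m = ⟪w i, w j⟫ := by
    intro i j
    have hinner : ⟪w i, w j⟫ = ∑ p : Fin m → K, (∏ l, f i (p l)) * ∏ l, f j (p l) := by
      rw [PiLp.inner_apply]
      exact Finset.sum_congr rfl fun p _ => by simp [hw, mul_comm]
    rw [hinner]
    calc (∑ k, f i k * f j k) ^ m
        = ∏ _l : Fin m, (∑ k, f i k * f j k) := by
          rw [Finset.prod_const, Finset.card_univ, Fintype.card_fin]
      _ = ∑ p ∈ Fintype.piFinset (fun _ : Fin m => (Finset.univ : Finset K)),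
            ∏ l, (f i (p l) * f j (p l)) := Finset.prod_univ_sum _ _
      _ = ∑ p : Fin m → K, (∏ l, f i (p l)) * ∏ l, f j (p l) := by
          rw [Fintype.piFinset_univ]
          exact Finset.sum_congr rfl fun p _ => by rw [Finset.prod_mul_distrib]
  simp_rw [key]
  exact gram_quad_nonneg w c

lemma inner_pow_quad_nonneg {H : Type*} [NormedAddCommGroup H] [InnerProductSpace ℝ H]
    {N : ℕ} (x : Fin N → H) (m : ℕ) (c : Fin N → ℝ) :
    0 ≤ ∑ i, ∑ j, c i * c j * (⟪x i, x j⟫) ^ m := by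
  set K := Submodule.span ℝ (Set.range x) with hK
  haveI : FiniteDimensional ℝ K := FiniteDimensional.span_of_finite ℝ (Set.finite_range x)
  set b := stdOrthonormalBasis ℝ K with hb
  set y : Fin N → K := fun i => ⟨x i, Submodule.subset_span (Set.mem_range_self i)⟩ with hy
  set f := fun (i : Fin N) k => (inner ℝ (y i) (b k) : ℝ) with hf
  have key : ∀ i j, (⟪x i, x j⟫ : ℝ) = ∑ k, f i k * f j k := by
    intro i j
    have h1 : (⟪x i, x j⟫ : ℝ) = ⟪y i, y j⟫ := rfl
    rw [h1, ← b.sum_inner_mul_inner (y i) (y j)]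
    refine Finset.sum_congr rfl fun k _ => ?_
    simp only [hf]
    rw [real_inner_comm (y j) (b k)]
  simp_rw [key]
  exact feature_quad_nonneg f m c

end ArccosPD

/-- For `τ ≥ π/2`, the kernel `(x, z) ↦ τ - arccos ⟪x, z⟫` is positive definite on
the unit sphere of any real inner product space. -/
theorem tau_sub_arccos_pos_def_on_sphere
    (τ : ℝ) (hτ : Real.pi / 2 ≤ τ)
    {H : Type*} [NormedAddCommGroup H] [InnerProductSpace ℝ H]
    (N : ℕ) (x : Fin N → H) (hx : ∀ i, ‖x i‖ = 1) (c : Fin N → ℝ) :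
    0 ≤ ∑ i, ∑ j, c i * c j * (τ - Real.arccos ⟪x i, x j⟫) := by
  classical
  have habs : ∀ i j, |(⟪x i, x j⟫ : ℝ)| ≤ 1 := by
    intro i j
    have h := abs_real_inner_le_norm (x i) (x j)
    rw [hx i, hx j] at h
    simpa using h
  have hsplit : ∀ i j : Fin N, c i * c j * (τ - Real.arccos ⟪x i, x j⟫)
      = (τ - Real.pi / 2) * (c i * c j) + c i * c j * Real.arcsin ⟪x i, x j⟫ := by
    intro i j
    rw [Real.arccos_eq_pi_div_two_sub_arcsin]
    ring
  have e1 : ∑ i, ∑ j, ((τ - Real.pi / 2) * (c i * c j))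
      = (τ - Real.pi / 2) * (∑ i, c i) ^ 2 := by
    rw [sq, Finset.sum_mul_sum, Finset.mul_sum]
    exact Finset.sum_congr rfl fun i _ => by rw [Finset.mul_sum]
  have hsum : ∑ i, ∑ j, c i * c j * (τ - Real.arccos ⟪x i, x j⟫)
      = (τ - Real.pi / 2) * (∑ i, c i) ^ 2
        + ∑ i, ∑ j, c i * c j * Real.arcsin ⟪x i, x j⟫ := by
    calc ∑ i, ∑ j, c i * c j * (τ - Real.arccos ⟪x i, x j⟫)
        = ∑ i, ∑ j, ((τ - Real.pi / 2) * (c i * c j)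
            + c i * c j * Real.arcsin ⟪x i, x j⟫) :=
          Finset.sum_congr rfl fun i _ => Finset.sum_congr rfl fun j _ => hsplit i j
      _ = ∑ i, (∑ j, (τ - Real.pi / 2) * (c i * c j)
            + ∑ j, c i * c j * Real.arcsin ⟪x i, x j⟫) :=
          Finset.sum_congr rfl fun i _ => Finset.sum_add_distrib
      _ = (∑ i, ∑ j, (τ - Real.pi / 2) * (c i * c j))
            + ∑ i, ∑ j, c i * c j * Real.arcsin ⟪x i, x j⟫ := Finset.sum_add_distrib
      _ = (τ - Real.pi / 2) * (∑ i, c i) ^ 2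
            + ∑ i, ∑ j, c i * c j * Real.arcsin ⟪x i, x j⟫ := by rw [e1]
  rw [hsum]
  apply add_nonneg
  · exact mul_nonneg (by linarith) (sq_nonneg _)
  · have hterm : ∀ i j : Fin N,
        HasSum (fun m : ℕ => c i * c j * (ArccosPD.aC m * (⟪x i, x j⟫ : ℝ) ^ (2 * m + 1)))
          (c i * c j * Real.arcsin ⟪x i, x j⟫) :=
      fun i j => (ArccosPD.hasSum_arcsin (habs i j)).mul_left _
    have htotal : HasSum
        (fun m : ℕ => ∑ i, ∑ j, c i * c j * (ArccosPD.aC m * (⟪x i, x j⟫ : ℝ) ^ (2 * m + 1)))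
        (∑ i, ∑ j, c i * c j * Real.arcsin ⟪x i, x j⟫) :=
      hasSum_sum fun i _ => hasSum_sum fun j _ => hterm i j
    refine hasSum_le (fun m => ?_) hasSum_zero htotal
    have h1 := ArccosPD.inner_pow_quad_nonneg x (2 * m + 1) c
    have h2 : ∑ i, ∑ j, c i * c j * (ArccosPD.aC m * (⟪x i, x j⟫ : ℝ) ^ (2 * m + 1))
        = ArccosPD.aC m * ∑ i, ∑ j, c i * c j * (⟪x i, x j⟫ : ℝ) ^ (2 * m + 1) := by
      rw [Finset.mul_sum]
      refine Finset.sum_congr rfl fun i _ => ?_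
      rw [Finset.mul_sum]
      exact Finset.sum_congr rfl fun j _ => by ring
    rw [h2]
    exact mul_nonneg (ArccosPD.aC_nonneg m) h1

end
end

section
/- For every real inner product space H, every finite family of unit vectors x_1, …, x_N in H, and every family of real coefficients c_1, …, c_N with ∑_{i=1}^N c_i = 0, one has ∑_{i=1}^N ∑_{j=1}^N c_i c_j · arccos(⟪x_i, x_j⟫) ≤ 0; that is, the geodesic distance (x, z) ↦ arccos(⟪x, z⟫) is a negative definite kernel on the unit sphere of H. -/
open Real Finset Set

open scoped RealInnerProductSpace

namespace ArccosND

/-- Coefficients of the binomial series `(1-u)^{-1/2}`. -/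
noncomputable def a (n : ℕ) : ℝ := (Nat.centralBinom n : ℝ) / 4 ^ n

lemma a_pos (n : ℕ) : 0 < a n := by
  have h : (0:ℝ) < (Nat.centralBinom n : ℝ) := by exact_mod_cast Nat.centralBinom_pos n
  have h4 : (0:ℝ) < 4 ^ n := by positivity
  exact div_pos h h4

lemma a_zero : a 0 = 1 := by simp [a, Nat.centralBinom]

lemma a_rec (n : ℕ) : 2 * (n + 1) * a (n + 1) = (2 * n + 1) * a n := by
  have h := Nat.succ_mul_centralBinom_succ n
  have h' : ((n + 1 : ℕ) : ℝ) * (Nat.centralBinom (n + 1) : ℝ)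
      = 2 * (2 * n + 1) * (Nat.centralBinom n : ℝ) := by
    exact_mod_cast congrArg (fun k : ℕ => (k : ℝ)) h
  have h4 : (4 : ℝ) ^ (n + 1) = 4 * 4 ^ n := by ring
  push_cast at h'
  have hpos : (0:ℝ) < 4 ^ n := by positivity
  simp only [a, h4]
  rw [mul_div_assoc', mul_div_assoc', div_eq_div_iff (by positivity) hpos.ne']
  linear_combination (2 * (4:ℝ) ^ n) * h'

lemma a_le_one (n : ℕ) : a n ≤ 1 := by
  induction n with
  | zero => simp [a_zero]
  | succ n ih =>
    have hrec := a_rec n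
    have hp := a_pos (n + 1)
    nlinarith

/-- generating function of `a`, equal to `(1-u)^{-1/2}`. -/
noncomputable def f (u : ℝ) : ℝ := ∑' n, a n * u ^ n

lemma abs_a_mul_le {u : ℝ} (n : ℕ) : |a n * u ^ n| ≤ |u| ^ n := by
  rw [abs_mul, abs_of_pos (a_pos n), abs_pow]
  exact mul_le_of_le_one_left (by positivity) (a_le_one n)

lemma summable_f {u : ℝ} (hu : |u| < 1) : Summable fun n => a n * u ^ n :=
  Summable.of_abs <| Summable.of_nonneg_of_le (fun n => abs_nonneg _)
    (fun n => abs_a_mul_le n) (summable_geometric_of_lt_one (abs_nonneg u) hu)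

lemma summable_deriv_f {u : ℝ} (hu : |u| < 1) :
    Summable fun n => a n * ((n : ℝ) * u ^ (n - 1)) := by
  have h : Summable fun n : ℕ => (n : ℝ) ^ 1 * |u| ^ n :=
    summable_pow_mul_geometric_of_norm_lt_one 1 (by rwa [Real.norm_eq_abs, abs_abs])
  rcases eq_or_ne u 0 with rfl | hu0
  · apply summable_of_ne_finset_zero (s := {0, 1})
    intro n hn
    simp only [Finset.mem_insert, Finset.mem_singleton, not_or] at hn
    have h1 : n - 1 ≠ 0 := by omega
    simp [zero_pow h1]
  · apply Summable.of_abs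
    apply Summable.of_nonneg_of_le (fun n => abs_nonneg _) ?_ (h.mul_left (1 / |u|))
    intro n
    rcases Nat.eq_zero_or_pos n with rfl | hn
    · simp
    have hpow : |u| ^ (n - 1) = |u| ^ n / |u| := by
      rw [eq_div_iff (by simpa using hu0), ← pow_succ]
      congr 1; omega
    rw [abs_mul, abs_of_pos (a_pos n), abs_mul, abs_pow, Nat.abs_cast, hpow]
    calc a n * ((n:ℝ) * (|u| ^ n / |u|)) ≤ 1 * ((n:ℝ) * (|u| ^ n / |u|)) := by
          apply mul_le_mul_of_nonneg_right (a_le_one n)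
          positivity
      _ = 1 / |u| * ((n:ℝ)^1 * |u| ^ n) := by ring

lemma hasDerivAt_f {u : ℝ} (hu : |u| < 1) :
    HasDerivAt f (∑' n, a n * ((n : ℝ) * u ^ (n - 1))) u := by
  set r : ℝ := (1 + |u|) / 2 with hr
  have hr0 : 0 < r := by positivity
  have hur : |u| < r := by rw [hr]; linarith
  have hr1 : r < 1 := by rw [hr]; linarith
  have hsum : Summable fun n : ℕ => a n * ((n : ℝ) * r ^ (n - 1)) :=
    summable_deriv_f (u := r) (by rwa [abs_of_pos hr0])
  have hg : ∀ (n : ℕ), ∀ y ∈ Ioo (-r) r,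
      HasDerivAt (fun y : ℝ => a n * y ^ n) (a n * ((n:ℝ) * y ^ (n - 1))) y := by
    intro n y _
    rcases Nat.eq_zero_or_pos n with rfl | hn
    · simpa using hasDerivAt_const y (a 0)
    · have h1 : HasDerivAt (fun y : ℝ => y ^ n) ((n:ℝ) * y ^ (n - 1)) y := hasDerivAt_pow n y
      simpa [mul_assoc, mul_comm, mul_left_comm] using h1.const_mul (a n)
  have hg' : ∀ (n : ℕ), ∀ y ∈ Ioo (-r) r,
      ‖a n * ((n:ℝ) * y ^ (n - 1))‖ ≤ a n * ((n:ℝ) * r ^ (n - 1)) := by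
    intro n y hy
    rw [Real.norm_eq_abs, abs_mul, abs_of_pos (a_pos n), abs_mul, Nat.abs_cast, abs_pow]
    have hyr : |y| ≤ r := by
      rw [abs_le]; exact ⟨hy.1.le, hy.2.le⟩
    exact mul_le_mul_of_nonneg_left (mul_le_mul_of_nonneg_left
      (pow_le_pow_left₀ (abs_nonneg _) hyr _) (Nat.cast_nonneg n)) (a_pos n).le
  have h0 : (0:ℝ) ∈ Ioo (-r) r := ⟨by linarith, by linarith⟩
  have hf0 : Summable fun n : ℕ => a n * (0:ℝ) ^ n := summable_f (by rw [abs_zero]; linarith)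
  exact hasDerivAt_tsum_of_isPreconnected hsum (isOpen_Ioo (a := -r) (b := r))
      (convex_Ioo _ _).isPreconnected hg hg' h0 hf0 (by rw [Set.mem_Ioo, ← abs_lt]; exact hur)



lemma f_zero : f 0 = 1 := by
  rw [f, tsum_eq_single 0 (fun n hn => by simp [zero_pow hn])]
  simp [a_zero]

lemma summable_aux {u : ℝ} (hu : |u| < 1) (b : ℕ → ℝ) (hb : ∀ n, |b n| ≤ n + 1) :
    Summable fun n => b n * u ^ n := by
  have h1 : Summable fun n : ℕ => (n : ℝ) ^ 1 * |u| ^ n :=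
    summable_pow_mul_geometric_of_norm_lt_one 1 (by rwa [Real.norm_eq_abs, abs_abs])
  have h2 : Summable fun n : ℕ => |u| ^ n := summable_geometric_of_lt_one (abs_nonneg u) hu
  apply Summable.of_abs
  apply Summable.of_nonneg_of_le (fun n => abs_nonneg _) ?_ (h1.add h2)
  intro n
  rw [abs_mul, abs_pow]
  calc |b n| * |u| ^ n ≤ ((n : ℝ) + 1) * |u| ^ n :=
        mul_le_mul_of_nonneg_right (hb n) (by positivity)
    _ = (n : ℝ) ^ 1 * |u| ^ n + |u| ^ n := by ring

lemma abs_a_le_nat (n : ℕ) (w : ℝ) (hw : 0 ≤ w) (hwn : w ≤ n + 1) : |w * a n| ≤ n + 1 := by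
  rw [abs_mul, abs_of_nonneg hw, abs_of_pos (a_pos n)]
  calc w * a n ≤ w * 1 := mul_le_mul_of_nonneg_left (a_le_one n) hw
    _ ≤ (n : ℝ) + 1 := by linarith

/-- The ODE `2 (1-u) f' = f`. -/
lemma ode {u : ℝ} (hu : |u| < 1) :
    2 * (1 - u) * (∑' n, a n * ((n : ℝ) * u ^ (n - 1))) = f u := by
  set D := ∑' n, a n * ((n : ℝ) * u ^ (n - 1)) with hD
  have s1 : Summable fun n : ℕ => ((2 * (n:ℝ) + 1) / 2 * a n) * u ^ n :=
    summable_aux hu _ (fun n => abs_a_le_nat n _ (by positivity) (by push_cast; linarith))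
  have s2 : Summable fun n : ℕ => ((n:ℝ) * a n) * u ^ n :=
    summable_aux hu _ (fun n => abs_a_le_nat n _ (by positivity) (by push_cast; linarith))
  have claim1 : D = ∑' n : ℕ, ((2 * (n:ℝ) + 1) / 2 * a n) * u ^ n := by
    rw [hD, Summable.tsum_eq_zero_add (summable_deriv_f hu)]
    simp only [Nat.cast_zero, zero_mul, mul_zero, zero_add, Nat.add_sub_cancel]
    apply tsum_congr
    intro n
    have := a_rec n
    push_cast
    linear_combination (u ^ n / 2) * this
  have claim2 : u * D = ∑' n : ℕ, ((n:ℝ) * a n) * u ^ n := by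
    rw [claim1, ← tsum_mul_left, Summable.tsum_eq_zero_add s2]
    simp only [Nat.cast_zero, zero_mul, zero_add]
    apply tsum_congr
    intro n
    have := a_rec n
    push_cast
    linear_combination (- u ^ (n + 1) / 2) * this
  have expand : 2 * (1 - u) * D = 2 * D - 2 * (u * D) := by ring
  rw [expand, claim2, claim1, ← tsum_mul_left, ← tsum_mul_left,
    ← Summable.tsum_sub (s1.mul_left 2) (s2.mul_left 2)]
  apply tsum_congr
  intro n
  ring

lemma one_le_f {u : ℝ} (hu : u ∈ Ico (0:ℝ) 1) : 1 ≤ f u := by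
  have habs : |u| < 1 := by rw [abs_of_nonneg hu.1]; exact hu.2
  have h := Summable.le_tsum (summable_f habs) 0 (fun n _ => mul_nonneg (a_pos n).le (pow_nonneg hu.1 n))
  simpa [a_zero, f] using h

lemma hasDerivAt_g {y : ℝ} (hy : |y| < 1) :
    HasDerivAt (fun u => f u ^ 2 * (1 - u)) 0 y := by
  have hf := hasDerivAt_f hy
  have h1 : HasDerivAt (fun u => f u ^ 2)
      (2 * f y * (∑' n, a n * ((n : ℝ) * y ^ (n - 1)))) y := by
    simpa [mul_comm, mul_assoc] using hf.fun_pow 2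
  have h2 : HasDerivAt (fun u : ℝ => 1 - u) (-1) y := by
    simpa using (hasDerivAt_id y).const_sub 1
  have h3 := h1.mul h2
  have hode := ode hy
  have h0 : (0:ℝ) = 2 * f y * (∑' n, a n * ((n : ℝ) * y ^ (n - 1))) * (1 - y) + f y ^ 2 * (-1) := by
    linear_combination (- f y) * hode
  rw [h0]
  exact h3

lemma f_eq_inv_sqrt {u : ℝ} (hu : u ∈ Ico (0:ℝ) 1) : f u = 1 / Real.sqrt (1 - u) := by
  have key : f u ^ 2 * (1 - u) = 1 := by
    have hcont : ContinuousOn (fun u => f u ^ 2 * (1 - u)) (Icc 0 u) := by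
      intro y hy
      have hy1 : |y| < 1 := by
        rw [abs_of_nonneg hy.1]; exact lt_of_le_of_lt hy.2 hu.2
      exact (hasDerivAt_g hy1).continuousAt.continuousWithinAt
    have hderiv : ∀ y ∈ Ico (0:ℝ) u, HasDerivWithinAt (fun u => f u ^ 2 * (1 - u)) 0 (Ici y) y := by
      intro y hy
      have hy1 : |y| < 1 := by
        rw [abs_of_nonneg hy.1]; exact lt_of_lt_of_le hy.2 (le_of_lt hu.2)
      exact (hasDerivAt_g hy1).hasDerivWithinAt
    have := constant_of_has_deriv_right_zero hcont hderiv u (right_mem_Icc.2 hu.1)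
    rw [this, f_zero]; ring
  have hfpos : 0 < f u := lt_of_lt_of_le one_pos (one_le_f hu)
  have h1u : 0 < 1 - u := by linarith [hu.2]
  have : f u = Real.sqrt (f u ^ 2) := (Real.sqrt_sq hfpos.le).symm
  rw [this]
  rw [show f u ^ 2 = 1 / (1 - u) by field_simp at key ⊢; linarith [key]]
  rw [one_div, Real.sqrt_inv, one_div]



/-- The arcsin power series. -/
noncomputable def S (t : ℝ) : ℝ := ∑' n : ℕ, a n / (2 * (n:ℝ) + 1) * t ^ (2 * n + 1)

lemma term_abs_le (n : ℕ) (t : ℝ) : |a n / (2 * (n:ℝ) + 1) * t ^ (2 * n + 1)|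
    ≤ |t| * (t ^ 2) ^ n := by
  rw [abs_mul, abs_div, abs_of_pos (a_pos n), abs_of_pos (by positivity : (0:ℝ) < 2 * (n:ℝ) + 1),
    abs_pow]
  have h1 : a n / (2 * (n:ℝ) + 1) ≤ 1 := by
    apply div_le_one_of_le₀ ((a_le_one n).trans (by push_cast; linarith)) (by positivity)
  have h2 : |t| ^ (2 * n + 1) = |t| * (t ^ 2) ^ n := by
    rw [pow_succ, pow_mul, mul_comm, sq_abs]
  calc a n / (2 * (n:ℝ) + 1) * |t| ^ (2 * n + 1) ≤ 1 * |t| ^ (2 * n + 1) :=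
        mul_le_mul_of_nonneg_right h1 (by positivity)
    _ = |t| * (t ^ 2) ^ n := by rw [one_mul, h2]

lemma summable_S {t : ℝ} (ht : |t| < 1) :
    Summable fun n : ℕ => a n / (2 * (n:ℝ) + 1) * t ^ (2 * n + 1) := by
  have hsq : t ^ 2 < 1 := by
    rw [← sq_abs]; exact pow_lt_one₀ (abs_nonneg t) ht (by norm_num)
  have hg : Summable fun n : ℕ => |t| * (t ^ 2) ^ n :=
    (summable_geometric_of_lt_one (by positivity) hsq).mul_left _
  exact Summable.of_abs <| Summable.of_nonneg_of_le (fun n => abs_nonneg _)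
    (fun n => term_abs_le n t) hg

lemma S_zero : S 0 = 0 := by
  rw [S]
  convert tsum_zero with n
  simp

lemma hasDerivAt_S {t : ℝ} (ht : |t| < 1) :
    HasDerivAt S (∑' n : ℕ, a n * t ^ (2 * n)) t := by
  set r : ℝ := (1 + |t|) / 2 with hr
  have hr0 : 0 < r := by positivity
  have htr : |t| < r := by rw [hr]; linarith
  have hr1 : r < 1 := by rw [hr]; linarith
  have hrsq : r ^ 2 < 1 := pow_lt_one₀ hr0.le hr1 (by norm_num)
  have hsum : Summable fun n : ℕ => a n * r ^ (2 * n) := by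
    apply Summable.of_nonneg_of_le (fun n => mul_nonneg (a_pos n).le (by positivity))
      (fun n => ?_) (summable_geometric_of_lt_one (by positivity) hrsq)
    calc a n * r ^ (2 * n) ≤ 1 * r ^ (2 * n) :=
          mul_le_mul_of_nonneg_right (a_le_one n) (by positivity)
      _ = (r ^ 2) ^ n := by rw [one_mul, pow_mul]
  have hg : ∀ (n : ℕ), ∀ y ∈ Ioo (-r) r,
      HasDerivAt (fun y : ℝ => a n / (2 * (n:ℝ) + 1) * y ^ (2 * n + 1)) (a n * y ^ (2 * n)) y := by
    intro n y _
    have h1 : HasDerivAt (fun y : ℝ => y ^ (2 * n + 1))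
        (((2 * n + 1 : ℕ) : ℝ) * y ^ (2 * n)) y := by
      simpa using hasDerivAt_pow (2 * n + 1) y
    have h2 := h1.const_mul (a n / (2 * (n:ℝ) + 1))
    have hne : (2 * (n:ℝ) + 1) ≠ 0 := by positivity
    have heq : a n * y ^ (2 * n) = a n / (2 * (n:ℝ) + 1) * (((2 * n + 1 : ℕ) : ℝ) * y ^ (2 * n)) := by
      push_cast
      rw [div_mul_eq_mul_div, eq_div_iff hne]
      ring
    rw [heq]
    exact h2
  have hg' : ∀ (n : ℕ), ∀ y ∈ Ioo (-r) r, ‖a n * y ^ (2 * n)‖ ≤ a n * r ^ (2 * n) := by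
    intro n y hy
    rw [Real.norm_eq_abs, abs_mul, abs_of_pos (a_pos n), abs_pow]
    have hyr : |y| ≤ r := by rw [abs_le]; exact ⟨hy.1.le, hy.2.le⟩
    exact mul_le_mul_of_nonneg_left (pow_le_pow_left₀ (abs_nonneg _) hyr _) (a_pos n).le
  have h0 : (0:ℝ) ∈ Ioo (-r) r := ⟨by linarith, by linarith⟩
  have hf0 : Summable fun n : ℕ => a n / (2 * (n:ℝ) + 1) * (0:ℝ) ^ (2 * n + 1) :=
    summable_S (by rw [abs_zero]; linarith)
  exact hasDerivAt_tsum_of_isPreconnected hsum (isOpen_Ioo (a := -r) (b := r))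
    (convex_Ioo _ _).isPreconnected hg hg' h0 hf0 (by rw [Set.mem_Ioo, ← abs_lt]; exact htr)

lemma S_deriv_eq {t : ℝ} (ht : |t| < 1) :
    (∑' n : ℕ, a n * t ^ (2 * n)) = 1 / Real.sqrt (1 - t ^ 2) := by
  have h1 : (∑' n : ℕ, a n * t ^ (2 * n)) = f (t ^ 2) := by
    rw [f]; exact tsum_congr fun n => by rw [pow_mul]
  rw [h1]
  apply f_eq_inv_sqrt
  constructor
  · positivity
  · rw [← sq_abs]; exact pow_lt_one₀ (abs_nonneg t) ht (by norm_num)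

lemma arcsin_eq_S {t : ℝ} (ht : |t| < 1) : Real.arcsin t = S t := by
  have key : ∀ y : ℝ, |y| < 1 → HasDerivAt (fun z => Real.arcsin z - S z) 0 y := by
    intro y hy
    rw [abs_lt] at hy
    have h1 : HasDerivAt Real.arcsin (1 / Real.sqrt (1 - y ^ 2)) y :=
      Real.hasDerivAt_arcsin (by linarith) (by linarith)
    have h2 := hasDerivAt_S (t := y) (by rw [abs_lt]; exact hy)
    have h3 := h1.sub h2
    rwa [S_deriv_eq (by rw [abs_lt]; exact hy), sub_self] at h3
  rcases le_or_gt 0 t with h | h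
  · have hcont : ContinuousOn (fun z => Real.arcsin z - S z) (Icc 0 t) := by
      intro y hy
      have : |y| < 1 := by
        rw [abs_of_nonneg hy.1]; exact lt_of_le_of_lt hy.2 (by rwa [abs_of_nonneg h] at ht)
      exact (key y this).continuousAt.continuousWithinAt
    have hderiv : ∀ y ∈ Ico (0:ℝ) t, HasDerivWithinAt (fun z => Real.arcsin z - S z) 0 (Ici y) y := by
      intro y hy
      have : |y| < 1 := by
        rw [abs_of_nonneg hy.1]
        exact lt_trans hy.2 (by rwa [abs_of_nonneg h] at ht)
      exact (key y this).hasDerivWithinAt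
    have := constant_of_has_deriv_right_zero hcont hderiv t (right_mem_Icc.2 h)
    rw [Real.arcsin_zero, S_zero, sub_zero] at this
    linarith [this]
  · have ht' : -1 < t := by rw [abs_lt] at ht; exact ht.1
    have hcont : ContinuousOn (fun z => Real.arcsin z - S z) (Icc t 0) := by
      intro y hy
      have : |y| < 1 := by
        rw [abs_lt]; constructor
        · linarith [hy.1]
        · linarith [hy.2]
      exact (key y this).continuousAt.continuousWithinAt
    have hderiv : ∀ y ∈ Ico t 0, HasDerivWithinAt (fun z => Real.arcsin z - S z) 0 (Ici y) y := by
      intro y hy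
      have : |y| < 1 := by
        rw [abs_lt]; constructor
        · linarith [hy.1]
        · linarith [hy.2]
      exact (key y this).hasDerivWithinAt
    have := constant_of_has_deriv_right_zero hcont hderiv 0 (right_mem_Icc.2 h.le)
    rw [Real.arcsin_zero, S_zero, sub_zero] at this
    linarith [this]

/-- Powers of a Gram-type kernel are positive semidefinite. -/
lemma sum_pow_nonneg {N : ℕ} {A : Type*} [Fintype A] (g : Fin N → A → ℝ)
    (c : Fin N → ℝ) (k : ℕ) :
    0 ≤ ∑ i, ∑ j, c i * c j * (∑ t, g i t * g j t) ^ k := by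
  have key : ∀ i j : Fin N, (∑ t, g i t * g j t) ^ k
      = ∑ m : Fin k → A, (∏ s, g i (m s)) * (∏ s, g j (m s)) := by
    intro i j
    rw [← Fin.prod_const k (∑ t, g i t * g j t), Fintype.prod_sum (fun (_ : Fin k) (t : A) => g i t * g j t)]
    exact Finset.sum_congr rfl fun m _ => by rw [Finset.prod_mul_distrib]
  calc (0:ℝ) ≤ ∑ m : Fin k → A, (∑ i, c i * ∏ s, g i (m s)) ^ 2 :=
        Finset.sum_nonneg fun m _ => sq_nonneg _
    _ = ∑ i, ∑ j, c i * c j * (∑ t, g i t * g j t) ^ k := by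
        simp only [key, Finset.mul_sum, sq, Finset.sum_mul]
        rw [Finset.sum_comm]
        refine Finset.sum_congr rfl fun i _ => ?_
        rw [Finset.sum_comm]
        exact Finset.sum_congr rfl fun j _ => Finset.sum_congr rfl fun m _ => by ring

lemma Q_nonneg {N : ℕ} {A : Type*} [Fintype A] (g : Fin N → A → ℝ) (c : Fin N → ℝ)
    {r : ℝ} (hr0 : 0 < r) (hr1 : r < 1)
    (ht : ∀ i j, |∑ m, g i m * g j m| ≤ 1) :
    0 ≤ ∑ i, ∑ j, c i * c j * Real.arcsin (r * ∑ m, g i m * g j m) := by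
  set t : Fin N → Fin N → ℝ := fun i j => ∑ m, g i m * g j m with htdef
  have hs : ∀ i j, |r * t i j| < 1 := by
    intro i j
    rw [abs_mul]
    calc |r| * |t i j| ≤ |r| * 1 := mul_le_mul_of_nonneg_left (ht i j) (abs_nonneg r)
      _ = |r| := mul_one _
      _ < 1 := by rw [abs_of_pos hr0]; exact hr1
  have hsumm : ∀ i j : Fin N, Summable fun n : ℕ =>
      c i * c j * (a n / (2 * (n:ℝ) + 1) * (r * t i j) ^ (2 * n + 1)) :=
    fun i j => (summable_S (hs i j)).mul_left _
  have step1 : ∀ i j : Fin N, c i * c j * Real.arcsin (r * t i j)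
      = ∑' n : ℕ, c i * c j * (a n / (2 * (n:ℝ) + 1) * (r * t i j) ^ (2 * n + 1)) := by
    intro i j
    rw [arcsin_eq_S (hs i j), S, tsum_mul_left]
  calc (0:ℝ) ≤ ∑' n : ℕ, ∑ i, ∑ j,
        c i * c j * (a n / (2 * (n:ℝ) + 1) * (r * t i j) ^ (2 * n + 1)) := by
        apply tsum_nonneg
        intro n
        have key : ∀ i j : Fin N,
            c i * c j * (a n / (2 * (n:ℝ) + 1) * (r * t i j) ^ (2 * n + 1))
            = (a n / (2 * (n:ℝ) + 1) * r ^ (2 * n + 1)) * (c i * c j * t i j ^ (2 * n + 1)) := by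
          intro i j
          rw [mul_pow]
          ring
        simp only [key, ← Finset.mul_sum]
        apply mul_nonneg
        · have := a_pos n
          positivity
        · exact sum_pow_nonneg g c (2 * n + 1)
    _ = ∑ i, ∑ j, c i * c j * Real.arcsin (r * t i j) := by
        rw [Summable.tsum_finsetSum (fun i _ => summable_sum (fun j _ => hsumm i j))]
        refine Finset.sum_congr rfl fun i _ => ?_
        rw [Summable.tsum_finsetSum (fun j _ => hsumm i j)]
        exact Finset.sum_congr rfl fun j _ => (step1 i j).symm

end ArccosND

open scoped RealInnerProductSpace

/-- The geodesic distance `(x, z) ↦ arccos ⟪x, z⟫` is a negative definite kernel on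
the unit sphere of any real inner product space. -/
theorem arccos_neg_def_on_sphere
    {H : Type*} [NormedAddCommGroup H] [InnerProductSpace ℝ H]
    (N : ℕ) (x : Fin N → H) (hx : ∀ i, ‖x i‖ = 1)
    (c : Fin N → ℝ) (hc : ∑ i, c i = 0) :
    ∑ i, ∑ j, c i * c j * Real.arccos ⟪x i, x j⟫ ≤ 0 := by
  classical
  -- coordinates on the span of the `x i`
  set V : Submodule ℝ H := Submodule.span ℝ (Set.range x) with hV
  haveI : FiniteDimensional ℝ V := FiniteDimensional.span_of_finite ℝ (Set.finite_range x)
  set b := stdOrthonormalBasis ℝ V with hb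
  set y : Fin N → V := fun i => ⟨x i, Submodule.subset_span ⟨i, rfl⟩⟩ with hy
  set g : Fin N → Fin (Module.finrank ℝ V) → ℝ := fun i m => ⟪y i, b m⟫ with hg
  have hgram : ∀ i j, ⟪x i, x j⟫ = ∑ m, g i m * g j m := by
    intro i j
    calc ⟪x i, x j⟫ = ⟪y i, y j⟫ := (Submodule.coe_inner V (y i) (y j)).symm
      _ = ∑ m, ⟪y i, b m⟫ * ⟪b m, y j⟫ := (b.sum_inner_mul_inner (y i) (y j)).symm
      _ = ∑ m, g i m * g j m := Finset.sum_congr rfl fun m _ => by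
          rw [real_inner_comm (y j) (b m)]
  have habs : ∀ i j, |∑ m, g i m * g j m| ≤ 1 := by
    intro i j
    rw [← hgram]
    calc |⟪x i, x j⟫| ≤ ‖x i‖ * ‖x j‖ := abs_real_inner_le_norm _ _
      _ = 1 := by rw [hx i, hx j, one_mul]
  -- the arcsin quadratic form as a function of the scaling parameter
  set Q : ℝ → ℝ := fun r => ∑ i, ∑ j, c i * c j * Real.arcsin (r * ∑ m, g i m * g j m)
    with hQ
  have hQcont : Continuous Q := by
    apply continuous_finset_sum
    intro i _
    apply continuous_finset_sum
    intro j _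
    exact continuous_const.mul
      (Real.continuous_arcsin.comp (continuous_id.mul continuous_const))
  have hQ1 : 0 ≤ Q 1 := by
    have hlim : Filter.Tendsto Q (nhdsWithin 1 (Set.Iio 1)) (nhds (Q 1)) :=
      hQcont.continuousAt.continuousWithinAt
    refine ge_of_tendsto hlim ?_
    filter_upwards [Ioo_mem_nhdsLT_of_mem (Set.mem_Ioc.2 ⟨zero_lt_one, le_refl 1⟩)]
    intro r hr
    exact ArccosND.Q_nonneg g c hr.1 hr.2 habs
  -- split arccos into π/2 − arcsin
  have split : ∀ i j, c i * c j * Real.arccos ⟪x i, x j⟫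
      = c i * c j * (Real.pi / 2) - c i * c j * Real.arcsin (1 * ∑ m, g i m * g j m) := by
    intro i j
    rw [Real.arccos_eq_pi_div_two_sub_arcsin, hgram i j, one_mul]
    ring
  have hzero : ∑ i, ∑ j, c i * c j * (Real.pi / 2) = 0 := by
    have h1 : ∀ i : Fin N, ∑ j, c i * c j * (Real.pi / 2)
        = c i * ((Real.pi / 2) * ∑ j, c j) := by
      intro i
      rw [Finset.mul_sum, Finset.mul_sum]
      exact Finset.sum_congr rfl fun j _ => by ring
    simp only [h1, hc, mul_zero, Finset.sum_const_zero]
  calc ∑ i, ∑ j, c i * c j * Real.arccos ⟪x i, x j⟫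
      = ∑ i, ∑ j, (c i * c j * (Real.pi / 2)
          - c i * c j * Real.arcsin (1 * ∑ m, g i m * g j m)) := by
        exact Finset.sum_congr rfl fun i _ => Finset.sum_congr rfl fun j _ => split i j
    _ = ∑ i, ∑ j, c i * c j * (Real.pi / 2) - Q 1 := by
        rw [hQ]
        simp only [Finset.sum_sub_distrib]
    _ = -Q 1 := by rw [hzero, zero_sub]
    _ ≤ 0 := by linarith [hQ1]
end

section
/- Let t > 0 be a real number. For every real inner product space H, every finite family of unit vectors x_1, …, x_N in H, and every family of real coefficients c_1, …, c_N, one has ∑_{i=1}^N ∑_{j=1}^N c_i c_j · exp(-t · arccos(⟪x_i, x_j⟫)) ≥ 0; that is, the kernel (x, z) ↦ exp(-t · arccos(⟪x, z⟫)) is positive definite on the unit sphere of H. -/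
open scoped RealInnerProductSpace

open Set Finset

noncomputable def arcExpCoeff (t : ℝ) : ℕ → ℝ
  | 0 => 1
  | 1 => t
  | (n+2) => (((n:ℝ)^2 + t^2) / (((n:ℝ)+1) * ((n:ℝ)+2))) * arcExpCoeff t n

lemma arcExpCoeff_nonneg {t : ℝ} (ht : 0 ≤ t) : ∀ n, 0 ≤ arcExpCoeff t n := by
  intro n
  induction n using Nat.strong_induction_on with
  | _ n ih =>
    match n with
    | 0 => simp [arcExpCoeff]
    | 1 => simpa [arcExpCoeff] using ht
    | (n+2) =>
      rw [arcExpCoeff]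
      have h1 : 0 ≤ arcExpCoeff t n := ih n (by omega)
      have h2 : (0:ℝ) ≤ ((n:ℝ)^2 + t^2) / (((n:ℝ)+1) * ((n:ℝ)+2)) := by positivity
      exact mul_nonneg h2 h1

lemma arcExpCoeff_bound {t : ℝ} (ht : 0 ≤ t) :
    ∃ C : ℝ, 0 ≤ C ∧ ∀ n, arcExpCoeff t n ≤ C := by
  classical
  set M : ℕ := ⌈t^2⌉₊ with hM
  refine ⟨∑ k ∈ Finset.range (M+2), arcExpCoeff t k, ?_, ?_⟩
  · exact Finset.sum_nonneg fun k _ => arcExpCoeff_nonneg ht k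
  · intro n
    induction n using Nat.strong_induction_on with
    | _ n ih =>
      by_cases hn : n < M + 2
      · exact Finset.single_le_sum (fun k _ => arcExpCoeff_nonneg ht k)
          (Finset.mem_range.mpr hn)
      · push_neg at hn
        obtain ⟨m, rfl⟩ : ∃ m, n = m + 2 := ⟨n - 2, by omega⟩
        have hm : M ≤ m := by omega
        rw [arcExpCoeff]
        have ht2 : t^2 ≤ (m:ℝ) := le_trans (Nat.le_ceil _) (by exact_mod_cast hm)
        have hratio : ((m:ℝ)^2 + t^2) / (((m:ℝ)+1) * ((m:ℝ)+2)) ≤ 1 := by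
          rw [div_le_one (by positivity)]
          nlinarith [Nat.cast_nonneg (α := ℝ) m]
        calc (((m:ℝ)^2 + t^2) / (((m:ℝ)+1) * ((m:ℝ)+2))) * arcExpCoeff t m
            ≤ 1 * arcExpCoeff t m := by
              exact mul_le_mul_of_nonneg_right hratio (arcExpCoeff_nonneg ht m)
          _ = arcExpCoeff t m := one_mul _
          _ ≤ _ := ih m (by omega)

noncomputable def FF (t x : ℝ) : ℝ := ∑' n : ℕ, arcExpCoeff t n * x^n
noncomputable def FF1 (t x : ℝ) : ℝ := ∑' n : ℕ, arcExpCoeff t n * ((n:ℝ) * x^(n-1))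
noncomputable def FF2 (t x : ℝ) : ℝ :=
  ∑' n : ℕ, arcExpCoeff t n * ((n:ℝ) * (((n-1:ℕ):ℝ) * x^(n-1-1)))

-- summability helpers
lemma summable_geom_aux {C r : ℝ} (hr0 : 0 ≤ r) (hr : r < 1) :
    Summable (fun n : ℕ => C * r^n) :=
  (summable_geometric_of_lt_one hr0 hr).mul_left C

lemma summable_deriv_aux {C r : ℝ} (hr0 : 0 ≤ r) (hr : r < 1) :
    Summable (fun n : ℕ => C * ((n:ℝ) * r^(n-1))) := by
  apply Summable.mul_left
  rw [← summable_nat_add_iff 1]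
  have h1 : Summable (fun n : ℕ => (n:ℝ)^1 * r^n) :=
    summable_pow_mul_geometric_of_norm_lt_one 1 (by rwa [Real.norm_eq_abs, abs_of_nonneg hr0])
  have h0 : Summable (fun n : ℕ => r^n) := summable_geometric_of_lt_one hr0 hr
  apply ((h1.add h0).congr)
  intro n
  simp [pow_one]
  ring

lemma summable_deriv2_aux {C r : ℝ} (hr0 : 0 ≤ r) (hr : r < 1) :
    Summable (fun n : ℕ => C * ((n:ℝ) * (((n-1:ℕ):ℝ) * r^(n-1-1)))) := by
  apply Summable.mul_left
  rw [← summable_nat_add_iff 2]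
  have hnorm : ‖r‖ < 1 := by rwa [Real.norm_eq_abs, abs_of_nonneg hr0]
  have h2 : Summable (fun n : ℕ => (n:ℝ)^2 * r^n) :=
    summable_pow_mul_geometric_of_norm_lt_one 2 hnorm
  have h1 : Summable (fun n : ℕ => (n:ℝ)^1 * r^n) :=
    summable_pow_mul_geometric_of_norm_lt_one 1 hnorm
  have h0 : Summable (fun n : ℕ => r^n) := summable_geometric_of_lt_one hr0 hr
  apply (((h2.add (h1.mul_left 3)).add (h0.mul_left 2)).congr)
  intro n
  show (n:ℝ)^2*r^n + 3*((n:ℝ)^1*r^n) + 2*r^n = ((n+2:ℕ):ℝ) * (((n+1:ℕ):ℝ) * r^n)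
  push_cast
  ring

lemma summable_FF_term {t x : ℝ} (ht : 0 ≤ t) (hx : |x| < 1) :
    Summable (fun n : ℕ => arcExpCoeff t n * x^n) := by
  obtain ⟨C, hC0, hC⟩ := arcExpCoeff_bound ht
  apply Summable.of_norm_bounded (summable_geom_aux (C := C) (abs_nonneg x) hx)
  intro n
  rw [norm_mul, Real.norm_eq_abs, Real.norm_eq_abs,
    abs_of_nonneg (arcExpCoeff_nonneg ht n), abs_pow]
  exact mul_le_mul_of_nonneg_right (hC n) (by positivity)

lemma summable_FF1_term {t x : ℝ} (ht : 0 ≤ t) (hx : |x| < 1) :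
    Summable (fun n : ℕ => arcExpCoeff t n * ((n:ℝ) * x^(n-1))) := by
  obtain ⟨C, hC0, hC⟩ := arcExpCoeff_bound ht
  apply Summable.of_norm_bounded (summable_deriv_aux (C := C) (abs_nonneg x) hx)
  intro n
  rw [norm_mul, Real.norm_eq_abs, Real.norm_eq_abs,
    abs_of_nonneg (arcExpCoeff_nonneg ht n), abs_mul, abs_pow, Nat.abs_cast]
  exact mul_le_mul_of_nonneg_right (hC n) (by positivity)

lemma summable_FF2_term {t x : ℝ} (ht : 0 ≤ t) (hx : |x| < 1) :
    Summable (fun n : ℕ => arcExpCoeff t n * ((n:ℝ) * (((n-1:ℕ):ℝ) * x^(n-1-1)))) := by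
  obtain ⟨C, hC0, hC⟩ := arcExpCoeff_bound ht
  apply Summable.of_norm_bounded (summable_deriv2_aux (C := C) (abs_nonneg x) hx)
  intro n
  rw [norm_mul, Real.norm_eq_abs, Real.norm_eq_abs,
    abs_of_nonneg (arcExpCoeff_nonneg ht n), abs_mul, abs_mul, abs_pow,
    Nat.abs_cast, Nat.abs_cast]
  exact mul_le_mul_of_nonneg_right (hC n) (by positivity)

lemma hasDerivAt_FF {t x : ℝ} (ht : 0 ≤ t) (hx : |x| < 1) :
    HasDerivAt (FF t) (FF1 t x) x := by
  obtain ⟨C, hC0, hC⟩ := arcExpCoeff_bound ht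
  set r : ℝ := (1 + |x|)/2 with hr
  have hxr : |x| < r := by rw [hr]; linarith
  have hr0 : 0 ≤ r := by positivity
  have hr1 : r < 1 := by rw [hr]; linarith
  have key := hasDerivAt_tsum_of_isPreconnected
    (summable_deriv_aux (C := C) hr0 hr1) (isOpen_Ioo (a := -r) (b := r))
    (isPreconnected_Ioo)
    (g := fun n y => arcExpCoeff t n * y^n)
    (g' := fun n y => arcExpCoeff t n * ((n:ℝ) * y^(n-1)))
    (fun n y _ => (hasDerivAt_pow n y).const_mul _)
    ?_ (y₀ := 0) (Set.mem_Ioo.mpr ⟨by simp only [hr]; linarith [abs_nonneg x], by simp only [hr]; linarith [abs_nonneg x]⟩) ?_ (abs_lt.mp hxr)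
  · exact key
  · intro n y hy
    have hyr : |y| ≤ r := le_of_lt (abs_lt.mpr ⟨hy.1, hy.2⟩)
    rw [Real.norm_eq_abs, abs_mul, abs_of_nonneg (arcExpCoeff_nonneg ht n),
      abs_mul, Nat.abs_cast, abs_pow]
    have : |y|^(n-1) ≤ r^(n-1) := pow_le_pow_left₀ (abs_nonneg y) hyr _
    have h1 : (n:ℝ) * |y|^(n-1) ≤ (n:ℝ) * r^(n-1) :=
      mul_le_mul_of_nonneg_left this (Nat.cast_nonneg n)
    calc arcExpCoeff t n * ((n:ℝ) * |y|^(n-1))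
        ≤ C * ((n:ℝ) * |y|^(n-1)) :=
          mul_le_mul_of_nonneg_right (hC n) (by positivity)
      _ ≤ C * ((n:ℝ) * r^(n-1)) := mul_le_mul_of_nonneg_left h1 hC0
  · apply summable_of_ne_finset_zero (s := {0})
    intro n hn
    simp only [Finset.mem_singleton] at hn
    simp [zero_pow hn]

lemma hasDerivAt_FF1 {t x : ℝ} (ht : 0 ≤ t) (hx : |x| < 1) :
    HasDerivAt (FF1 t) (FF2 t x) x := by
  obtain ⟨C, hC0, hC⟩ := arcExpCoeff_bound ht
  set r : ℝ := (1 + |x|)/2 with hr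
  have hxr : |x| < r := by rw [hr]; linarith
  have hr0 : 0 ≤ r := by positivity
  have hr1 : r < 1 := by rw [hr]; linarith
  have key := hasDerivAt_tsum_of_isPreconnected
    (summable_deriv2_aux (C := C) hr0 hr1) (isOpen_Ioo (a := -r) (b := r))
    (isPreconnected_Ioo)
    (g := fun n y => arcExpCoeff t n * ((n:ℝ) * y^(n-1)))
    (g' := fun n y => arcExpCoeff t n * ((n:ℝ) * (((n-1:ℕ):ℝ) * y^(n-1-1))))
    (fun n y _ => (((hasDerivAt_pow (n-1) y).const_mul ((n:ℝ))).const_mul _))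
    ?_ (y₀ := 0) (Set.mem_Ioo.mpr ⟨by simp only [hr]; linarith [abs_nonneg x], by simp only [hr]; linarith [abs_nonneg x]⟩) ?_ (abs_lt.mp hxr)
  · exact key
  · intro n y hy
    have hyr : |y| ≤ r := le_of_lt (abs_lt.mpr ⟨hy.1, hy.2⟩)
    rw [Real.norm_eq_abs, abs_mul, abs_of_nonneg (arcExpCoeff_nonneg ht n),
      abs_mul, Nat.abs_cast, abs_mul, Nat.abs_cast, abs_pow]
    have hpow : |y|^(n-1-1) ≤ r^(n-1-1) := pow_le_pow_left₀ (abs_nonneg y) hyr _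
    have h1 : (n:ℝ) * (((n-1:ℕ):ℝ) * |y|^(n-1-1)) ≤ (n:ℝ) * (((n-1:ℕ):ℝ) * r^(n-1-1)) := by
      apply mul_le_mul_of_nonneg_left _ (Nat.cast_nonneg n)
      exact mul_le_mul_of_nonneg_left hpow (Nat.cast_nonneg _)
    calc arcExpCoeff t n * ((n:ℝ) * (((n-1:ℕ):ℝ) * |y|^(n-1-1)))
        ≤ C * ((n:ℝ) * (((n-1:ℕ):ℝ) * |y|^(n-1-1))) :=
          mul_le_mul_of_nonneg_right (hC n) (by positivity)
      _ ≤ C * ((n:ℝ) * (((n-1:ℕ):ℝ) * r^(n-1-1))) := mul_le_mul_of_nonneg_left h1 hC0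
  · apply summable_of_ne_finset_zero (s := {0, 1})
    intro n hn
    simp only [Finset.mem_insert, Finset.mem_singleton] at hn
    push_neg at hn
    have : n - 1 ≠ 0 := by omega
    simp [zero_pow this]

lemma FF_zero (t : ℝ) : FF t 0 = 1 := by
  rw [FF, tsum_eq_single 0 (fun b hb => by simp [zero_pow hb])]
  simp [arcExpCoeff]

lemma FF1_zero (t : ℝ) : FF1 t 0 = t := by
  rw [FF1, tsum_eq_single 1 (fun b hb => ?_)]
  · simp [arcExpCoeff]
  · match b, hb with
    | 0, _ => simp
    | (n+2), _ => simp [zero_pow (show n + 2 - 1 ≠ 0 by omega)]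

lemma FF_ODE {t x : ℝ} (ht : 0 ≤ t) (hx : |x| < 1) :
    (1 - x^2) * FF2 t x = x * FF1 t x + t^2 * FF t x := by
  have h0 : HasSum (fun n : ℕ => arcExpCoeff t n * x^n) (FF t x) :=
    (summable_FF_term ht hx).hasSum
  have h1 : HasSum (fun n : ℕ => arcExpCoeff t n * ((n:ℝ) * x^(n-1))) (FF1 t x) :=
    (summable_FF1_term ht hx).hasSum
  have h2 : HasSum (fun n : ℕ => arcExpCoeff t n * ((n:ℝ) * (((n-1:ℕ):ℝ) * x^(n-1-1))))
      (FF2 t x) := (summable_FF2_term ht hx).hasSum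
  -- shifted version of h2
  have hshift : HasSum
      (fun n : ℕ => (((n:ℝ)^2 + t^2)) * (arcExpCoeff t n * x^n)) (FF2 t x) := by
    have h2' := (hasSum_nat_add_iff' 2).mpr h2
    have e : ∀ n : ℕ, arcExpCoeff t (n+2) * (((n+2:ℕ):ℝ) * (((n+2-1:ℕ):ℝ) * x^(n+2-1-1)))
        = ((n:ℝ)^2 + t^2) * (arcExpCoeff t n * x^n) := by
      intro n
      show (((n:ℝ)^2 + t^2) / (((n:ℝ)+1) * ((n:ℝ)+2))) * arcExpCoeff t n
          * (((n+2:ℕ):ℝ) * (((n+1:ℕ):ℝ) * x^n)) = _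
      have hne1 : ((n:ℝ)+1) ≠ 0 := by positivity
      have hne2 : ((n:ℝ)+2) ≠ 0 := by positivity
      push_cast
      field_simp
    have hval : (∑ i ∈ Finset.range 2,
        arcExpCoeff t i * ((i:ℝ) * (((i-1:ℕ):ℝ) * x^(i-1-1)))) = 0 := by
      simp [Finset.sum_range_succ]
    rw [hval, sub_zero] at h2'
    simp only [e] at h2'
    exact h2'
  -- right-hand side sum
  have hrhs : HasSum (fun n : ℕ => ((n:ℝ)^2 + t^2) * (arcExpCoeff t n * x^n))
      (x^2 * FF2 t x + x * FF1 t x + t^2 * FF t x) := by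
    have hs := ((h2.mul_left (x^2)).add (h1.mul_left x)).add (h0.mul_left (t^2))
    have e : (fun n : ℕ => x^2 * (arcExpCoeff t n * ((n:ℝ) * (((n-1:ℕ):ℝ) * x^(n-1-1))))
        + x * (arcExpCoeff t n * ((n:ℝ) * x^(n-1))) + t^2 * (arcExpCoeff t n * x^n))
        = (fun n : ℕ => ((n:ℝ)^2 + t^2) * (arcExpCoeff t n * x^n)) := by
      funext n
      match n with
      | 0 => simp
      | 1 => norm_num; ring
      | (m+2) =>
        show x^2 * (arcExpCoeff t (m+2) * (((m+2:ℕ):ℝ) * (((m+1:ℕ):ℝ) * x^m)))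
            + x * (arcExpCoeff t (m+2) * (((m+2:ℕ):ℝ) * x^(m+1)))
            + t^2 * (arcExpCoeff t (m+2) * x^(m+2))
            = (((m+2:ℕ):ℝ)^2 + t^2) * (arcExpCoeff t (m+2) * x^(m+2))
        push_cast
        ring
    exact e ▸ hs
  have := hshift.unique hrhs
  nlinarith [this]


lemma eq_at_zero_of_deriv_zero {v : ℝ → ℝ}
    (hv : ∀ y ∈ Set.Ioo (-1:ℝ) 1, HasDerivAt v 0 y) :
    ∀ x ∈ Set.Ioo (-1:ℝ) 1, v x = v 0 := by
  intro x hx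
  obtain ⟨hx1, hx2⟩ := hx
  rcases lt_trichotomy x 0 with h | h | h
  · have hsub : Icc x 0 ⊆ Ioo (-1:ℝ) 1 := fun y hy =>
      ⟨lt_of_lt_of_le hx1 hy.1, lt_of_le_of_lt hy.2 one_pos⟩
    obtain ⟨c, _, hc2⟩ := exists_hasDerivAt_eq_slope v (fun _ => (0:ℝ)) h
      (fun y hy => (hv y (hsub hy)).continuousAt.continuousWithinAt)
      (fun y hy => hv y (hsub (Ioo_subset_Icc_self hy)))
    have h2 := hc2.symm
    rw [div_eq_iff (by linarith : (0:ℝ) - x ≠ 0)] at h2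
    simp at h2
    linarith
  · rw [h]
  · have hsub : Icc 0 x ⊆ Ioo (-1:ℝ) 1 := fun y hy =>
      ⟨lt_of_lt_of_le (by linarith) hy.1, lt_of_le_of_lt hy.2 hx2⟩
    obtain ⟨c, _, hc2⟩ := exists_hasDerivAt_eq_slope v (fun _ => (0:ℝ)) h
      (fun y hy => (hv y (hsub hy)).continuousAt.continuousWithinAt)
      (fun y hy => hv y (hsub (Ioo_subset_Icc_self hy)))
    have h2 := hc2.symm
    rw [div_eq_iff (by linarith : x - 0 ≠ 0)] at h2
    simp at h2
    linarith

lemma sqrt_one_sub_sq_pos {x : ℝ} (hx : x ∈ Set.Ioo (-1:ℝ) 1) :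
    0 < Real.sqrt (1 - x^2) := by
  apply Real.sqrt_pos.mpr
  nlinarith [hx.1, hx.2]

lemma hasDerivAt_sqrt_one_sub_sq {x : ℝ} (hx : x ∈ Set.Ioo (-1:ℝ) 1) :
    HasDerivAt (fun y => Real.sqrt (1 - y^2)) (-x / Real.sqrt (1 - x^2)) x := by
  have hs := sqrt_one_sub_sq_pos hx
  have h1 : HasDerivAt (fun y : ℝ => 1 - y^2) (-(2*x)) x := by
    simpa using ((hasDerivAt_pow 2 x).const_sub 1)
  have hne : 1 - x^2 ≠ 0 := by nlinarith [hx.1, hx.2]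
  have := h1.sqrt hne
  convert this using 1
  rw [div_eq_div_iff (ne_of_gt hs) (mul_ne_zero two_ne_zero (ne_of_gt hs))]
  ring

theorem FF_eq_exp {t : ℝ} (ht : 0 ≤ t) {x : ℝ} (hx : x ∈ Set.Ioo (-1:ℝ) 1) :
    FF t x = Real.exp (t * Real.arcsin x) := by
  set G : ℝ → ℝ := fun y => Real.sqrt (1 - y^2) * FF1 t y - t * FF t y with hG
  have habs : ∀ y : ℝ, y ∈ Set.Ioo (-1:ℝ) 1 → |y| < 1 := by
    intro y hy; rw [abs_lt]; exact ⟨hy.1, hy.2⟩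
  have hGderiv : ∀ y ∈ Set.Ioo (-1:ℝ) 1,
      HasDerivAt G (-t / Real.sqrt (1 - y^2) * G y) y := by
    intro y hy
    have hs := sqrt_one_sub_sq_pos hy
    have hs' : Real.sqrt (1 - y^2) ≠ 0 := ne_of_gt hs
    have h := (((hasDerivAt_sqrt_one_sub_sq hy).mul (hasDerivAt_FF1 ht (habs y hy))).sub
      ((hasDerivAt_FF ht (habs y hy)).const_mul t))
    convert h using 1
    · rfl
    · rfl
    · rfl
    show -t / Real.sqrt (1 - y^2) * (Real.sqrt (1 - y^2) * FF1 t y - t * FF t y)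
        = -y / Real.sqrt (1 - y^2) * FF1 t y + Real.sqrt (1 - y^2) * FF2 t y - t * FF1 t y
    have hsq : Real.sqrt (1 - y^2) ^ 2 = 1 - y^2 := Real.sq_sqrt (by nlinarith [hy.1, hy.2])
    have hode := FF_ODE ht (habs y hy)
    field_simp
    linear_combination -hode - FF2 t y * hsq
  set v : ℝ → ℝ := fun y => G y * Real.exp (t * Real.arcsin y) with hv
  have hvderiv : ∀ y ∈ Set.Ioo (-1:ℝ) 1, HasDerivAt v 0 y := by
    intro y hy
    have hs := sqrt_one_sub_sq_pos hy
    have hs' : Real.sqrt (1 - y^2) ≠ 0 := ne_of_gt hs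
    have harc : HasDerivAt (fun z => Real.exp (t * Real.arcsin z))
        (Real.exp (t * Real.arcsin y) * (t * (1 / Real.sqrt (1 - y^2)))) y :=
      ((Real.hasDerivAt_arcsin (ne_of_gt hy.1) (ne_of_lt hy.2)).const_mul t).exp
    have h := (hGderiv y hy).mul harc
    convert h using 1
    · rfl
    · rfl
    · rfl
    ring
  have hG0 : G 0 = 0 := by
    rw [hG]; simp [FF_zero, FF1_zero]
  have hv0 : v 0 = 0 := by rw [hv]; simp [hG0]
  have hGzero : ∀ y ∈ Set.Ioo (-1:ℝ) 1,
      Real.sqrt (1 - y^2) * FF1 t y - t * FF t y = 0 := by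
    intro y hy
    have h1 := eq_at_zero_of_deriv_zero hvderiv y hy
    rw [hv0] at h1
    have h2 : G y = 0 :=
      (mul_eq_zero.mp h1).resolve_right (Real.exp_ne_zero _)
    exact h2
  set u : ℝ → ℝ := fun y => FF t y * Real.exp (-t * Real.arcsin y) with hu
  have huderiv : ∀ y ∈ Set.Ioo (-1:ℝ) 1, HasDerivAt u 0 y := by
    intro y hy
    have hs := sqrt_one_sub_sq_pos hy
    have hs' : Real.sqrt (1 - y^2) ≠ 0 := ne_of_gt hs
    have harc : HasDerivAt (fun z => Real.exp (-t * Real.arcsin z))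
        (Real.exp (-t * Real.arcsin y) * (-t * (1 / Real.sqrt (1 - y^2)))) y :=
      ((Real.hasDerivAt_arcsin (ne_of_gt hy.1) (ne_of_lt hy.2)).const_mul (-t)).exp
    have h := (hasDerivAt_FF ht (habs y hy)).mul harc
    convert h using 1
    · rfl
    · rfl
    · rfl
    have hGy := hGzero y hy
    have hFF1 : FF1 t y = t * FF t y / Real.sqrt (1 - y^2) := by
      field_simp
      linear_combination hGy
    rw [hFF1]
    field_simp
    ring
  have hu0 : u 0 = 1 := by rw [hu]; simp [FF_zero]
  have h1 : FF t x * Real.exp (-t * Real.arcsin x) = 1 := by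
    have := eq_at_zero_of_deriv_zero huderiv x hx
    rwa [hu0] at this
  calc FF t x = FF t x * (Real.exp (-t * Real.arcsin x) * Real.exp (t * Real.arcsin x)) := by
        rw [← Real.exp_add]; simp
    _ = (FF t x * Real.exp (-t * Real.arcsin x)) * Real.exp (t * Real.arcsin x) := by ring
    _ = Real.exp (t * Real.arcsin x) := by rw [h1, one_mul]


lemma gram_pow_psd {H : Type*} [NormedAddCommGroup H] [InnerProductSpace ℝ H]
    {N : ℕ} (x : Fin N → H) (n : ℕ) (c : Fin N → ℝ) :
    0 ≤ ∑ i, ∑ j, c i * c j * (⟪x i, x j⟫)^n := by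
  classical
  set V := Submodule.span ℝ (Set.range x) with hV
  haveI : FiniteDimensional ℝ V := FiniteDimensional.span_of_finite ℝ (Set.finite_range x)
  set d := Module.finrank ℝ V with hd
  let b : OrthonormalBasis (Fin d) ℝ V := stdOrthonormalBasis ℝ V
  let y : Fin N → V := fun i => ⟨x i, Submodule.subset_span ⟨i, rfl⟩⟩
  let u : Fin d → Fin N → ℝ := fun k i => ⟪(b k : V), y i⟫
  have hrep : ∀ i j, ⟪x i, x j⟫ = ∑ k, u k i * u k j := by
    intro i j
    have h1 : ⟪x i, x j⟫ = ⟪y i, y j⟫ := rfl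
    rw [h1, ← b.sum_inner_mul_inner (y i) (y j)]
    refine Finset.sum_congr rfl fun k _ => ?_
    show ⟪y i, b k⟫ * ⟪b k, y j⟫ = ⟪(b k : V), y i⟫ * ⟪(b k : V), y j⟫
    rw [real_inner_comm (b k) (y i)]
  have hpow : ∀ i j, (⟪x i, x j⟫)^n
      = ∑ g : Fin n → Fin d, (∏ l, u (g l) i) * (∏ l, u (g l) j) := by
    intro i j
    rw [hrep]
    have : (∑ k, u k i * u k j)^n = ∏ _l : Fin n, (∑ k, u k i * u k j) := by
      rw [Finset.prod_const, Finset.card_univ, Fintype.card_fin]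
    rw [this, Finset.prod_univ_sum]
    rw [Fintype.piFinset_univ]
    refine Finset.sum_congr rfl fun g _ => ?_
    rw [← Finset.prod_mul_distrib]
  calc (0:ℝ) ≤ ∑ g : Fin n → Fin d, (∑ i, c i * ∏ l, u (g l) i)^2 :=
        Finset.sum_nonneg fun g _ => sq_nonneg _
    _ = ∑ i, ∑ j, c i * c j * (⟪x i, x j⟫)^n := by
        simp_rw [hpow, sq, Finset.sum_mul, Finset.mul_sum]
        rw [Finset.sum_comm]
        refine Finset.sum_congr rfl fun i _ => ?_
        rw [Finset.sum_comm]
        refine Finset.sum_congr rfl fun j _ => ?_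
        refine Finset.sum_congr rfl fun g _ => ?_
        ring


lemma exp_neg_arccos_hasSum {t : ℝ} (ht : 0 ≤ t) {s : ℝ} (hs : |s| < 1) :
    HasSum (fun n : ℕ => (Real.exp (-(t * (Real.pi/2))) * arcExpCoeff t n) * s^n)
      (Real.exp (-t * Real.arccos s)) := by
  have hF : HasSum (fun n : ℕ => arcExpCoeff t n * s^n) (FF t s) :=
    (summable_FF_term ht hs).hasSum
  have h2 := hF.mul_left (Real.exp (-(t * (Real.pi/2))))
  have hval : Real.exp (-(t * (Real.pi/2))) * FF t s = Real.exp (-t * Real.arccos s) := by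
    rw [FF_eq_exp ht (abs_lt.mp hs : s ∈ Set.Ioo (-1:ℝ) 1), ← Real.exp_add,
      Real.arccos_eq_pi_div_two_sub_arcsin]
    congr 1
    ring
  rw [hval] at h2
  simpa only [mul_assoc] using h2

/-- For `t > 0`, the kernel `(x, z) ↦ exp (-t * arccos ⟪x, z⟫)` is positive definite
on the unit sphere of any real inner product space. -/
theorem exp_neg_arccos_pos_def_on_sphere
    (t : ℝ) (ht : 0 < t)
    {H : Type*} [NormedAddCommGroup H] [InnerProductSpace ℝ H]
    (N : ℕ) (x : Fin N → H) (hx : ∀ i, ‖x i‖ = 1) (c : Fin N → ℝ) :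
    0 ≤ ∑ i, ∑ j, c i * c j * Real.exp (-t * Real.arccos ⟪x i, x j⟫) := by
  have ht' : 0 ≤ t := le_of_lt ht
  have hp : ∀ i j, |⟪ x i, x j⟫| ≤ 1 := by
    intro i j
    have := abs_real_inner_le_norm (x i) (x j)
    rwa [hx i, hx j, one_mul] at this
  set φ : ℝ → ℝ := fun r => ∑ i, ∑ j, c i * c j * Real.exp (-t * Real.arccos (r * ⟪ x i, x j⟫))
    with hφdef
  have hφcont : Continuous φ := by
    apply continuous_finset_sum _ fun i _ => ?_
    apply continuous_finset_sum _ fun j _ => ?_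
    exact continuous_const.mul (Real.continuous_exp.comp
      (continuous_const.mul (Real.continuous_arccos.comp
        (continuous_id.mul continuous_const))))
  have hφnonneg : ∀ r ∈ Set.Ioo (0:ℝ) 1, 0 ≤ φ r := by
    intro r hr
    have hrp : ∀ i j, |r * ⟪ x i, x j⟫| < 1 := by
      intro i j
      rw [abs_mul, abs_of_pos hr.1]
      calc r * |⟪ x i, x j⟫| ≤ r * 1 := mul_le_mul_of_nonneg_left (hp i j) (le_of_lt hr.1)
        _ < 1 := by rw [mul_one]; exact hr.2
    have H : HasSum
        (fun n : ℕ => ∑ i, ∑ j, c i * c j *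
          ((Real.exp (-(t * (Real.pi/2))) * arcExpCoeff t n) * (r * ⟪ x i, x j⟫)^n)) (φ r) := by
      apply hasSum_sum
      intro i _
      apply hasSum_sum
      intro j _
      exact (exp_neg_arccos_hasSum ht' (hrp i j)).mul_left (c i * c j)
    rw [← H.tsum_eq]
    apply tsum_nonneg
    intro n
    have hre : ∑ i, ∑ j, c i * c j *
          ((Real.exp (-(t * (Real.pi/2))) * arcExpCoeff t n) * (r * ⟪ x i, x j⟫)^n)
        = (Real.exp (-(t * (Real.pi/2))) * arcExpCoeff t n * r^n) *
          ∑ i, ∑ j, c i * c j * (⟪ x i, x j⟫)^n := by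
      rw [Finset.mul_sum]
      refine Finset.sum_congr rfl fun i _ => ?_
      rw [Finset.mul_sum]
      refine Finset.sum_congr rfl fun j _ => ?_
      ring
    rw [hre]
    apply mul_nonneg
    · exact mul_nonneg (mul_nonneg (le_of_lt (Real.exp_pos _)) (arcExpCoeff_nonneg ht' n))
        (pow_nonneg (le_of_lt hr.1) n)
    · exact gram_pow_psd x n c
  haveI : (nhdsWithin (1:ℝ) (Set.Ioo (0:ℝ) 1)).NeBot :=
    right_nhdsWithin_Ioo_neBot (by norm_num : (0:ℝ) < 1)
  have htend : Filter.Tendsto φ (nhdsWithin 1 (Set.Ioo (0:ℝ) 1)) (nhds (φ 1)) :=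
    (hφcont.continuousAt).continuousWithinAt
  have hfin : 0 ≤ φ 1 :=
    ge_of_tendsto htend (Filter.eventually_of_mem self_mem_nhdsWithin hφnonneg)
  rw [hφdef] at hfin
  simpa only [one_mul] using hfin
end

section
/- Let (Ω, μ) be a measure space and let t > 0 be a real number. For probability densities ρ, ρ' on (Ω, μ), define the Persistence Fisher kernel k_PF(ρ, ρ') = exp(-t · arccos(∫ √(ρ(x) ρ'(x)) dμ(x))). Then k_PF is a positive definite kernel on the set of probability densities: for every finite family of probability densities ρ_1, …, ρ_N on (Ω, μ) and every family of real coefficients c_1, …, c_N, one has ∑_{i=1}^N ∑_{j=1}^N c_i c_j k_PF(ρ_i, ρ_j) ≥ 0. -/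
open MeasureTheory Finset Filter Topology



noncomputable def cb (n : ℕ) : ℝ := (Nat.centralBinom n : ℝ) / 4 ^ n

lemma cb_nonneg (n : ℕ) : 0 ≤ cb n := by unfold cb; positivity

lemma cb_zero : cb 0 = 1 := by simp [cb, Nat.centralBinom]

lemma cb_le_one (n : ℕ) : cb n ≤ 1 := by
  have h : Nat.centralBinom n ≤ 4 ^ n := by
    have h1 : Nat.centralBinom n ≤ ∑ i ∈ range (2*n + 1), (2*n).choose i :=
      Finset.single_le_sum (f := fun i => (2*n).choose i) (fun i _ => Nat.zero_le _)
        (by simp [Finset.mem_range]; omega)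
    rwa [Nat.sum_range_choose, pow_mul] at h1
  rw [cb, div_le_one (by positivity)]
  exact_mod_cast h

lemma cb_rec (n : ℕ) : (2 * (n:ℝ) + 2) * cb (n + 1) = (2 * n + 1) * cb n := by
  have h := Nat.succ_mul_centralBinom_succ n
  have h' : ((n:ℝ) + 1) * Nat.centralBinom (n + 1) = 2 * (2 * n + 1) * Nat.centralBinom n := by
    exact_mod_cast congrArg (Nat.cast : ℕ → ℝ) h
  have e1 : (2*(n:ℝ)+2) * cb (n+1) = 2 * ((((n:ℝ)+1) * (Nat.centralBinom (n+1)))) / 4^(n+1) := by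
    unfold cb; ring
  rw [e1, h', cb, pow_succ]
  field_simp
  ring

lemma sum_antidiag_swap (f : ℕ → ℕ → ℝ) (n : ℕ) :
    ∑ p ∈ Finset.HasAntidiagonal.antidiagonal n, f p.1 p.2 = ∑ p ∈ Finset.HasAntidiagonal.antidiagonal n, f p.2 p.1 := by
  conv_lhs => rw [← Finset.HasAntidiagonal.map_swap_antidiagonal]
  rw [Finset.sum_map]
  rfl

lemma sum_antidiag_fst (m : ℕ) :
    2 * ∑ p ∈ Finset.HasAntidiagonal.antidiagonal m, (p.1 : ℝ) * (cb p.1 * cb p.2) =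
      (m : ℝ) * ∑ p ∈ Finset.HasAntidiagonal.antidiagonal m, cb p.1 * cb p.2 := by
  have hswap : ∑ p ∈ Finset.HasAntidiagonal.antidiagonal m, (p.1:ℝ) * (cb p.1 * cb p.2)
      = ∑ p ∈ Finset.HasAntidiagonal.antidiagonal m, (p.2:ℝ) * (cb p.1 * cb p.2) := by
    rw [sum_antidiag_swap (fun a b => (a:ℝ) * (cb a * cb b)) m]
    exact Finset.sum_congr rfl (fun p _ => by ring)
  rw [two_mul]
  nth_rewrite 2 [hswap]
  rw [← Finset.sum_add_distrib, Finset.mul_sum]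
  refine Finset.sum_congr rfl (fun p hp => ?_)
  have hpm := Finset.HasAntidiagonal.mem_antidiagonal.mp hp
  have hc : (p.1 : ℝ) + (p.2 : ℝ) = (m : ℝ) := by exact_mod_cast congrArg (Nat.cast : ℕ → ℝ) hpm
  rw [← hc]; ring

lemma cb_conv (n : ℕ) : ∑ p ∈ Finset.HasAntidiagonal.antidiagonal n, cb p.1 * cb p.2 = 1 := by
  induction n with
  | zero => simp [cb_zero]
  | succ n ih =>
    have key : ∑ p ∈ Finset.HasAntidiagonal.antidiagonal (n+1), (p.1 : ℝ) * (cb p.1 * cb p.2)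
        = ((n:ℝ) + 1) / 2 := by
      rw [Finset.Nat.antidiagonal_succ, Finset.sum_cons, Finset.sum_map]
      simp only [Function.Embedding.coeFn_mk, Function.Embedding.prodMap,
        Function.Embedding.refl_apply, Nat.cast_zero, Prod.map_fst, Prod.map_snd, id_eq]
      rw [zero_mul, zero_add]
      have step : ∀ p ∈ Finset.HasAntidiagonal.antidiagonal n,
          ((Nat.succ p.1 : ℕ) : ℝ) * (cb (Nat.succ p.1) * cb p.2)
            = ((p.1:ℝ) + 1/2) * (cb p.1 * cb p.2) := by
        intro p _
        have h := cb_rec p.1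
        simp only [Nat.succ_eq_add_one]
        push_cast
        linear_combination (cb p.2 / 2) * h
      rw [Finset.sum_congr rfl step]
      have expand : ∑ p ∈ Finset.HasAntidiagonal.antidiagonal n, ((p.1:ℝ) + 1/2) * (cb p.1 * cb p.2)
          = (∑ p ∈ Finset.HasAntidiagonal.antidiagonal n, (p.1:ℝ) * (cb p.1 * cb p.2))
            + (1/2) * ∑ p ∈ Finset.HasAntidiagonal.antidiagonal n, cb p.1 * cb p.2 := by
        rw [Finset.mul_sum, ← Finset.sum_add_distrib]
        exact Finset.sum_congr rfl (fun p _ => by ring)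
      rw [expand, ih]
      have h2 := sum_antidiag_fst n
      rw [ih] at h2
      linarith
    have h2 := sum_antidiag_fst (n+1)
    rw [key] at h2
    push_cast at h2
    have hn : ((n:ℝ) + 1) ≠ 0 := by positivity
    field_simp at h2
    linarith

noncomputable def F (y : ℝ) : ℝ := ∑' n, cb n * y ^ n

lemma summable_cb {y : ℝ} (h0 : 0 ≤ y) (h1 : y < 1) : Summable (fun n => cb n * y ^ n) := by
  refine Summable.of_nonneg_of_le
    (fun n => mul_nonneg (cb_nonneg n) (pow_nonneg h0 n)) (fun n => ?_)
    (summable_geometric_of_lt_one h0 h1)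
  calc cb n * y ^ n ≤ 1 * y ^ n :=
        mul_le_mul_of_nonneg_right (cb_le_one n) (pow_nonneg h0 n)
    _ = y ^ n := one_mul _

lemma F_pos {y : ℝ} (h0 : 0 ≤ y) (h1 : y < 1) : 1 ≤ F y := by
  have hs := summable_cb h0 h1
  have := Summable.le_tsum hs 0 (fun n _ => mul_nonneg (cb_nonneg n) (pow_nonneg h0 n))
  simpa [cb_zero, F] using this

lemma F_sq {y : ℝ} (h0 : 0 ≤ y) (h1 : y < 1) : F y * F y = (1 - y)⁻¹ := by
  have hs := summable_cb h0 h1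
  have hn : Summable (fun n => ‖cb n * y ^ n‖) := by
    refine hs.congr fun n => ?_
    rw [Real.norm_eq_abs, abs_of_nonneg (mul_nonneg (cb_nonneg n) (pow_nonneg h0 n))]
  rw [F, tsum_mul_tsum_eq_tsum_sum_antidiagonal_of_summable_norm hn hn]
  have : ∀ n : ℕ, ∑ p ∈ Finset.HasAntidiagonal.antidiagonal n, (cb p.1 * y ^ p.1) * (cb p.2 * y ^ p.2)
      = y ^ n := by
    intro n
    have : ∀ p ∈ Finset.HasAntidiagonal.antidiagonal n, (cb p.1 * y ^ p.1) * (cb p.2 * y ^ p.2)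
        = (cb p.1 * cb p.2) * y ^ n := by
      intro p hp
      have := Finset.HasAntidiagonal.mem_antidiagonal.mp hp
      rw [← this, pow_add]; ring
    rw [Finset.sum_congr rfl this, ← Finset.sum_mul, cb_conv, one_mul]
  rw [tsum_congr this, tsum_geometric_of_lt_one h0 h1]

lemma F_eq {y : ℝ} (h0 : 0 ≤ y) (h1 : y < 1) : F y = 1 / Real.sqrt (1 - y) := by
  have hF : 0 < F y := lt_of_lt_of_le one_pos (F_pos h0 h1)
  have hsq := F_sq h0 h1
  have h1y : (0:ℝ) < 1 - y := by linarith
  rw [eq_div_iff (by positivity)]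
  have h2 : (F y * Real.sqrt (1 - y)) ^ 2 = 1 := by
    rw [mul_pow, Real.sq_sqrt h1y.le, sq]
    rw [hsq]
    field_simp
  have h3 : 0 < F y * Real.sqrt (1 - y) := by positivity
  nlinarith [h2, h3]


noncomputable def q (k : ℕ) (s : ℝ) : ℝ := ∑ n ∈ range k, cb n * s ^ (2*n+1) / (2*n+1)

lemma arcsin_integral {s : ℝ} (h0 : 0 ≤ s) (h1 : s < 1) :
    ∫ x in (0:ℝ)..s, 1 / Real.sqrt (1 - x^2) = Real.arcsin s := by
  have huIcc : Set.uIcc (0:ℝ) s = Set.Icc 0 s := Set.uIcc_of_le h0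
  have hmem : ∀ x ∈ Set.uIcc (0:ℝ) s, -1 < x ∧ x < 1 := by
    intro x hx
    rw [huIcc, Set.mem_Icc] at hx
    constructor <;> nlinarith [hx.1, hx.2]
  have hderiv : ∀ x ∈ Set.uIcc (0:ℝ) s,
      HasDerivAt Real.arcsin (1 / Real.sqrt (1 - x^2)) x := by
    intro x hx
    obtain ⟨hx1, hx2⟩ := hmem x hx
    exact Real.hasDerivAt_arcsin (by linarith) (by linarith)
  have hcont : ContinuousOn (fun x => 1 / Real.sqrt (1 - x^2)) (Set.uIcc (0:ℝ) s) := by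
    apply ContinuousOn.div continuousOn_const
    · exact (Real.continuous_sqrt.comp (by continuity)).continuousOn
    · intro x hx
      obtain ⟨hx1, hx2⟩ := hmem x hx
      have : (0:ℝ) < 1 - x^2 := by nlinarith
      positivity
  rw [intervalIntegral.integral_eq_sub_of_hasDerivAt hderiv (hcont.intervalIntegrable)]
  simp [Real.arcsin_zero]

lemma integral_partial (k : ℕ) (s : ℝ) :
    ∫ x in (0:ℝ)..s, (∑ n ∈ range k, cb n * x ^ (2*n)) = q k s := by
  rw [intervalIntegral.integral_finset_sum]
  · refine Finset.sum_congr rfl (fun n _ => ?_)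
    rw [intervalIntegral.integral_const_mul, integral_pow]
    have hz : (0:ℝ) ^ (2*n+1) = 0 := zero_pow (by omega)
    rw [hz]
    push_cast
    ring
  · intro n _
    exact (continuous_const.mul (continuous_pow _)).intervalIntegrable _ _

lemma q_tendsto_lt {s : ℝ} (h0 : 0 ≤ s) (h1 : s < 1) :
    Tendsto (fun k => q k s) atTop (𝓝 (Real.arcsin s)) := by
  rw [← arcsin_integral h0 h1]
  have key : Tendsto (fun k => ∫ x in (0:ℝ)..s, (∑ n ∈ range k, cb n * x ^ (2*n))) atTop
      (𝓝 (∫ x in (0:ℝ)..s, 1 / Real.sqrt (1 - x^2))) := by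
    apply intervalIntegral.tendsto_integral_filter_of_dominated_convergence
      (bound := fun _ => 1 / Real.sqrt (1 - s^2))
    · exact Filter.Eventually.of_forall (fun k => Continuous.aestronglyMeasurable (by continuity))
    · refine Filter.Eventually.of_forall (fun k => MeasureTheory.ae_of_all _ (fun x hx => ?_))
      have hx' : 0 < x ∧ x ≤ s := by
        rw [Set.uIoc_of_le h0] at hx; exact ⟨hx.1, hx.2⟩
      have hxs : x^2 ≤ s^2 := by nlinarith [hx'.1, hx'.2]
      have hx0 : (0:ℝ) ≤ x^2 := sq_nonneg x
      have hx1 : x^2 < 1 := by nlinarith [hx'.1, hx'.2]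
      have hsum : ∑ n ∈ range k, cb n * x ^ (2*n) ≤ F (x^2) := by
        have : ∀ n, cb n * x ^ (2*n) = cb n * (x^2)^n := by
          intro n; rw [pow_mul]
        rw [Finset.sum_congr rfl (fun n _ => this n)]
        exact Summable.sum_le_tsum (range k) (fun n _ => mul_nonneg (cb_nonneg n) (pow_nonneg hx0 n))
          (summable_cb hx0 hx1)
      have hFle : F (x^2) ≤ 1 / Real.sqrt (1 - s^2) := by
        rw [F_eq hx0 hx1]
        have h1x : (0:ℝ) < 1 - x^2 := by linarith
        have h1s : (0:ℝ) < 1 - s^2 := by nlinarith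
        have h1s : (0:ℝ) < 1 - s^2 := by nlinarith
        have hmono : Real.sqrt (1 - s^2) ≤ Real.sqrt (1 - x^2) :=
          Real.sqrt_le_sqrt (by linarith)
        apply div_le_div_of_nonneg_left one_pos.le (by positivity) hmono
      have hnn : 0 ≤ ∑ n ∈ range k, cb n * x ^ (2*n) :=
        Finset.sum_nonneg (fun n _ => mul_nonneg (cb_nonneg n) (pow_nonneg hx'.1.le _))
      rw [Real.norm_eq_abs, abs_of_nonneg hnn]
      linarith
    · exact intervalIntegrable_const
    · refine MeasureTheory.ae_of_all _ (fun x hx => ?_)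
      have hx' : 0 < x ∧ x ≤ s := by
        rw [Set.uIoc_of_le h0] at hx; exact ⟨hx.1, hx.2⟩
      have hx0 : (0:ℝ) ≤ x^2 := sq_nonneg x
      have hx1 : x^2 < 1 := by nlinarith [hx'.1, hx'.2]
      have : Tendsto (fun k => ∑ n ∈ range k, cb n * (x^2) ^ n) atTop (𝓝 (F (x^2))) :=
        (summable_cb hx0 hx1).hasSum.tendsto_sum_nat
      rw [F_eq hx0 hx1] at this
      convert this using 2 with k
      exact Finset.sum_congr rfl (fun n _ => by rw [pow_mul])
  have := key
  simp only [integral_partial] at this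
  exact this

lemma q_nonneg_term (n : ℕ) {s : ℝ} (h0 : 0 ≤ s) : 0 ≤ cb n * s ^ (2*n+1) / (2*n+1) := by
  have := cb_nonneg n
  have : (0:ℝ) ≤ s ^ (2*n+1) := pow_nonneg h0 _
  positivity

lemma q_mono_k {s : ℝ} (h0 : 0 ≤ s) : Monotone (fun k => q k s) := by
  intro a b hab
  exact Finset.sum_le_sum_of_subset_of_nonneg (Finset.range_subset_range.mpr hab)
    (fun n _ _ => q_nonneg_term n h0)

lemma q_mono_s (k : ℕ) {s r : ℝ} (h0 : 0 ≤ s) (hsr : s ≤ r) : q k s ≤ q k r := by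
  refine Finset.sum_le_sum (fun n _ => ?_)
  have h1 : s ^ (2*n+1) ≤ r ^ (2*n+1) := pow_le_pow_left₀ h0 hsr _
  have hcb := cb_nonneg n
  gcongr

lemma q_le_arcsin {s : ℝ} (h0 : 0 ≤ s) (h1 : s < 1) (k : ℕ) : q k s ≤ Real.arcsin s := by
  refine ge_of_tendsto (q_tendsto_lt h0 h1) ?_
  filter_upwards [Filter.eventually_ge_atTop k] with m hm
  exact q_mono_k h0 hm

lemma q_cont (k : ℕ) : Continuous (fun s => q k s) := by
  unfold q
  exact continuous_finset_sum _ (fun n _ => by continuity)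

noncomputable def sm (m : ℕ) : ℝ := 1 - 1 / (m + 1)

lemma sm_mem (m : ℕ) : 0 ≤ sm m ∧ sm m < 1 := by
  have hpos : (0:ℝ) < (m:ℝ) + 1 := by positivity
  constructor
  · have h : 1 / ((m:ℝ) + 1) ≤ 1 := by
      rw [div_le_one hpos]; linarith [Nat.cast_nonneg (α := ℝ) m]
    unfold sm; linarith
  · have h : 0 < 1 / ((m:ℝ) + 1) := by positivity
    unfold sm; linarith

lemma sm_tendsto : Filter.Tendsto sm Filter.atTop (𝓝 1) := by
  have h : Filter.Tendsto (fun m : ℕ => 1 / ((m:ℝ) + 1)) Filter.atTop (𝓝 0) :=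
    tendsto_one_div_add_atTop_nhds_zero_nat
  have h2 := Filter.Tendsto.const_sub (1:ℝ) h
  rw [sub_zero] at h2
  unfold sm
  exact h2

lemma q_one_le (k : ℕ) : q k 1 ≤ Real.pi / 2 := by
  have hcont : Filter.Tendsto (fun m => q k (sm m)) Filter.atTop (𝓝 (q k 1)) :=
    ((q_cont k).continuousAt).tendsto.comp sm_tendsto
  refine le_of_tendsto hcont (Filter.Eventually.of_forall (fun m => ?_))
  calc q k (sm m) ≤ Real.arcsin (sm m) := q_le_arcsin (sm_mem m).1 (sm_mem m).2 k
    _ ≤ Real.pi / 2 := Real.arcsin_le_pi_div_two _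

lemma summable_q_one : Summable (fun n => cb n * 1 ^ (2*n+1) / (2*n+1 : ℝ)) := by
  apply summable_of_sum_range_le (c := Real.pi / 2) (fun n => q_nonneg_term n one_pos.le)
  intro k
  exact q_one_le k

lemma q_tendsto_one : Filter.Tendsto (fun k => q k 1) Filter.atTop (𝓝 (Real.arcsin 1)) := by
  set L := ∑' n, cb n * 1 ^ (2*n+1) / (2*n+1 : ℝ) with hL
  have htend : Filter.Tendsto (fun k => q k 1) Filter.atTop (𝓝 L) :=
    summable_q_one.hasSum.tendsto_sum_nat
  have hle : L ≤ Real.pi / 2 := le_of_tendsto htend (Filter.Eventually.of_forall q_one_le)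
  have hge : Real.pi / 2 ≤ L := by
    have harc : ∀ m, Real.arcsin (sm m) ≤ L := by
      intro m
      refine le_of_tendsto (q_tendsto_lt (sm_mem m).1 (sm_mem m).2)
        (Filter.Eventually.of_forall (fun k => ?_))
      calc q k (sm m) ≤ q k 1 := q_mono_s k (sm_mem m).1 (sm_mem m).2.le
        _ ≤ L := Summable.sum_le_tsum (Finset.range k) (fun n _ => q_nonneg_term n one_pos.le)
              summable_q_one
    have : Filter.Tendsto (fun m => Real.arcsin (sm m)) Filter.atTop (𝓝 (Real.arcsin 1)) :=
      (Real.continuous_arcsin.continuousAt).tendsto.comp sm_tendsto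
    rw [Real.arcsin_one] at this
    exact le_of_tendsto this (Filter.Eventually.of_forall harc)
  have : L = Real.pi / 2 := le_antisymm hle hge
  rw [Real.arcsin_one, ← this]
  exact htend

lemma q_tendsto {s : ℝ} (h0 : 0 ≤ s) (h1 : s ≤ 1) :
    Filter.Tendsto (fun k => q k s) Filter.atTop (𝓝 (Real.arcsin s)) := by
  rcases lt_or_eq_of_le h1 with h | h
  · exact q_tendsto_lt h0 h
  · rw [h]; exact q_tendsto_one


variable {N : ℕ}

def IsGram (M : Fin N → Fin N → ℝ) : Prop :=
  ∃ (k : ℕ) (v : Fin N → Fin k → ℝ), ∀ i j, M i j = ∑ l, v i l * v j l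

lemma IsGram.sum_nonneg {M : Fin N → Fin N → ℝ} (h : IsGram M) (c : Fin N → ℝ) :
    0 ≤ ∑ i, ∑ j, c i * c j * M i j := by
  obtain ⟨k, v, hv⟩ := h
  have h1 : ∀ i j : Fin N, c i * c j * M i j = ∑ l, (c i * v i l) * (c j * v j l) := by
    intro i j; rw [hv, Finset.mul_sum]; exact Finset.sum_congr rfl fun l _ => by ring
  have key : ∑ i, ∑ j, c i * c j * M i j = ∑ l, (∑ i, c i * v i l) * (∑ j, c j * v j l) := by
    calc ∑ i, ∑ j, c i * c j * M i j
        = ∑ i, ∑ j, ∑ l, (c i * v i l) * (c j * v j l) :=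
          Finset.sum_congr rfl fun i _ => Finset.sum_congr rfl fun j _ => h1 i j
      _ = ∑ i, ∑ l, ∑ j, (c i * v i l) * (c j * v j l) :=
          Finset.sum_congr rfl fun i _ => Finset.sum_comm
      _ = ∑ l, ∑ i, ∑ j, (c i * v i l) * (c j * v j l) := Finset.sum_comm
      _ = ∑ l, (∑ i, c i * v i l) * (∑ j, c j * v j l) :=
          Finset.sum_congr rfl fun l _ => by rw [Finset.sum_mul_sum]
  rw [key]
  exact Finset.sum_nonneg (fun l _ => mul_self_nonneg _)

lemma IsGram.one : IsGram (fun _ _ : Fin N => (1:ℝ)) :=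
  ⟨1, fun _ _ => 1, fun i j => by simp⟩

lemma IsGram.add {A B : Fin N → Fin N → ℝ} (hA : IsGram A) (hB : IsGram B) :
    IsGram (fun i j => A i j + B i j) := by
  obtain ⟨k, v, hv⟩ := hA
  obtain ⟨m, w, hw⟩ := hB
  refine ⟨k + m, fun i => Fin.append (v i) (w i), fun i j => ?_⟩
  dsimp only
  rw [Fin.sum_univ_add]
  simp only [Fin.append_left, Fin.append_right]
  rw [hv, hw]

lemma IsGram.mul {A B : Fin N → Fin N → ℝ} (hA : IsGram A) (hB : IsGram B) :
    IsGram (fun i j => A i j * B i j) := by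
  obtain ⟨k, v, hv⟩ := hA
  obtain ⟨m, w, hw⟩ := hB
  refine ⟨k * m, fun i l => v i (finProdFinEquiv.symm l).1 * w i (finProdFinEquiv.symm l).2,
    fun i j => ?_⟩
  dsimp only
  rw [hv, hw, Finset.sum_mul_sum]
  rw [Equiv.sum_comp finProdFinEquiv.symm
    (fun p : Fin k × Fin m => v i p.1 * w i p.2 * (v j p.1 * w j p.2))]
  rw [Fintype.sum_prod_type]
  exact Finset.sum_congr rfl (fun a _ => Finset.sum_congr rfl (fun b _ => by ring))

lemma IsGram.smul {A : Fin N → Fin N → ℝ} (hA : IsGram A) {α : ℝ} (hα : 0 ≤ α) :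
    IsGram (fun i j => α * A i j) := by
  obtain ⟨k, v, hv⟩ := hA
  refine ⟨k, fun i l => Real.sqrt α * v i l, fun i j => ?_⟩
  dsimp only
  rw [hv, Finset.mul_sum]
  refine Finset.sum_congr rfl (fun l _ => ?_)
  rw [show (Real.sqrt α * v i l) * (Real.sqrt α * v j l)
      = (Real.sqrt α * Real.sqrt α) * (v i l * v j l) from by ring,
    Real.mul_self_sqrt hα]

lemma IsGram.pow {A : Fin N → Fin N → ℝ} (hA : IsGram A) (n : ℕ) :
    IsGram (fun i j => (A i j) ^ n) := by
  induction n with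
  | zero => simpa using IsGram.one
  | succ n ih =>
    have := ih.mul hA
    simpa [pow_succ] using this

lemma IsGram.sum_range {m : ℕ} {A : ℕ → (Fin N → Fin N → ℝ)} (hA : ∀ n, IsGram (A n)) :
    IsGram (fun i j => ∑ n ∈ range m, A n i j) := by
  induction m with
  | zero => simpa using IsGram.one.smul (le_refl (0:ℝ)) |>.smul le_rfl |>.smul le_rfl |>.smul le_rfl
  | succ m ih =>
    have := ih.add (hA m)
    simpa [Finset.sum_range_succ] using this

lemma isGram_of_sym_pd {S : Fin N → Fin N → ℝ}
    (hsymm : ∀ i j, S i j = S j i)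
    (hpd : ∀ c : Fin N → ℝ, 0 ≤ ∑ i, ∑ j, c i * c j * S i j) : IsGram S := by
  classical
  let M : Matrix (Fin N) (Fin N) ℝ := Matrix.of (fun i j => S i j)
  have hM : M.PosSemidef := by
    refine Matrix.PosSemidef.of_dotProduct_mulVec_nonneg ?_ ?_
    · ext i j
      simp only [Matrix.conjTranspose_apply, Matrix.of_apply, star_trivial, M]
      exact hsymm j i
    · intro x
      have h := hpd x
      have : dotProduct (star x) (M.mulVec x) = ∑ i, ∑ j, x i * x j * S i j := by
        simp only [dotProduct, Matrix.mulVec, star_trivial, Matrix.of_apply, M]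
        rw [Finset.sum_congr rfl (fun i (_ : i ∈ univ) => Finset.mul_sum _ _ (x i))]
        exact Finset.sum_congr rfl fun i _ => Finset.sum_congr rfl fun j _ => by ring
      rw [this]
      exact h
  obtain ⟨m, v, hv⟩ := Matrix.posSemidef_iff_eq_sum_vecMulVec.mp hM
  refine ⟨m, fun i l => v l i, fun i j => ?_⟩
  have h' : S i j = ∑ l, v l i * v l j := by
    have h2 : M i j = (∑ l, Matrix.vecMulVec (v l) (star (v l))) i j := by rw [hv]
    simpa [M, Matrix.sum_apply, Matrix.vecMulVec_apply, star_trivial] using h2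
  dsimp only
  exact h'


section MeasurePart
variable {Ω : Type*} [MeasurableSpace Ω] {μ : Measure Ω}

lemma sqrt_mul_le_add {a b : ℝ} (ha : 0 ≤ a) (hb : 0 ≤ b) :
    Real.sqrt (a * b) ≤ (a + b) / 2 := by
  rw [Real.sqrt_mul ha]
  nlinarith [sq_nonneg (Real.sqrt a - Real.sqrt b), Real.sq_sqrt ha, Real.sq_sqrt hb,
    Real.sqrt_nonneg a, Real.sqrt_nonneg b]

lemma integrable_sqrt_mul {f g : Ω → ℝ} (hf : Measurable f) (hg : Measurable g)
    (hf0 : ∀ x, 0 ≤ f x) (hg0 : ∀ x, 0 ≤ g x)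
    (hfi : Integrable f μ) (hgi : Integrable g μ) :
    Integrable (fun x => Real.sqrt (f x * g x)) μ := by
  refine Integrable.mono' ((hfi.add hgi).div_const 2)
    ((hf.mul hg).sqrt.aestronglyMeasurable) (ae_of_all _ (fun x => ?_))
  rw [Real.norm_eq_abs, abs_of_nonneg (Real.sqrt_nonneg _)]
  exact sqrt_mul_le_add (hf0 x) (hg0 x)
end MeasurePart


/-- For `t > 0`, the Persistence Fisher kernel
`k_PF(ρ, ρ') = exp (-t * arccos (∫ √(ρ ρ') dμ))` is positive definite on the set of
probability densities on a measure space. -/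
theorem persistence_fisher_kernel_pos_def
    {Ω : Type*} [MeasurableSpace Ω] (μ : Measure Ω)
    (t : ℝ) (ht : 0 < t)
    (N : ℕ) (ρ : Fin N → Ω → ℝ)
    (hm : ∀ i, Measurable (ρ i)) (h0 : ∀ i x, 0 ≤ ρ i x)
    (hi : ∀ i, Integrable (ρ i) μ) (h1 : ∀ i, ∫ x, ρ i x ∂μ = 1)
    (c : Fin N → ℝ) :
    0 ≤ ∑ i, ∑ j, c i * c j *
        Real.exp (-t * Real.arccos (∫ x, Real.sqrt (ρ i x * ρ j x) ∂μ)) := by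
  set S : Fin N → Fin N → ℝ := fun i j => ∫ x, Real.sqrt (ρ i x * ρ j x) ∂μ with hS
  have hint : ∀ i j, Integrable (fun x => Real.sqrt (ρ i x * ρ j x)) μ := fun i j =>
    integrable_sqrt_mul (hm i) (hm j) (h0 i) (h0 j) (hi i) (hi j)
  have hsymm : ∀ i j, S i j = S j i := fun i j =>
    integral_congr_ae (ae_of_all _ (fun x => by dsimp only; rw [mul_comm]))
  have hpd : ∀ d : Fin N → ℝ, 0 ≤ ∑ i, ∑ j, d i * d j * S i j := by
    intro d
    have key : ∑ i, ∑ j, d i * d j * S i j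
        = ∫ x, (∑ i, d i * Real.sqrt (ρ i x)) ^ 2 ∂μ := by
      have step1 : ∀ i j : Fin N, d i * d j * S i j
          = ∫ x, d i * d j * Real.sqrt (ρ i x * ρ j x) ∂μ := fun i j =>
        (integral_const_mul _ _).symm
      have step2 : ∀ i : Fin N, ∑ j, d i * d j * S i j
          = ∫ x, ∑ j, d i * d j * Real.sqrt (ρ i x * ρ j x) ∂μ := by
        intro i
        rw [Finset.sum_congr rfl (fun j _ => step1 i j)]
        exact (integral_finset_sum _ (fun j _ => ((hint i j).const_mul _))).symm
      rw [Finset.sum_congr rfl (fun i _ => step2 i)]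
      rw [← integral_finset_sum _ (fun i _ =>
        integrable_finset_sum _ (fun j _ => ((hint i j).const_mul _)))]
      refine integral_congr_ae (ae_of_all _ (fun x => ?_))
      dsimp only
      rw [sq, Finset.sum_mul_sum]
      refine Finset.sum_congr rfl (fun i _ => Finset.sum_congr rfl (fun j _ => ?_))
      rw [Real.sqrt_mul (h0 i x)]
      ring
    rw [key]
    exact integral_nonneg (fun x => sq_nonneg _)
  have hdiag : ∀ i, S i i = 1 := by
    intro i
    have : S i i = ∫ x, ρ i x ∂μ := by
      refine integral_congr_ae (ae_of_all _ (fun x => ?_))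
      dsimp only
      exact Real.sqrt_mul_self (h0 i x)
    rw [this, h1 i]
  have hS0 : ∀ i j, 0 ≤ S i j := fun i j =>
    integral_nonneg (fun x => Real.sqrt_nonneg _)
  have hS1 : ∀ i j, S i j ≤ 1 := by
    intro i j
    have hb : S i j ≤ ∫ x, (ρ i x + ρ j x) / 2 ∂μ := by
      refine integral_mono (hint i j) (((hi i).add (hi j)).div_const 2) (fun x => ?_)
      exact sqrt_mul_le_add (h0 i x) (h0 j x)
    have : ∫ x, (ρ i x + ρ j x) / 2 ∂μ = 1 := by
      rw [integral_div, integral_add (hi i) (hi j), h1 i, h1 j]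
      norm_num
    linarith
  have hSG : IsGram S := isGram_of_sym_pd hsymm hpd
  -- rewrite kernel
  have hker : ∀ i j, Real.exp (-t * Real.arccos (S i j))
      = Real.exp (-(t * (Real.pi / 2))) * Real.exp (t * Real.arcsin (S i j)) := by
    intro i j
    rw [Real.arccos_eq_pi_div_two_sub_arcsin, ← Real.exp_add]
    ring_nf
  calc (0:ℝ) ≤ Real.exp (-(t * (Real.pi / 2)))
      * ∑ i, ∑ j, c i * c j * Real.exp (t * Real.arcsin (S i j)) := by
        refine mul_nonneg (Real.exp_pos _).le ?_
        -- limit over k of exp (t * q k (S i j))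
        have hlim : Tendsto (fun k => ∑ i, ∑ j, c i * c j * Real.exp (t * q k (S i j)))
            atTop (𝓝 (∑ i, ∑ j, c i * c j * Real.exp (t * Real.arcsin (S i j)))) := by
          refine tendsto_finset_sum _ (fun i _ => tendsto_finset_sum _ (fun j _ => ?_))
          have h1' : Tendsto (fun k => t * q k (S i j)) atTop
              (𝓝 (t * Real.arcsin (S i j))) :=
            (q_tendsto (hS0 i j) (hS1 i j)).const_mul t
          exact (((Real.continuous_exp.continuousAt).tendsto.comp h1').const_mul _)
        refine ge_of_tendsto' hlim (fun k => ?_)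
        -- for fixed k: limit over m of partial exp sums
        have hqG : IsGram (fun i j => t * q k (S i j)) := by
          have e1 : (fun i j : Fin N => q k (S i j))
              = (fun i j : Fin N => ∑ n ∈ range k,
                  (cb n / (2*(n:ℝ)+1)) * (S i j) ^ (2*n+1)) := by
            funext i j
            refine Finset.sum_congr rfl (fun n _ => ?_)
            push_cast
            ring
          have hsum : IsGram (fun i j : Fin N => ∑ n ∈ range k,
              (cb n / (2*(n:ℝ)+1)) * (S i j) ^ (2*n+1)) := by
            refine IsGram.sum_range (fun n => ?_)
            refine (hSG.pow (2*n+1)).smul ?_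
            have := cb_nonneg n
            positivity
          have : IsGram (fun i j : Fin N => q k (S i j)) := by rw [e1]; exact hsum
          exact this.smul ht.le
        have hexp : ∀ y : ℝ, Tendsto (fun m => ∑ n ∈ range m, y ^ n / (Nat.factorial n))
            atTop (𝓝 (Real.exp y)) := by
          intro y
          have := NormedSpace.expSeries_div_hasSum_exp (𝔸 := ℝ) y
          rw [← Real.exp_eq_exp_ℝ] at this
          exact this.tendsto_sum_nat
        have hlim2 : Tendsto (fun m => ∑ i, ∑ j, c i * c j *
            (∑ n ∈ range m, (t * q k (S i j)) ^ n / (Nat.factorial n)))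
            atTop (𝓝 (∑ i, ∑ j, c i * c j * Real.exp (t * q k (S i j)))) := by
          refine tendsto_finset_sum _ (fun i _ => tendsto_finset_sum _ (fun j _ => ?_))
          exact (hexp (t * q k (S i j))).const_mul _
        refine ge_of_tendsto' hlim2 (fun m => ?_)
        have hPm : IsGram (fun i j : Fin N =>
            ∑ n ∈ range m, (t * q k (S i j)) ^ n / (Nat.factorial n)) := by
          have e2 : (fun i j : Fin N =>
              ∑ n ∈ range m, (t * q k (S i j)) ^ n / (Nat.factorial n))
              = (fun i j : Fin N => ∑ n ∈ range m,
                  ((1:ℝ) / (Nat.factorial n)) * ((fun i j => t * q k (S i j)) i j) ^ n) := by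
            funext i j
            refine Finset.sum_congr rfl (fun n _ => ?_)
            ring
          rw [e2]
          refine IsGram.sum_range (fun n => ?_)
          refine (hqG.pow n).smul ?_
          positivity
        exact hPm.sum_nonneg c
    _ = ∑ i, ∑ j, c i * c j * Real.exp (-t * Real.arccos (S i j)) := by
        rw [Finset.mul_sum]
        refine Finset.sum_congr rfl (fun i _ => ?_)
        rw [Finset.mul_sum]
        refine Finset.sum_congr rfl (fun j _ => ?_)
        rw [hker i j]
        ring
end

section
/- Let m ∈ ℕ with m ≥ 1 and let t > 0 be a real number. For points of the probability simplex in ℝ^m, i.e. vectors p : Fin m → ℝ with p(k) ≥ 0 for all k and ∑_{k} p(k) = 1, define k(p, q) = exp(-t · arccos(∑_{k} √(p(k) · q(k)))). Then k is a positive definite kernel on the probability simplex: for every finite family p_1, …, p_N of points of the simplex and every family of real coefficients c_1, …, c_N, one has ∑_{i=1}^N ∑_{j=1}^N c_i c_j k(p_i, p_j) ≥ 0. -/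
open Real Finset Filter Topology

namespace PFK

/-! ### Coefficients of the binomial series for `(1 - y)⁻¹ᐟ²` -/

noncomputable def C (k : ℕ) : ℝ := (Nat.centralBinom k : ℝ) / 4 ^ k

lemma C_pos (k : ℕ) : 0 < C k :=
  div_pos (by exact_mod_cast Nat.centralBinom_pos k) (by positivity)

lemma centralBinom_le (k : ℕ) : Nat.centralBinom k ≤ 4 ^ k := by
  have h : Nat.centralBinom k ≤ ∑ i ∈ Finset.range (2 * k + 1), (2 * k).choose i := by
    refine Finset.single_le_sum (f := fun i => (2 * k).choose i) (fun i _ => Nat.zero_le _) ?_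
    simp [Finset.mem_range]; omega
  have h2 := Nat.sum_range_choose (2 * k)
  calc Nat.centralBinom k ≤ 2 ^ (2 * k) := by rw [← h2]; exact h
    _ = 4 ^ k := by rw [pow_mul]; norm_num

lemma C_le_one (k : ℕ) : C k ≤ 1 := by
  rw [C, div_le_one (by positivity)]
  exact_mod_cast centralBinom_le k

lemma C_succ (k : ℕ) : 2 * ((k : ℝ) + 1) * C (k + 1) = (2 * k + 1) * C k := by
  have h := Nat.succ_mul_centralBinom_succ k
  have h' : ((k : ℝ) + 1) * (Nat.centralBinom (k + 1) : ℝ)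
      = 2 * (2 * k + 1) * Nat.centralBinom k := by exact_mod_cast h
  rw [C, C]
  field_simp
  linear_combination (4:ℝ)^k * 2 * h'

/-! ### The binomial series `S y = ∑ C k * y ^ k = (1 - y)⁻¹ᐟ²` -/

noncomputable def S (y : ℝ) : ℝ := ∑' k : ℕ, C k * y ^ k

lemma summable_S {y : ℝ} (hy : |y| < 1) : Summable (fun k : ℕ => C k * y ^ k) := by
  refine Summable.of_norm_bounded (summable_geometric_of_lt_one (abs_nonneg y) hy) ?_
  intro k
  rw [norm_mul, norm_pow, Real.norm_eq_abs, Real.norm_eq_abs,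
    abs_of_pos (C_pos k)]
  exact mul_le_of_le_one_left (by positivity) (C_le_one k)

lemma summable_aux {r : ℝ} (h0 : 0 ≤ r) (h1 : r < 1) :
    Summable (fun n : ℕ => (n : ℝ) * r ^ (n - 1)) := by
  have hg : Summable (fun n : ℕ => (n : ℝ) ^ 1 * r ^ n) :=
    summable_pow_mul_geometric_of_norm_lt_one 1
      (by rwa [Real.norm_eq_abs, abs_of_nonneg h0])
  have h2 : Summable (fun n : ℕ => ((n : ℝ) + 1) * r ^ n) := by
    have := hg.add (summable_geometric_of_lt_one h0 h1)
    refine this.congr fun n => ?_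
    ring
  rw [← summable_nat_add_iff 1]
  refine h2.congr fun n => ?_
  simp

lemma summable_D {y : ℝ} (hy : |y| < 1) :
    Summable (fun k : ℕ => C k * ((k : ℝ) * y ^ (k - 1))) := by
  refine Summable.of_norm_bounded (summable_aux (abs_nonneg y) hy) ?_
  intro k
  rw [norm_mul, norm_mul, Real.norm_eq_abs, Real.norm_eq_abs, Real.norm_eq_abs,
    abs_of_pos (C_pos k), Nat.abs_cast, abs_pow]
  exact mul_le_of_le_one_left (by positivity) (C_le_one k)

lemma hasDerivAt_S {y : ℝ} (hy : |y| < 1) :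
    HasDerivAt S (∑' k : ℕ, C k * ((k : ℝ) * y ^ (k - 1))) y := by
  set r : ℝ := (1 + |y|) / 2 with hr
  have hy0 := abs_nonneg y
  have hr0 : 0 < r := by rw [hr]; linarith
  have hr1 : r < 1 := by rw [hr]; linarith
  have hyr : |y| < r := by rw [hr]; linarith
  refine hasDerivAt_tsum_of_isPreconnected
    (u := fun n : ℕ => (n : ℝ) * r ^ (n - 1)) (t := Set.Ioo (-r) r)
    (g := fun k z => C k * z ^ k) (g' := fun k z => C k * ((k:ℝ) * z ^ (k - 1)))
    (y₀ := 0)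
    (summable_aux hr0.le hr1) isOpen_Ioo isPreconnected_Ioo
    (fun n z _ => (hasDerivAt_pow n z).const_mul (C n)) ?_ ?_ ?_ ?_
  · intro n z hz
    have hzr : |z| ≤ r := by
      rw [abs_le]
      exact ⟨hz.1.le, hz.2.le⟩
    rw [norm_mul, norm_mul, Real.norm_eq_abs, Real.norm_eq_abs, Real.norm_eq_abs,
      abs_of_pos (C_pos n), Nat.abs_cast, abs_pow]
    have h1 : |z| ^ (n - 1) ≤ r ^ (n - 1) := pow_le_pow_left₀ (abs_nonneg z) hzr _
    calc C n * ((n:ℝ) * |z| ^ (n - 1)) ≤ 1 * ((n:ℝ) * r ^ (n - 1)) := by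
          apply mul_le_mul (C_le_one n) (by gcongr) (by positivity) zero_le_one
      _ = (n:ℝ) * r ^ (n - 1) := one_mul _
  · exact ⟨by linarith, hr0⟩
  · refine summable_of_ne_finset_zero (s := {0}) fun n hn => ?_
    have : n ≠ 0 := by simpa using hn
    simp [zero_pow this]
  · rw [Set.mem_Ioo, ← abs_lt]; exact hyr

lemma two_mul_D_eq {y : ℝ} (hy : |y| < 1) :
    2 * (1 - y) * (∑' k : ℕ, C k * ((k : ℝ) * y ^ (k - 1))) = S y := by
  set f : ℕ → ℝ := fun k => C k * ((k : ℝ) * y ^ (k - 1)) with hf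
  have sD := summable_D hy
  have sS := summable_S hy
  set D : ℝ := ∑' k, f k with hD
  have hyD : y * D = ∑' k : ℕ, C k * ((k : ℝ) * y ^ k) := by
    rw [hD, ← tsum_mul_left]
    refine tsum_congr fun k => ?_
    rcases k with _ | k
    · simp [hf]
    · simp only [hf, Nat.add_sub_cancel]
      rw [pow_succ]
      push_cast
      ring
  have hDshift : D = ∑' k : ℕ, C (k + 1) * (((k : ℝ) + 1) * y ^ k) := by
    rw [hD, Summable.tsum_eq_zero_add sD]
    have h0 : C 0 * (((0:ℕ):ℝ) * y ^ (0 - 1)) = 0 := by simp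
    rw [h0, zero_add]
    refine tsum_congr fun k => ?_
    simp only [Nat.add_sub_cancel]
    push_cast
    ring
  have s1 : Summable (fun k : ℕ => C (k + 1) * (((k : ℝ) + 1) * y ^ k)) := by
    have := (summable_nat_add_iff 1).mpr sD
    refine this.congr fun k => ?_
    simp [hf]
  have s2 : Summable (fun k : ℕ => C k * ((k : ℝ) * y ^ k)) := by
    have := sD.mul_left y
    refine this.congr fun k => ?_
    rcases k with _ | k
    · simp [hf]
    · simp only [hf, Nat.add_sub_cancel]
      rw [pow_succ]
      push_cast
      ring
  have expand : 2 * (1 - y) * D = 2 * D - 2 * (y * D) := by ring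
  rw [expand, hyD, hDshift, ← tsum_mul_left, ← tsum_mul_left, ← Summable.tsum_sub
    (s1.mul_left 2) (s2.mul_left 2)]
  rw [S]
  refine tsum_congr fun k => ?_
  linear_combination y ^ k * C_succ k

lemma S_zero : S 0 = 1 := by
  rw [S, tsum_eq_single 0 (fun k hk => by simp [zero_pow hk])]
  simp [C, Nat.centralBinom_zero]

lemma hasDerivAt_F {x : ℝ} (hx : |x| < 1) :
    HasDerivAt (fun z => (1 - z) * S z ^ 2) 0 x := by
  set D : ℝ := ∑' k : ℕ, C k * ((k : ℝ) * x ^ (k - 1)) with hDdef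
  have h1 : HasDerivAt (fun z : ℝ => 1 - z) (-1) x := by
    simpa using (hasDerivAt_id x).const_sub 1
  have h2 : HasDerivAt (fun z => S z ^ 2) (2 * S x ^ 1 * D) x := by
    simpa using (hasDerivAt_S hx).fun_pow 2
  have h3 := h1.mul h2
  have key := two_mul_D_eq hx
  have : -1 * S x ^ 2 + (1 - x) * (2 * S x ^ 1 * D) = 0 := by
    rw [pow_one]
    linear_combination S x * key
  rwa [this] at h3

lemma S_sq {y : ℝ} (h0 : 0 ≤ y) (h1 : y < 1) : (1 - y) * S y ^ 2 = 1 := by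
  have habs : ∀ x ∈ Set.Icc (0:ℝ) y, |x| < 1 := fun x hx => by
    rw [abs_lt]; constructor <;> [linarith [hx.1]; linarith [hx.2]]
  have hcont : ContinuousOn (fun z => (1 - z) * S z ^ 2) (Set.Icc 0 y) :=
    fun x hx => ((hasDerivAt_F (habs x hx)).continuousAt).continuousWithinAt
  have hderiv : ∀ x ∈ Set.Ico (0:ℝ) y,
      HasDerivWithinAt (fun z => (1 - z) * S z ^ 2) 0 (Set.Ici x) x :=
    fun x hx => (hasDerivAt_F (habs x ⟨hx.1, hx.2.le⟩)).hasDerivWithinAt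
  have := constant_of_has_deriv_right_zero hcont hderiv y (Set.right_mem_Icc.mpr h0)
  rw [this]
  rw [S_zero]; norm_num

lemma S_nonneg {y : ℝ} (h0 : 0 ≤ y) : 0 ≤ S y :=
  tsum_nonneg fun k => mul_nonneg (C_pos k).le (pow_nonneg h0 k)

lemma S_eq {y : ℝ} (h0 : 0 ≤ y) (h1 : y < 1) : S y = 1 / Real.sqrt (1 - y) := by
  have h1y : (0:ℝ) < 1 - y := by linarith
  have hsq := S_sq h0 h1
  have hS2 : S y ^ 2 = 1 / (1 - y) := by field_simp at hsq ⊢; linarith [hsq]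
  rw [← Real.sqrt_sq (S_nonneg h0), hS2, one_div, Real.sqrt_inv, one_div]

/-! ### The arcsin power series on `[0, 1]` -/

noncomputable def a (k : ℕ) : ℝ := C k / (2 * k + 1)

lemma a_pos (k : ℕ) : 0 < a k := div_pos (C_pos k) (by positivity)

lemma a_mul : ∀ k : ℕ, a k * (2 * (k:ℝ) + 1) = C k := fun k => by
  rw [a]; field_simp

lemma a_le_one (k : ℕ) : a k ≤ 1 := by
  have h : (1:ℝ) ≤ 2 * (k:ℝ) + 1 := by
    have : (0:ℝ) ≤ (k:ℝ) := Nat.cast_nonneg k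
    linarith
  rw [a, div_le_one (by positivity)]
  calc C k ≤ 1 := C_le_one k
    _ ≤ 2 * (k:ℝ) + 1 := h

noncomputable def A (u : ℝ) : ℝ := ∑' k : ℕ, a k * u ^ (2 * k + 1)

lemma summable_A {u : ℝ} (hu : |u| < 1) : Summable (fun k : ℕ => a k * u ^ (2 * k + 1)) := by
  refine Summable.of_norm_bounded
    (summable_geometric_of_lt_one (by positivity) (by nlinarith [abs_nonneg u] : |u|^2 < 1)) ?_
  intro k
  rw [norm_mul, norm_pow, Real.norm_eq_abs, Real.norm_eq_abs, abs_of_pos (a_pos k)]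
  calc a k * |u| ^ (2 * k + 1) ≤ 1 * |u| ^ (2 * k) := by
        apply mul_le_mul (a_le_one k) ?_ (by positivity) zero_le_one
        rw [pow_succ]
        exact mul_le_of_le_one_right (by positivity) hu.le
    _ = (|u| ^ 2) ^ k := by rw [one_mul, ← pow_mul]

lemma hasDerivAt_A {x : ℝ} (hx : |x| < 1) : HasDerivAt A (S (x ^ 2)) x := by
  set r : ℝ := (1 + |x|) / 2 with hr
  have hx0 := abs_nonneg x
  have hr0 : 0 < r := by rw [hr]; linarith
  have hr1 : r < 1 := by rw [hr]; linarith
  have hxr : |x| < r := by rw [hr]; linarith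
  have key : HasDerivAt A
      (∑' k : ℕ, a k * (((2 * k + 1 : ℕ) : ℝ) * x ^ (2 * k + 1 - 1))) x := by
    refine hasDerivAt_tsum_of_isPreconnected
      (u := fun k : ℕ => (r ^ 2) ^ k) (t := Set.Ioo (-r) r)
      (g := fun k z => a k * z ^ (2 * k + 1))
      (g' := fun k z => a k * (((2 * k + 1 : ℕ) : ℝ) * z ^ (2 * k + 1 - 1)))
      (y₀ := 0)
      (summable_geometric_of_lt_one (by positivity) (by nlinarith))
      isOpen_Ioo isPreconnected_Ioo
      (fun k z _ => (hasDerivAt_pow (2 * k + 1) z).const_mul (a k)) ?_ ?_ ?_ ?_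
    · intro k z hz
      have hzr : |z| ≤ r := by rw [abs_le]; exact ⟨hz.1.le, hz.2.le⟩
      rw [norm_mul, norm_mul, Real.norm_eq_abs, Real.norm_eq_abs, Real.norm_eq_abs,
        abs_of_pos (a_pos k), Nat.abs_cast, abs_pow, Nat.add_sub_cancel]
      have hcast : ((2 * k + 1 : ℕ) : ℝ) = 2 * (k:ℝ) + 1 := by push_cast; ring
      calc a k * (((2 * k + 1 : ℕ) : ℝ) * |z| ^ (2 * k))
          = C k * |z| ^ (2 * k) := by rw [hcast, ← a_mul k]; ring
        _ ≤ 1 * r ^ (2 * k) := by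
            apply mul_le_mul (C_le_one k) (pow_le_pow_left₀ (abs_nonneg z) hzr _)
              (by positivity) zero_le_one
        _ = (r ^ 2) ^ k := by rw [one_mul, ← pow_mul, mul_comm 2 k]
    · exact ⟨by linarith, hr0⟩
    · refine summable_of_ne_finset_zero (s := (∅ : Finset ℕ)) fun k _ => ?_
      simp
    · rw [Set.mem_Ioo, ← abs_lt]; exact hxr
  have hval : (∑' k : ℕ, a k * (((2 * k + 1 : ℕ) : ℝ) * x ^ (2 * k + 1 - 1))) = S (x ^ 2) := by
    rw [S]
    refine tsum_congr fun k => ?_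
    have hcast : ((2 * k + 1 : ℕ) : ℝ) = 2 * (k:ℝ) + 1 := by push_cast; ring
    rw [Nat.add_sub_cancel, pow_mul, hcast, ← a_mul k]
    ring
  rwa [hval] at key

lemma A_zero : A 0 = 0 := by
  rw [A]
  have : ∀ k : ℕ, a k * (0:ℝ) ^ (2 * k + 1) = 0 := fun k => by
    rw [zero_pow (Nat.succ_ne_zero _), mul_zero]
  simp only [this, tsum_zero]

lemma A_eq {u : ℝ} (h0 : 0 ≤ u) (h1 : u < 1) : A u = Real.arcsin u := by
  have habs : ∀ x ∈ Set.Icc (0:ℝ) u, |x| < 1 := fun x hx => by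
    rw [abs_lt]; exact ⟨by linarith [hx.1], by linarith [hx.2]⟩
  have hd : ∀ x ∈ Set.Icc (0:ℝ) u, HasDerivAt (fun z => A z - Real.arcsin z) 0 x := by
    intro x hx
    have hxa := habs x hx
    have hx1 : x ≠ 1 := by rw [abs_lt] at hxa; linarith [hxa.2]
    have hxm1 : x ≠ -1 := by rw [abs_lt] at hxa; linarith [hxa.1]
    have harc := Real.hasDerivAt_arcsin hxm1 hx1
    have hA := hasDerivAt_A hxa
    have hx2 : x ^ 2 < 1 := by nlinarith [abs_nonneg x, abs_lt.mp hxa]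
    have hzero : S (x ^ 2) - 1 / Real.sqrt (1 - x ^ 2) = 0 := by
      rw [S_eq (sq_nonneg x) hx2]; ring
    have hsub := hA.sub harc
    rwa [hzero] at hsub
  have hcont : ContinuousOn (fun z => A z - Real.arcsin z) (Set.Icc 0 u) :=
    fun x hx => ((hd x hx).continuousAt).continuousWithinAt
  have := constant_of_has_deriv_right_zero hcont
    (fun x hx => (hd x ⟨hx.1, hx.2.le⟩).hasDerivWithinAt) u (Set.right_mem_Icc.mpr h0)
  simp only [A_zero, Real.arcsin_zero, sub_zero, sub_self] at this
  linarith [this]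

lemma sum_range_a_le (n : ℕ) : ∑ k ∈ Finset.range n, a k ≤ π / 2 := by
  have htend : Tendsto (fun v : ℝ => ∑ k ∈ Finset.range n, a k * v ^ (2 * k + 1))
      (𝓝[<] 1) (𝓝 (∑ k ∈ Finset.range n, a k * 1 ^ (2 * k + 1))) := by
    refine Tendsto.mono_left ?_ nhdsWithin_le_nhds
    exact (Continuous.tendsto (by continuity) 1)
  have hev : ∀ᶠ v in 𝓝[<] (1:ℝ), ∑ k ∈ Finset.range n, a k * v ^ (2 * k + 1) ≤ π / 2 := by
    filter_upwards [Ioo_mem_nhdsLT_of_mem (Set.mem_Ioc.mpr ⟨zero_lt_one, le_refl 1⟩)]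
      with v hv
    have hv0 : 0 ≤ v := hv.1.le
    have hv1 : v < 1 := hv.2
    have habs : |v| < 1 := by rwa [abs_of_nonneg hv0]
    calc ∑ k ∈ Finset.range n, a k * v ^ (2 * k + 1)
        ≤ A v := Summable.sum_le_tsum _ (fun k _ => mul_nonneg (a_pos k).le (pow_nonneg hv0 _))
          (summable_A habs)
      _ = Real.arcsin v := A_eq hv0 hv1
      _ ≤ π / 2 := Real.arcsin_le_pi_div_two v
  have := le_of_tendsto htend hev
  simpa using this

lemma summable_a : Summable a :=
  summable_of_sum_range_le (fun k => (a_pos k).le) sum_range_a_le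

lemma tsum_a : ∑' k, a k = π / 2 := by
  refine le_antisymm (tsum_le_of_sum_range_le (fun k => (a_pos k).le) sum_range_a_le) ?_
  have htend : Tendsto Real.arcsin (𝓝[<] (1:ℝ)) (𝓝 (π / 2)) := by
    have := (Real.continuous_arcsin.tendsto 1).mono_left (nhdsWithin_le_nhds (s := Set.Iio 1))
    rwa [Real.arcsin_one] at this
  refine le_of_tendsto htend ?_
  filter_upwards [Ioo_mem_nhdsLT_of_mem (Set.mem_Ioc.mpr ⟨zero_lt_one, le_refl 1⟩)]
    with v hv
  have hv0 : 0 ≤ v := hv.1.le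
  have habs : |v| < 1 := by rw [abs_of_nonneg hv0]; exact hv.2
  calc Real.arcsin v = A v := (A_eq hv0 hv.2).symm
    _ ≤ ∑' k, a k := by
        refine Summable.tsum_le_tsum (fun k => ?_) (summable_A habs) summable_a
        calc a k * v ^ (2 * k + 1) ≤ a k * 1 :=
              mul_le_mul_of_nonneg_left (pow_le_one₀ hv0 hv.2.le) (a_pos k).le
          _ = a k := mul_one _

lemma hasSum_arcsin {u : ℝ} (h0 : 0 ≤ u) (h1 : u ≤ 1) :
    HasSum (fun k : ℕ => a k * u ^ (2 * k + 1)) (Real.arcsin u) := by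
  rcases eq_or_lt_of_le h1 with heq | hlt
  · subst heq
    rw [Real.arcsin_one]
    have : (fun k : ℕ => a k * (1:ℝ) ^ (2 * k + 1)) = a := by
      funext k; simp
    rw [this, ← tsum_a]
    exact summable_a.hasSum
  · have habs : |u| < 1 := by rwa [abs_of_nonneg h0]
    have := (summable_A habs).hasSum
    rwa [show ∑' k : ℕ, a k * u ^ (2 * k + 1) = Real.arcsin u from A_eq h0 hlt] at this

/-! ### Positive-definiteness combinatorics -/

lemma hasSum_pi_prod {f : ℕ → ℝ} (hf : ∀ k, 0 ≤ f k) {s : ℝ} (h : HasSum f s) :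
    ∀ n : ℕ, HasSum (fun g : Fin n → ℕ => ∏ l, f (g l)) (s ^ n) := by
  intro n
  induction n with
  | zero =>
      have h1 : ∀ g : Fin 0 → ℕ, (∏ l, f (g l)) = 1 := fun g => by simp
      simp only [h1, pow_zero]
      have := hasSum_single (f := fun _ : Fin 0 → ℕ => (1:ℝ)) default
        (fun g hg => absurd (Subsingleton.elim g default) hg)
      simpa using this
  | succ n ih =>
      have hsumm : Summable (fun p : ℕ × (Fin n → ℕ) => f p.1 * ∏ l, f (p.2 l)) := by
        refine Summable.mul_of_nonneg (f := f)
          (g := fun g : Fin n → ℕ => ∏ l, f (g l)) h.summable ih.summable ?_ ?_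
        · exact fun k => hf k
        · exact fun g => Finset.prod_nonneg fun l _ => hf (g l)
      have hmul := HasSum.mul h ih hsumm
      rw [show s ^ (n+1) = s * s ^ n from pow_succ' s n]
      refine (Equiv.hasSum_iff (Fin.consEquiv (fun _ : Fin (n+1) => ℕ))
        (f := fun g : Fin (n+1) → ℕ => ∏ l, f (g l)) (a := s * s ^ n)).mp ?_
      have hfun : ((fun g : Fin (n+1) → ℕ => ∏ l, f (g l)) ∘
            ⇑(Fin.consEquiv fun _ : Fin (n+1) => ℕ))
          = fun p : ℕ × (Fin n → ℕ) => f p.1 * ∏ l, f (p.2 l) := by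
        funext p
        simp [Fin.consEquiv, Fin.prod_univ_succ]
      rw [hfun]
      exact hmul

lemma pow_pd {N m : ℕ} (x : Fin N → Fin m → ℝ) (c : Fin N → ℝ) (n : ℕ) :
    0 ≤ ∑ i, ∑ j, c i * c j * (∑ k, x i k * x j k) ^ n := by
  have expand : ∀ i j : Fin N, (∑ k, x i k * x j k) ^ n
      = ∑ g ∈ Fintype.piFinset (fun _ : Fin n => (univ : Finset (Fin m))),
          (∏ l, x i (g l)) * (∏ l, x j (g l)) := by
    intro i j
    have h1 : (∑ k, x i k * x j k) ^ n = ∏ _l : Fin n, (∑ k, x i k * x j k) := by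
      rw [Finset.prod_const, Finset.card_univ, Fintype.card_fin]
    rw [h1, Finset.prod_univ_sum]
    exact Finset.sum_congr rfl fun g _ => by rw [← Finset.prod_mul_distrib]
  have key : ∑ i, ∑ j, c i * c j * (∑ k, x i k * x j k) ^ n
      = ∑ g ∈ Fintype.piFinset (fun _ : Fin n => (univ : Finset (Fin m))),
          (∑ i, c i * ∏ l, x i (g l)) ^ 2 := by
    calc ∑ i, ∑ j, c i * c j * (∑ k, x i k * x j k) ^ n
        = ∑ i, ∑ j, ∑ g ∈ Fintype.piFinset (fun _ : Fin n => (univ : Finset (Fin m))),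
            (c i * ∏ l, x i (g l)) * (c j * ∏ l, x j (g l)) := by
          refine Finset.sum_congr rfl fun i _ => Finset.sum_congr rfl fun j _ => ?_
          rw [expand i j, Finset.mul_sum]
          exact Finset.sum_congr rfl fun g _ => by ring
      _ = ∑ i, ∑ g ∈ Fintype.piFinset (fun _ : Fin n => (univ : Finset (Fin m))),
            ∑ j, (c i * ∏ l, x i (g l)) * (c j * ∏ l, x j (g l)) :=
          Finset.sum_congr rfl fun i _ => Finset.sum_comm
      _ = ∑ g ∈ Fintype.piFinset (fun _ : Fin n => (univ : Finset (Fin m))),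
            ∑ i, ∑ j, (c i * ∏ l, x i (g l)) * (c j * ∏ l, x j (g l)) :=
          Finset.sum_comm
      _ = ∑ g ∈ Fintype.piFinset (fun _ : Fin n => (univ : Finset (Fin m))),
            (∑ i, c i * ∏ l, x i (g l)) ^ 2 := by
          refine Finset.sum_congr rfl fun g _ => ?_
          rw [sq, Finset.sum_mul_sum]
  rw [key]
  exact Finset.sum_nonneg fun g _ => sq_nonneg _

lemma hasSum_exp_real (z : ℝ) :
    HasSum (fun n : ℕ => z ^ n / (Nat.factorial n : ℝ)) (Real.exp z) := by
  have h := Real.summable_pow_div_factorial z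
  have h2 := h.hasSum
  rwa [show ∑' n : ℕ, z ^ n / (Nat.factorial n : ℝ) = Real.exp z by
    rw [Real.exp_eq_exp_ℝ, NormedSpace.exp_eq_tsum_div]] at h2

lemma arcsin_pow_pd {N m : ℕ} (x : Fin N → Fin m → ℝ) (c : Fin N → ℝ)
    (hu0 : ∀ i j, 0 ≤ ∑ k, x i k * x j k) (hu1 : ∀ i j, (∑ k, x i k * x j k) ≤ 1)
    (n : ℕ) :
    0 ≤ ∑ i, ∑ j, c i * c j * (Real.arcsin (∑ k, x i k * x j k)) ^ n := by
  set u : Fin N → Fin N → ℝ := fun i j => ∑ k, x i k * x j k with hu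
  have hprod : ∀ i j, HasSum
      (fun g : Fin n → ℕ => c i * c j *
        ((∏ l, a (g l)) * u i j ^ (∑ l, (2 * g l + 1))))
      (c i * c j * (Real.arcsin (u i j)) ^ n) := by
    intro i j
    have h1 := hasSum_pi_prod (f := fun k => a k * u i j ^ (2 * k + 1))
      (fun k => mul_nonneg (a_pos k).le (pow_nonneg (hu0 i j) _))
      (hasSum_arcsin (hu0 i j) (hu1 i j)) n
    have hfun : (fun g : Fin n → ℕ => ∏ l, (a (g l) * u i j ^ (2 * g l + 1)))
        = fun g : Fin n → ℕ => (∏ l, a (g l)) * u i j ^ (∑ l, (2 * g l + 1)) := by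
      funext g
      rw [Finset.prod_mul_distrib, Finset.prod_pow_eq_pow_sum]
    rw [hfun] at h1
    exact h1.mul_left _
  have hsum : HasSum
      (fun g : Fin n → ℕ => ∑ i, ∑ j, c i * c j *
        ((∏ l, a (g l)) * u i j ^ (∑ l, (2 * g l + 1))))
      (∑ i, ∑ j, c i * c j * (Real.arcsin (u i j)) ^ n) :=
    hasSum_sum fun i _ => hasSum_sum fun j _ => hprod i j
  refine hasSum_le (fun g => ?_) hasSum_zero hsum
  have hterm : ∑ i, ∑ j, c i * c j * ((∏ l, a (g l)) * u i j ^ (∑ l, (2 * g l + 1)))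
      = (∏ l, a (g l)) * ∑ i, ∑ j, c i * c j * u i j ^ (∑ l, (2 * g l + 1)) := by
    rw [Finset.mul_sum]
    refine Finset.sum_congr rfl fun i _ => ?_
    rw [Finset.mul_sum]
    exact Finset.sum_congr rfl fun j _ => by ring
  rw [hterm]
  exact mul_nonneg (Finset.prod_nonneg fun l _ => (a_pos _).le) (pow_pd x c _)

end PFK

open PFK Finset Real in
/-- For `t > 0`, the kernel `(p, q) ↦ exp (-t * arccos (∑ k, √(p k * q k)))` is positive
definite on the probability simplex in `ℝ^m`. -/
theorem persistence_fisher_kernel_pos_def_simplex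
    (m : ℕ) (hm : 1 ≤ m) (t : ℝ) (ht : 0 < t)
    (N : ℕ) (p : Fin N → Fin m → ℝ)
    (hp0 : ∀ i k, 0 ≤ p i k) (hp1 : ∀ i, ∑ k, p i k = 1)
    (c : Fin N → ℝ) :
    0 ≤ ∑ i, ∑ j, c i * c j *
        Real.exp (-t * Real.arccos (∑ k, Real.sqrt (p i k * p j k))) := by
  classical
  set x : Fin N → Fin m → ℝ := fun i k => Real.sqrt (p i k) with hxdef
  have hxnn : ∀ i k, 0 ≤ x i k := fun i k => Real.sqrt_nonneg _
  have hsum_eq : ∀ i j, (∑ k, Real.sqrt (p i k * p j k)) = ∑ k, x i k * x j k :=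
    fun i j => Finset.sum_congr rfl fun k _ => Real.sqrt_mul (hp0 i k) _
  have hu0 : ∀ i j, 0 ≤ ∑ k, x i k * x j k :=
    fun i j => Finset.sum_nonneg fun k _ => mul_nonneg (hxnn i k) (hxnn j k)
  have hu1 : ∀ i j, (∑ k, x i k * x j k) ≤ 1 := by
    intro i j
    have hcs := Finset.sum_sq_le_sum_mul_sum_of_sq_eq_mul Finset.univ
      (r := fun k => x i k * x j k) (f := p i) (g := p j)
      (fun k _ => hp0 i k) (fun k _ => hp0 j k)
      (fun k _ => by
        rw [mul_pow, hxdef]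
        rw [Real.sq_sqrt (hp0 i k), Real.sq_sqrt (hp0 j k)])
    rw [hp1 i, hp1 j, mul_one] at hcs
    nlinarith [hu0 i j]
  -- rewrite the kernel
  have hker : ∀ i j : Fin N, c i * c j *
        Real.exp (-t * Real.arccos (∑ k, Real.sqrt (p i k * p j k)))
      = Real.exp (-(t * (π/2))) *
        (c i * c j * Real.exp (t * Real.arcsin (∑ k, x i k * x j k))) := by
    intro i j
    rw [hsum_eq i j, Real.arccos_eq_pi_div_two_sub_arcsin,
      show -t * (π/2 - Real.arcsin (∑ k, x i k * x j k))
        = -(t*(π/2)) + t * Real.arcsin (∑ k, x i k * x j k) by ring,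
      Real.exp_add]
    ring
  calc (0:ℝ) ≤ Real.exp (-(t * (π/2))) *
        ∑ i, ∑ j, c i * c j * Real.exp (t * Real.arcsin (∑ k, x i k * x j k)) := by
            refine mul_nonneg (Real.exp_pos _).le ?_
            -- expand the exponential as a series
            have hexp : ∀ i j : Fin N, HasSum
                (fun n : ℕ => c i * c j *
                  ((t * Real.arcsin (∑ k, x i k * x j k)) ^ n / (Nat.factorial n : ℝ)))
                (c i * c j * Real.exp (t * Real.arcsin (∑ k, x i k * x j k))) :=
              fun i j => (hasSum_exp_real _).mul_left _
            have hsum : HasSum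
                (fun n : ℕ => ∑ i, ∑ j, c i * c j *
                  ((t * Real.arcsin (∑ k, x i k * x j k)) ^ n / (Nat.factorial n : ℝ)))
                (∑ i, ∑ j, c i * c j * Real.exp (t * Real.arcsin (∑ k, x i k * x j k))) :=
              hasSum_sum fun i _ => hasSum_sum fun j _ => hexp i j
            refine hasSum_le (fun n => ?_) hasSum_zero hsum
            have hterm : ∑ i, ∑ j, c i * c j *
                  ((t * Real.arcsin (∑ k, x i k * x j k)) ^ n / (Nat.factorial n : ℝ))
                = (t ^ n / (Nat.factorial n : ℝ)) *
                  ∑ i, ∑ j, c i * c j * (Real.arcsin (∑ k, x i k * x j k)) ^ n := by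
              rw [Finset.mul_sum]
              refine Finset.sum_congr rfl fun i _ => ?_
              rw [Finset.mul_sum]
              refine Finset.sum_congr rfl fun j _ => ?_
              rw [mul_pow]
              ring
            rw [hterm]
            exact mul_nonneg (by positivity) (arcsin_pow_pd x c hu0 hu1 n)
    _ = ∑ i, ∑ j, c i * c j *
        Real.exp (-t * Real.arccos (∑ k, Real.sqrt (p i k * p j k))) := by
      rw [Finset.mul_sum]
      refine Finset.sum_congr rfl fun i _ => ?_
      rw [Finset.mul_sum]
      exact Finset.sum_congr rfl fun j _ => (hker i j).symm
end

section
/- Let (Ω, μ) be a measure space and t > 0. For probability densities ρ, ρ' on (Ω, μ), let d_P(ρ, ρ') = arccos(∫ √(ρ(x) ρ'(x)) dμ(x)) and k_PF(ρ, ρ') = exp(-t · d_P(ρ, ρ')). Then the Persistence Fisher kernel is infinitely divisible: for every natural number m ≥ 1, the kernel k_m(ρ, ρ') = exp(-(t/m) · d_P(ρ, ρ')) is positive definite (i.e., ∑_{i,j} c_i c_j k_m(ρ_i, ρ_j) ≥ 0 for all finite families of probability densities ρ_i and real coefficients c_i) and satisfies (k_m(ρ, ρ'))^m = k_PF(ρ,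 ρ') for all probability densities ρ, ρ'. -/
open MeasureTheory

open Finset

noncomputable def binom (k : ℕ) : ℝ := (Nat.choose (2*k) k : ℝ) / 4 ^ k

lemma binom_nonneg (k : ℕ) : 0 ≤ binom k := by
  unfold binom; positivity

lemma binom_le_one (k : ℕ) : binom k ≤ 1 := by
  unfold binom
  rw [div_le_one (by positivity)]
  have h : Nat.choose (2*k) k ≤ 2 ^ (2*k) := by
    have h1 : Nat.choose (2*k) k ≤ ∑ i ∈ range (2*k+1), Nat.choose (2*k) i :=
      Finset.single_le_sum (f := fun i => Nat.choose (2*k) i) (fun i _ => Nat.zero_le _)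
        (by simp [Nat.lt_succ_iff]; omega)
    rw [Nat.sum_range_choose (2*k)] at h1
    exact h1
  have h2 : ((Nat.choose (2*k) k : ℝ)) ≤ (2:ℝ) ^ (2*k) := by exact_mod_cast h
  calc ((Nat.choose (2*k) k : ℝ)) ≤ (2:ℝ) ^ (2*k) := h2
    _ = 4 ^ k := by rw [pow_mul]; norm_num

lemma binom_rec (i : ℕ) : 2 * (i+1) * binom (i+1) = (2*i+1) * binom i := by
  unfold binom
  have h := Nat.succ_mul_centralBinom_succ i
  unfold Nat.centralBinom at h
  have h' : ((i+1) * Nat.choose (2*(i+1)) (i+1) : ℝ) = 2 * (2*i+1) * Nat.choose (2*i) i := by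
    exact_mod_cast congrArg (Nat.cast : ℕ → ℝ) h
  field_simp
  ring_nf
  ring_nf at h'
  nlinarith [h', pow_pos (show (0:ℝ) < 4 by norm_num) i]

lemma binom_conv (k : ℕ) : ∑ i ∈ range (k+1), binom i * binom (k - i) = 1 := by
  induction k with
  | zero => simp [binom]
  | succ k ih =>
    -- (k+2)? we show S_{k+1} = S_k
    have key : ((k:ℝ)+1) * ∑ i ∈ range (k+2), binom i * binom (k+1-i)
        = ((k:ℝ)+1) * ∑ i ∈ range (k+1), binom i * binom (k-i) := by
      have refl1 : ∑ i ∈ range (k+2), ((k+1-i : ℕ):ℝ) * (binom i * binom (k+1-i))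
          = ∑ i ∈ range (k+2), (i:ℝ) * (binom i * binom (k+1-i)) := by
        rw [← Finset.sum_range_reflect (fun i => (i:ℝ) * (binom i * binom (k+1-i))) (k+2)]
        refine Finset.sum_congr rfl fun j hj => ?_
        have hj' : j ≤ k + 1 := by simpa [Nat.lt_succ_iff] using hj
        have h1 : k + 2 - 1 - j = k + 1 - j := by omega
        have h2 : k + 1 - (k + 1 - j) = j := Nat.sub_sub_self hj'
        rw [h1, h2]
        ring
      have refl2 : ∑ i ∈ range (k+1), ((k-i : ℕ):ℝ) * (binom i * binom (k-i))
          = ∑ i ∈ range (k+1), (i:ℝ) * (binom i * binom (k-i)) := by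
        rw [← Finset.sum_range_reflect (fun i => (i:ℝ) * (binom i * binom (k-i))) (k+1)]
        refine Finset.sum_congr rfl fun j hj => ?_
        have hj' : j ≤ k := by simpa [Nat.lt_succ_iff] using hj
        have h1 : k + 1 - 1 - j = k - j := by omega
        have h2 : k - (k - j) = j := Nat.sub_sub_self hj'
        rw [h1, h2]
        ring
      have split : ((k:ℝ)+1) * ∑ i ∈ range (k+2), binom i * binom (k+1-i)
          = ∑ i ∈ range (k+2), (i:ℝ) * (binom i * binom (k+1-i))
            + ∑ i ∈ range (k+2), ((k+1-i : ℕ):ℝ) * (binom i * binom (k+1-i)) := by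
        rw [Finset.mul_sum, ← Finset.sum_add_distrib]
        refine Finset.sum_congr rfl fun j hj => ?_
        have hj' : j ≤ k + 1 := by simpa [Nat.lt_succ_iff] using hj
        have : ((k+1-j : ℕ):ℝ) = (k:ℝ) + 1 - j := by
          push_cast [Nat.cast_sub hj']; ring
        rw [this]; ring
      -- LHS = 2 * ∑ i in range (k+2), i * a i * a (k+1-i)
      have step1 : ((k:ℝ)+1) * ∑ i ∈ range (k+2), binom i * binom (k+1-i)
          = 2 * ∑ i ∈ range (k+2), (i:ℝ) * (binom i * binom (k+1-i)) := by
        rw [split, refl1]; ring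
      -- shift index
      have shift : ∑ i ∈ range (k+2), (i:ℝ) * (binom i * binom (k+1-i))
          = ∑ i ∈ range (k+1), ((i:ℝ)+1) * (binom (i+1) * binom (k-i)) := by
        rw [Finset.sum_range_succ' (fun i => (i:ℝ) * (binom i * binom (k+1-i))) (k+1)]
        simp
      have step2 : 2 * ∑ i ∈ range (k+1), ((i:ℝ)+1) * (binom (i+1) * binom (k-i))
          = ∑ i ∈ range (k+1), (2*(i:ℝ)+1) * (binom i * binom (k-i)) := by
        rw [Finset.mul_sum]
        refine Finset.sum_congr rfl fun j hj => ?_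
        have hr := binom_rec j
        have : 2 * ((j:ℝ)+1) * binom (j+1) = (2*(j:ℝ)+1) * binom j := by
          push_cast at hr ⊢; linarith [hr]
        calc 2 * (((j:ℝ)+1) * (binom (j+1) * binom (k-j)))
            = (2 * ((j:ℝ)+1) * binom (j+1)) * binom (k-j) := by ring
          _ = ((2*(j:ℝ)+1) * binom j) * binom (k-j) := by rw [this]
          _ = (2*(j:ℝ)+1) * (binom j * binom (k-j)) := by ring
      have step3 : ∑ i ∈ range (k+1), (2*(i:ℝ)+1) * (binom i * binom (k-i))
          = ((k:ℝ)+1) * ∑ i ∈ range (k+1), binom i * binom (k-i) := by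
        have e1 : ∑ i ∈ range (k+1), (2*(i:ℝ)+1) * (binom i * binom (k-i))
            = (∑ i ∈ range (k+1), (i:ℝ) * (binom i * binom (k-i))
               + ∑ i ∈ range (k+1), (i:ℝ) * (binom i * binom (k-i)))
              + ∑ i ∈ range (k+1), binom i * binom (k-i) := by
          rw [← Finset.sum_add_distrib, ← Finset.sum_add_distrib]
          exact Finset.sum_congr rfl fun j hj => by ring
        rw [e1]
        nth_rewrite 2 [← refl2]
        rw [← Finset.sum_add_distrib, ← Finset.sum_add_distrib, Finset.mul_sum]
        refine Finset.sum_congr rfl fun j hj => ?_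
        have hj' : j ≤ k := by simpa [Nat.lt_succ_iff] using hj
        have : ((k-j : ℕ):ℝ) = (k:ℝ) - j := by
          push_cast [Nat.cast_sub hj']; ring
        rw [this]; ring
      rw [step1, shift, step2, step3]
    have hk : ((k:ℝ)+1) ≠ 0 := by positivity
    have := mul_left_cancel₀ hk key
    rw [this, ih]

lemma summable_binom_mul (u : ℝ) (h0 : 0 ≤ u) (h1 : u < 1) :
    Summable (fun k => binom k * u ^ k) := by
  refine Summable.of_nonneg_of_le (fun k => mul_nonneg (binom_nonneg k) (pow_nonneg h0 k))
    (fun k => ?_) (summable_geometric_of_lt_one h0 h1)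
  have := binom_le_one k
  have hu : 0 ≤ u ^ k := by positivity
  nlinarith [binom_nonneg k]

lemma hasSum_binom (u : ℝ) (h0 : 0 ≤ u) (h1 : u < 1) :
    HasSum (fun k => binom k * u ^ k) (1 / Real.sqrt (1 - u)) := by
  have hs := summable_binom_mul u h0 h1
  set g : ℝ := ∑' k, binom k * u ^ k with hg
  have hnorm : Summable (fun k => ‖binom k * u ^ k‖) := by
    refine hs.congr fun k => ?_
    rw [Real.norm_eq_abs, abs_of_nonneg (mul_nonneg (binom_nonneg k) (pow_nonneg h0 k))]
  have hcauchy := tsum_mul_tsum_eq_tsum_sum_antidiagonal_of_summable_norm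
    (f := fun k => binom k * u ^ k) (g := fun k => binom k * u ^ k) hnorm hnorm
  have hinner : ∀ k : ℕ, ∑ p ∈ Finset.HasAntidiagonal.antidiagonal k,
      (binom p.1 * u ^ p.1) * (binom p.2 * u ^ p.2) = u ^ k := by
    intro k
    rw [Finset.Nat.sum_antidiagonal_eq_sum_range_succ_mk]
    have : ∀ i ∈ range (k+1), (binom i * u ^ i) * (binom (k-i) * u ^ (k-i))
        = (binom i * binom (k-i)) * u ^ k := by
      intro i hi
      have hi' : i ≤ k := by simpa [Nat.lt_succ_iff] using hi
      rw [show (binom i * u ^ i) * (binom (k-i) * u ^ (k-i))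
          = (binom i * binom (k-i)) * (u ^ i * u ^ (k-i)) by ring,
        ← pow_add, Nat.add_sub_cancel' hi']
    rw [Finset.sum_congr rfl this, ← Finset.sum_mul, binom_conv, one_mul]
  have hsq : g * g = (1 - u)⁻¹ := by
    rw [hg, hcauchy]
    have : ∀ k : ℕ, ∑ p ∈ Finset.HasAntidiagonal.antidiagonal k,
        (binom p.1 * u ^ p.1) * (binom p.2 * u ^ p.2) = u ^ k := hinner
    rw [tsum_congr this, tsum_geometric_of_lt_one h0 h1]
  have hgnn : 0 ≤ g := tsum_nonneg fun k => mul_nonneg (binom_nonneg k) (pow_nonneg h0 k)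
  have hval : g = 1 / Real.sqrt (1 - u) := by
    have h1u : (0:ℝ) < 1 - u := by linarith
    have h2 : g = Real.sqrt (g * g) := (Real.sqrt_mul_self hgnn).symm
    rw [h2, hsq, Real.sqrt_inv, one_div]
  rw [← hval]
  exact hs.hasSum

open MeasureTheory intervalIntegral in
lemma hasSum_arcsin (s : ℝ) (h0 : 0 ≤ s) (h1 : s < 1) :
    HasSum (fun k : ℕ => binom k / (2*k+1) * s ^ (2*k+1)) (Real.arcsin s) := by
  -- continuity of the integrand
  have hcont : ∀ x : ℝ, x ∈ Set.Icc 0 s → (0:ℝ) < Real.sqrt (1 - x^2) := by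
    intro x hx
    have hx2 : x^2 < 1 := by nlinarith [hx.1, hx.2]
    exact Real.sqrt_pos.2 (by linarith)
  have hconts : ContinuousOn (fun t : ℝ => 1 / Real.sqrt (1 - t^2)) (Set.Icc 0 s) := by
    refine ContinuousOn.div continuousOn_const ?_ (fun x hx => (hcont x hx).ne')
    exact (Real.continuous_sqrt.comp (by continuity)).continuousOn
  -- Step 1: arcsin s as an integral
  have hFTC : ∫ t in (0:ℝ)..s, 1 / Real.sqrt (1 - t^2) = Real.arcsin s := by
    have := intervalIntegral.integral_eq_sub_of_hasDerivAt
      (f := Real.arcsin) (f' := fun t => 1 / Real.sqrt (1 - t^2)) (a := (0:ℝ)) (b := s)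
      (fun x hx => by
        rw [Set.uIcc_of_le h0] at hx
        exact Real.hasDerivAt_arcsin (by nlinarith [hx.1, hx.2]) (by nlinarith [hx.1, hx.2]))
      (by
        rw [intervalIntegrable_iff_integrableOn_Icc_of_le h0]
        exact hconts.integrableOn_compact isCompact_Icc)
    rw [this, Real.arcsin_zero, sub_zero]
  -- measure
  set ν : Measure ℝ := volume.restrict (Set.Ioc 0 s) with hν
  -- integral of each term
  have hterm : ∀ k : ℕ, ∫ t, binom k * t ^ (2*k) ∂ν = binom k * (s ^ (2*k+1) / (2*k+1)) := by
    intro k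
    rw [hν, ← intervalIntegral.integral_of_le h0, intervalIntegral.integral_const_mul,
      integral_pow]
    norm_num
  have hint : ∀ k : ℕ, Integrable (fun t : ℝ => binom k * t ^ (2*k)) ν := by
    intro k
    rw [hν]
    exact (Continuous.integrableOn_Ioc (by continuity))
  have hsummable : Summable (fun k : ℕ => ∫ t, ‖binom k * t ^ (2*k)‖ ∂ν) := by
    have hb : Summable (fun k : ℕ => s ^ (2*k+1)) := by
      have : Summable (fun k : ℕ => s * (s^2) ^ k) :=
        (summable_geometric_of_lt_one (by positivity) (by nlinarith)).mul_left s
      exact this.congr fun k => by rw [← pow_mul]; ring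
    refine Summable.of_nonneg_of_le (fun k => integral_nonneg fun t => norm_nonneg _)
      (fun k => ?_) hb
    have : ∫ t, ‖binom k * t ^ (2*k)‖ ∂ν = binom k * (s ^ (2*k+1) / (2*k+1)) := by
      rw [← hterm k]
      refine integral_congr_ae ?_
      rw [hν]
      refine (ae_restrict_iff' measurableSet_Ioc).2 (Filter.Eventually.of_forall ?_)
      intro t ht
      simp only [Real.norm_eq_abs]
      exact abs_of_nonneg (mul_nonneg (binom_nonneg k) (pow_nonneg (le_of_lt ht.1) _))
    rw [this]
    have h2k : (0:ℝ) < 2*(k:ℝ)+1 := by positivity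
    have hsk : 0 ≤ s ^ (2*k+1) := pow_nonneg h0 _
    have hb1 := binom_le_one k
    have hbn := binom_nonneg k
    have hd : s ^ (2*k+1) / (2*(k:ℝ)+1) ≤ s ^ (2*k+1) := by
      apply div_le_self hsk; linarith
    calc binom k * (s ^ (2*k+1) / (2*(k:ℝ)+1)) ≤ 1 * (s ^ (2*k+1) / (2*(k:ℝ)+1)) := by
          apply mul_le_mul_of_nonneg_right hb1; positivity
      _ = s ^ (2*k+1) / (2*(k:ℝ)+1) := one_mul _
      _ ≤ s ^ (2*k+1) := hd
  -- swap sum and integral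
  have hswap := MeasureTheory.hasSum_integral_of_summable_integral_norm
    (F := fun (k : ℕ) (t : ℝ) => binom k * t ^ (2*k)) (μ := ν) hint hsummable
  -- identify the integral of the tsum
  have htsum_eq : ∫ t, (∑' k : ℕ, binom k * t ^ (2*k)) ∂ν = Real.arcsin s := by
    rw [← hFTC, intervalIntegral.integral_of_le h0, ← hν]
    refine integral_congr_ae ?_
    rw [hν]
    refine (ae_restrict_iff' measurableSet_Ioc).2 (Filter.Eventually.of_forall ?_)
    intro t ht
    have ht2 : t^2 < 1 := by nlinarith [ht.1, ht.2]
    have := (hasSum_binom (t^2) (sq_nonneg t) ht2).tsum_eq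
    calc ∑' k : ℕ, binom k * t ^ (2*k) = ∑' k : ℕ, binom k * (t^2) ^ k := by
          refine tsum_congr fun k => ?_
          rw [pow_mul]
      _ = 1 / Real.sqrt (1 - t^2) := this
  rw [htsum_eq] at hswap
  have hfun : (fun k : ℕ => binom k / (2*(k:ℝ)+1) * s ^ (2*k+1))
      = (fun k : ℕ => ∫ t, binom k * t ^ (2*k) ∂ν) := by
    funext k
    rw [hterm k]
    ring
  rw [hfun]
  exact hswap

section MatrixPSD

open Matrix

variable {N : ℕ}

lemma dot_eq (A : Matrix (Fin N) (Fin N) ℝ) (x : Fin N → ℝ) :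
    star x ⬝ᵥ A *ᵥ x = ∑ i, ∑ j, x i * x j * A i j := by
  have hs : star x = x := rfl
  rw [hs]
  simp only [dotProduct, Matrix.mulVec, dotProduct]
  refine Finset.sum_congr rfl fun i _ => ?_
  rw [Finset.mul_sum]
  exact Finset.sum_congr rfl fun j _ => by ring

lemma quadform_nonneg {A : Matrix (Fin N) (Fin N) ℝ} (hA : A.PosSemidef) (x : Fin N → ℝ) :
    0 ≤ ∑ i, ∑ j, x i * x j * A i j := by
  have := hA.dotProduct_mulVec_nonneg x
  rwa [dot_eq] at this

lemma posSemidef_of_quadform {A : Matrix (Fin N) (Fin N) ℝ}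
    (hsymm : ∀ i j, A i j = A j i)
    (h : ∀ x : Fin N → ℝ, 0 ≤ ∑ i, ∑ j, x i * x j * A i j) : A.PosSemidef := by
  refine Matrix.posSemidef_iff_dotProduct_mulVec.mpr ⟨?_, ?_⟩
  · ext i j
    simp only [Matrix.conjTranspose_apply, RCLike.star_def, starRingEnd_apply, star_trivial]
    exact hsymm j i
  · intro x
    rw [dot_eq]
    exact h x

lemma posSemidef_schur {A B : Matrix (Fin N) (Fin N) ℝ} (hA : A.PosSemidef)
    (hB : B.PosSemidef) : (Matrix.of fun i j => A i j * B i j).PosSemidef := by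
  obtain ⟨S, hS⟩ : ∃ S : Matrix (Fin N) (Fin N) ℝ, A = Sᴴ * S := by
    open scoped MatrixOrder in exact CStarAlgebra.nonneg_iff_eq_star_mul_self.mp hA.nonneg
  have hAe : ∀ i j, A i j = ∑ k, S k i * S k j := by
    intro i j
    rw [hS]
    simp [Matrix.mul_apply, Matrix.conjTranspose_apply, mul_comm]
  have hAsymm : ∀ i j, A i j = A j i := by
    intro i j
    have := congrFun (congrFun hA.1 i) j
    simpa using this.symm
  have hBsymm : ∀ i j, B i j = B j i := by
    intro i j
    have := congrFun (congrFun hB.1 i) j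
    simpa using this.symm
  refine posSemidef_of_quadform (fun i j => by
    simp only [Matrix.of_apply]
    rw [hAsymm i j, hBsymm i j]) ?_
  intro x
  have key : ∑ i, ∑ j, x i * x j * ((Matrix.of fun i j => A i j * B i j) i j)
      = ∑ k, ∑ i, ∑ j, (x i * S k i) * (x j * S k j) * B i j := by
    have h1 : ∀ i j, x i * x j * ((Matrix.of fun i j => A i j * B i j) i j)
        = ∑ k, (x i * S k i) * (x j * S k j) * B i j := by
      intro i j
      simp only [Matrix.of_apply]
      rw [hAe i j, Finset.sum_mul, Finset.mul_sum]
      refine Finset.sum_congr rfl fun k _ => by ring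
    calc ∑ i, ∑ j, x i * x j * ((Matrix.of fun i j => A i j * B i j) i j)
        = ∑ i, ∑ j, ∑ k, (x i * S k i) * (x j * S k j) * B i j := by
          exact Finset.sum_congr rfl fun i _ => Finset.sum_congr rfl fun j _ => h1 i j
      _ = ∑ i, ∑ k, ∑ j, (x i * S k i) * (x j * S k j) * B i j :=
          Finset.sum_congr rfl fun i _ => Finset.sum_comm
      _ = ∑ k, ∑ i, ∑ j, (x i * S k i) * (x j * S k j) * B i j := Finset.sum_comm
  rw [key]
  exact Finset.sum_nonneg fun k _ => quadform_nonneg hB (fun i => x i * S k i)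

lemma posSemidef_allones : (Matrix.of fun (_ _ : Fin N) => (1:ℝ)).PosSemidef := by
  refine posSemidef_of_quadform (fun i j => rfl) fun x => ?_
  have : ∑ i, ∑ j, x i * x j * ((Matrix.of fun (_ _ : Fin N) => (1:ℝ)) i j)
      = (∑ i, x i) * (∑ j, x j) := by
    rw [Finset.sum_mul]
    refine Finset.sum_congr rfl fun i _ => ?_
    rw [Finset.mul_sum]
    exact Finset.sum_congr rfl fun j _ => by simp only [Matrix.of_apply]; ring
  rw [this]
  exact mul_self_nonneg _

lemma posSemidef_hpow {A : Matrix (Fin N) (Fin N) ℝ} (hA : A.PosSemidef) (n : ℕ) :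
    (Matrix.of fun i j => A i j ^ n).PosSemidef := by
  induction n with
  | zero => simpa using posSemidef_allones (N := N)
  | succ n ih =>
    have hps := posSemidef_schur ih hA
    have heq : (Matrix.of fun i j => A i j ^ (n+1))
        = (Matrix.of fun i j => (Matrix.of fun i j => A i j ^ n) i j * A i j) := by
      ext i j
      simp [pow_succ]
    rw [heq]
    exact hps

lemma posSemidef_nonneg_smul {A : Matrix (Fin N) (Fin N) ℝ} (hA : A.PosSemidef) {c : ℝ}
    (hc : 0 ≤ c) : (Matrix.of fun i j => c * A i j).PosSemidef := by
  have hAsymm : ∀ i j, A i j = A j i := by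
    intro i j
    have := congrFun (congrFun hA.1 i) j
    simpa using this.symm
  refine posSemidef_of_quadform (fun i j => by simp only [Matrix.of_apply]; rw [hAsymm i j]) ?_
  intro x
  have : ∑ i, ∑ j, x i * x j * ((Matrix.of fun i j => c * A i j) i j)
      = c * ∑ i, ∑ j, x i * x j * A i j := by
    rw [Finset.mul_sum]
    refine Finset.sum_congr rfl fun i _ => ?_
    rw [Finset.mul_sum]
    exact Finset.sum_congr rfl fun j _ => by simp only [Matrix.of_apply]; ring
  rw [this]
  exact mul_nonneg hc (quadform_nonneg hA x)

lemma posSemidef_limit {A : ℕ → Matrix (Fin N) (Fin N) ℝ} {L : Matrix (Fin N) (Fin N) ℝ}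
    (hA : ∀ n, (A n).PosSemidef)
    (hlim : ∀ i j, Filter.Tendsto (fun n => A n i j) Filter.atTop (nhds (L i j))) :
    L.PosSemidef := by
  refine posSemidef_of_quadform ?_ ?_
  · intro i j
    have h1 := hlim i j
    have h2 : Filter.Tendsto (fun n => A n i j) Filter.atTop (nhds (L j i)) := by
      refine (hlim j i).congr fun n => ?_
      have := congrFun (congrFun (hA n).1 j) i
      simpa using this.symm
    exact tendsto_nhds_unique h1 h2
  · intro x
    have hten : Filter.Tendsto (fun n => ∑ i, ∑ j, x i * x j * A n i j) Filter.atTop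
        (nhds (∑ i, ∑ j, x i * x j * L i j)) := by
      refine tendsto_finset_sum _ fun i _ => tendsto_finset_sum _ fun j _ => ?_
      exact (hlim i j).const_mul _
    exact ge_of_tendsto' hten fun n => quadform_nonneg (hA n) x

/-- A series with nonnegative coefficients in Hadamard powers of a PSD matrix is PSD. -/
lemma posSemidef_series {A : Matrix (Fin N) (Fin N) ℝ} (hA : A.PosSemidef)
    (a : ℕ → ℝ) (ha : ∀ k, 0 ≤ a k) (e : ℕ → ℕ) {H : Matrix (Fin N) (Fin N) ℝ}
    (hH : ∀ i j, HasSum (fun k => a k * A i j ^ e k) (H i j)) : H.PosSemidef := by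
  have hpartial : ∀ n : ℕ,
      (Matrix.of fun i j => ∑ k ∈ Finset.range n, a k * A i j ^ e k).PosSemidef := by
    intro n
    induction n with
    | zero => simp [Matrix.PosSemidef.zero, show (Matrix.of fun (_ _ : Fin N) => (0:ℝ)) = 0 from rfl]
    | succ n ih =>
      have hterm := posSemidef_nonneg_smul (posSemidef_hpow hA (e n)) (ha n)
      have heq : (Matrix.of fun i j => ∑ k ∈ Finset.range (n+1), a k * A i j ^ e k)
          = (Matrix.of fun i j => ∑ k ∈ Finset.range n, a k * A i j ^ e k)
            + (Matrix.of fun i j => a n * (Matrix.of fun i j => A i j ^ e n) i j) := by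
        ext i j
        simp [Finset.sum_range_succ, Matrix.add_apply]
      rw [heq]
      exact ih.add hterm
  refine posSemidef_limit hpartial fun i j => ?_
  simpa using (hH i j).tendsto_sum_nat

end MatrixPSD

/-- The Persistence Fisher kernel `k_PF(ρ, ρ') = exp (-t * d_P(ρ, ρ'))` is infinitely
divisible: for every `m ≥ 1`, the kernel `k_m(ρ, ρ') = exp (-(t/m) * d_P(ρ, ρ'))`
is positive definite on the set of probability densities, and its `m`-th pointwise
power equals `k_PF`. -/
theorem persistence_fisher_kernel_infinitely_divisible
    {Ω : Type*} [MeasurableSpace Ω] (μ : Measure Ω)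
    (t : ℝ) (ht : 0 < t) (m : ℕ) (hm : 1 ≤ m) :
    (∀ (N : ℕ) (ρ : Fin N → Ω → ℝ),
        (∀ i, Measurable (ρ i)) → (∀ i x, 0 ≤ ρ i x) →
        (∀ i, Integrable (ρ i) μ) → (∀ i, ∫ x, ρ i x ∂μ = 1) →
        ∀ c : Fin N → ℝ,
          0 ≤ ∑ i, ∑ j, c i * c j *
              Real.exp (-(t / m) *
                Real.arccos (∫ x, Real.sqrt (ρ i x * ρ j x) ∂μ))) ∧
    (∀ ρ ρ' : Ω → ℝ,
        Measurable ρ → Measurable ρ' →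
        (∀ x, 0 ≤ ρ x) → (∀ x, 0 ≤ ρ' x) →
        Integrable ρ μ → Integrable ρ' μ →
        (∫ x, ρ x ∂μ) = 1 → (∫ x, ρ' x ∂μ) = 1 →
        (Real.exp (-(t / m) *
            Real.arccos (∫ x, Real.sqrt (ρ x * ρ' x) ∂μ))) ^ m =
          Real.exp (-t * Real.arccos (∫ x, Real.sqrt (ρ x * ρ' x) ∂μ))) := by
  have hm0 : (0:ℝ) < (m:ℝ) := by exact_mod_cast Nat.lt_of_lt_of_le Nat.zero_lt_one hm
  set τ : ℝ := t / m with hτdef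
  have hτ : 0 < τ := div_pos ht hm0
  constructor
  · intro N ρ hmeas hnn hint hint1 c
    set f : Fin N → Ω → ℝ := fun i x => Real.sqrt (ρ i x) with hf
    have hfmeas : ∀ i, Measurable (f i) := fun i =>
      Real.continuous_sqrt.measurable.comp (hmeas i)
    -- integrability of products
    have hff : ∀ i j, Integrable (fun x => f i x * f j x) μ := by
      intro i j
      refine Integrable.mono' (((hint i).add (hint j)).div_const 2)
        (((hfmeas i).mul (hfmeas j)).aestronglyMeasurable)
        (Filter.Eventually.of_forall fun x => ?_)
      simp only [hf, Pi.add_apply]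
      have h1 := Real.sq_sqrt (hnn i x)
      have h2 := Real.sq_sqrt (hnn j x)
      have h3 := Real.sqrt_nonneg (ρ i x)
      have h4 := Real.sqrt_nonneg (ρ j x)
      rw [Real.norm_eq_abs, abs_of_nonneg (mul_nonneg h3 h4)]
      nlinarith [sq_nonneg (Real.sqrt (ρ i x) - Real.sqrt (ρ j x))]
    set G : Matrix (Fin N) (Fin N) ℝ := Matrix.of fun i j => ∫ x, f i x * f j x ∂μ with hG
    have hGsymm : ∀ i j, G i j = G j i := by
      intro i j
      simp only [hG, Matrix.of_apply]
      exact integral_congr_ae (Filter.Eventually.of_forall fun x => mul_comm _ _)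
    -- G is PSD (Gram matrix)
    have hGpsd : G.PosSemidef := by
      refine posSemidef_of_quadform hGsymm fun x => ?_
      have hquad : ∑ i, ∑ j, x i * x j * G i j = ∫ ω, (∑ i, x i * f i ω)^2 ∂μ := by
        have hintone : ∀ (i j : Fin N),
            Integrable (fun ω => x i * x j * (f i ω * f j ω)) μ :=
          fun i j => ((hff i j).const_mul _)
        calc ∑ i, ∑ j, x i * x j * G i j
            = ∑ i, ∑ j, ∫ ω, x i * x j * (f i ω * f j ω) ∂μ := by
              refine Finset.sum_congr rfl fun i _ => Finset.sum_congr rfl fun j _ => ?_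
              rw [integral_const_mul]
              simp only [hG, Matrix.of_apply]
          _ = ∫ ω, ∑ i, ∑ j, x i * x j * (f i ω * f j ω) ∂μ := by
              rw [integral_finset_sum _ (fun i _ => integrable_finset_sum _
                (fun j _ => hintone i j))]
              exact Finset.sum_congr rfl fun i _ =>
                (integral_finset_sum _ (fun j _ => hintone i j)).symm
          _ = ∫ ω, (∑ i, x i * f i ω)^2 ∂μ := by
              refine integral_congr_ae (Filter.Eventually.of_forall fun ω => ?_)
              show ∑ i, ∑ j, x i * x j * (f i ω * f j ω) = (∑ i, x i * f i ω)^2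
              rw [sq, Finset.sum_mul_sum]
              exact Finset.sum_congr rfl fun i _ =>
                Finset.sum_congr rfl fun j _ => by ring
      rw [hquad]
      exact integral_nonneg fun ω => sq_nonneg _
    -- entries of G are in [0, 1]
    have hG0 : ∀ i j, 0 ≤ G i j := fun i j =>
      integral_nonneg fun x => mul_nonneg (Real.sqrt_nonneg _) (Real.sqrt_nonneg _)
    have hG1 : ∀ i j, G i j ≤ 1 := by
      intro i j
      have hmono : G i j ≤ ∫ x, (ρ i x + ρ j x)/2 ∂μ := by
        refine integral_mono (hff i j) (((hint i).add (hint j)).div_const 2) fun x => ?_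
        have h1 := Real.sq_sqrt (hnn i x)
        have h2 := Real.sq_sqrt (hnn j x)
        nlinarith [sq_nonneg (Real.sqrt (ρ i x) - Real.sqrt (ρ j x))]
      have : ∫ x, (ρ i x + ρ j x)/2 ∂μ = 1 := by
        rw [integral_div, integral_add (hint i) (hint j), hint1 i, hint1 j]
        norm_num
      linarith
    -- the matrix E i j = exp (τ * arcsin (G i j)) is PSD, as a limit
    set E : Matrix (Fin N) (Fin N) ℝ :=
      Matrix.of fun i j => Real.exp (τ * Real.arcsin (G i j)) with hE
    have hEpsd : E.PosSemidef := by
      set r : ℕ → ℝ := fun n => (n:ℝ) / (n+1) with hr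
      have hr0 : ∀ n, 0 ≤ r n := fun n => by positivity
      have hr1 : ∀ n, r n < 1 := fun n => by
        rw [hr, div_lt_one (by positivity)]
        linarith
      have hrlim : Filter.Tendsto r Filter.atTop (nhds 1) := by
        have h0 : Filter.Tendsto (fun n : ℕ => 1 / ((n:ℝ)+1)) Filter.atTop (nhds 0) :=
          tendsto_one_div_add_atTop_nhds_zero_nat
        have heq : ∀ n : ℕ, r n = 1 - 1 / ((n:ℝ)+1) := by
          intro n
          rw [hr]
          field_simp
          ring
        have hre : r = fun n : ℕ => 1 - 1 / ((n:ℝ)+1) := funext heq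
        rw [hre]
        simpa using (tendsto_const_nhds (x := (1:ℝ))).sub h0
      -- matrices with scaled entries
      refine posSemidef_limit (A := fun n =>
        Matrix.of fun i j => Real.exp (τ * Real.arcsin (r n * G i j))) ?_ ?_
      · intro n
        -- B := arcsin of scaled G
        have hrG : (Matrix.of fun i j => r n * G i j).PosSemidef :=
          posSemidef_nonneg_smul hGpsd (hr0 n)
        have hs0 : ∀ i j, 0 ≤ r n * G i j := fun i j => mul_nonneg (hr0 n) (hG0 i j)
        have hs1 : ∀ i j, r n * G i j < 1 := by
          intro i j
          calc r n * G i j ≤ r n * 1 := mul_le_mul_of_nonneg_left (hG1 i j) (hr0 n)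
            _ = r n := mul_one _
            _ < 1 := hr1 n
        have hBpsd : (Matrix.of fun i j =>
            Real.arcsin (r n * G i j)).PosSemidef := by
          refine posSemidef_series hrG (fun k => binom k / (2*(k:ℝ)+1))
            (fun k => div_nonneg (binom_nonneg k) (by positivity)) (fun k => 2*k+1) ?_
          intro i j
          simpa using hasSum_arcsin (r n * G i j) (hs0 i j) (hs1 i j)
        refine posSemidef_series hBpsd (fun k => τ^k / (Nat.factorial k)) (fun k => by
          positivity) id ?_
        intro i j
        have hexp := NormedSpace.expSeries_div_hasSum_exp
          (τ * Real.arcsin (r n * G i j))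
        rw [← Real.exp_eq_exp_ℝ] at hexp
        simp only [Matrix.of_apply, id_eq]
        have hfun : (fun k : ℕ => τ^k / (Nat.factorial k) * (Real.arcsin (r n * G i j)) ^ k)
            = fun k : ℕ => (τ * Real.arcsin (r n * G i j))^k / (Nat.factorial k) := by
          funext k
          rw [mul_pow]
          ring
        rw [hfun]
        exact hexp
      · intro i j
        simp only [Matrix.of_apply]
        have h1 : Filter.Tendsto (fun n => r n * G i j) Filter.atTop (nhds (G i j)) := by
          simpa using hrlim.mul_const (G i j)
        have h2 : Filter.Tendsto (fun n => τ * Real.arcsin (r n * G i j)) Filter.atTop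
            (nhds (τ * Real.arcsin (G i j))) :=
          (((Real.continuous_arcsin.tendsto _).comp h1)).const_mul τ
        exact (Real.continuous_exp.tendsto _).comp h2
    -- H i j = exp (-τ * arccos (G i j)) is PSD
    have hHpsd : (Matrix.of fun i j =>
        Real.exp (-τ * Real.arccos (G i j))).PosSemidef := by
      have heq : (Matrix.of fun i j => Real.exp (-τ * Real.arccos (G i j)))
          = (Matrix.of fun i j => Real.exp (-τ * (Real.pi/2)) * E i j) := by
        ext i j
        simp only [Matrix.of_apply, hE]
        rw [← Real.exp_add, Real.arccos_eq_pi_div_two_sub_arcsin]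
        ring_nf
      rw [heq]
      exact posSemidef_nonneg_smul hEpsd (le_of_lt (Real.exp_pos _))
    -- conclude
    have hrw : ∀ i j, (∫ x, Real.sqrt (ρ i x * ρ j x) ∂μ) = G i j := by
      intro i j
      simp only [hG, Matrix.of_apply, hf]
      exact integral_congr_ae (Filter.Eventually.of_forall fun x =>
        Real.sqrt_mul (hnn i x) (ρ j x))
    have := quadform_nonneg hHpsd c
    simp only [Matrix.of_apply] at this
    calc (0:ℝ) ≤ ∑ i, ∑ j, c i * c j * Real.exp (-τ * Real.arccos (G i j)) := this
      _ = ∑ i, ∑ j, c i * c j * Real.exp (-(t/m) *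
            Real.arccos (∫ x, Real.sqrt (ρ i x * ρ j x) ∂μ)) := by
          refine Finset.sum_congr rfl fun i _ => Finset.sum_congr rfl fun j _ => ?_
          rw [hrw i j, hτdef]
  · intro ρ ρ' _ _ _ _ _ _ _ _
    rw [← Real.exp_nat_mul]
    congr 1
    have hmne : (m:ℝ) ≠ 0 := ne_of_gt hm0
    have hcan : (m:ℝ) * (t / m) = t := by field_simp
    calc (m:ℝ) * (-(t/m) * Real.arccos (∫ x, Real.sqrt (ρ x * ρ' x) ∂μ))
        = -(((m:ℝ) * (t/m)) * Real.arccos (∫ x, Real.sqrt (ρ x * ρ' x) ∂μ)) := by ring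
      _ = -t * Real.arccos (∫ x, Real.sqrt (ρ x * ρ' x) ∂μ) := by rw [hcan, neg_mul]
end
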